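/- arXiv:1604.05284 — 4 statements merged into one kernel-verified Lean document; each statement's English description precedes it below -/
import Mathlib

section
/- Let X₁ and X₂ be independent real random variables such that for some α ∈ (0,2) and constants c₁, c₂ > 0, z^α · P{X₁ > z} → c₁ and z^α · (ln z) · P{X₂ > z} → c₂ as z → ∞, and both X₁, X₂ are symmetric. Then z^α · (ln ln z)⁻¹ · P{X₁X₂ > z} → 2c₁c₂α as z → ∞. -/
open MeasureTheory ProbabilityTheory Filter Real

section Helpers

open Set

lemma lint_ftc {A B : ℝ} (hAB : A ≤ B) {g g' : ℝ → ℝ}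
    (hderiv : ∀ t ∈ Set.Icc A B, HasDerivAt g (g' t) t)
    (hcont : ContinuousOn g' (Set.Icc A B))
    (hpos : ∀ t ∈ Set.Icc A B, 0 ≤ g' t) :
    ∫⁻ t in Set.Ioo A B, ENNReal.ofReal (g' t) = ENNReal.ofReal (g B - g A) := by
  have hint : IntegrableOn g' (Set.Icc A B) := hcont.integrableOn_Icc
  have hioo : IntegrableOn g' (Set.Ioo A B) := hint.mono_set Set.Ioo_subset_Icc_self
  have hpos' : 0 ≤ᶠ[ae (volume.restrict (Set.Ioo A B))] g' := by
    filter_upwards [ae_restrict_mem measurableSet_Ioo] with t ht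
    exact hpos t (Set.Ioo_subset_Icc_self ht)
  rw [← MeasureTheory.ofReal_integral_eq_lintegral_ofReal hioo hpos']
  congr 1
  have h1 : ∫ y in A..B, g' y = g B - g A := by
    apply intervalIntegral.integral_eq_sub_of_hasDerivAt
    · intro x hx
      rw [Set.uIcc_of_le hAB] at hx
      exact hderiv x hx
    · exact (hint.mono_set (by rw [Set.uIcc_of_le hAB])).intervalIntegrable
  rw [← h1, intervalIntegral.integral_of_le hAB, MeasureTheory.integral_Ioc_eq_integral_Ioo]
lemma parts_mono (ν : Measure ℝ) [IsFiniteMeasure ν] {A B : ℝ} {g g' : ℝ → ℝ}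
    (hAB : A ≤ B) (hg' : Measurable g')
    (hderiv : ∀ t ∈ Set.Icc A B, HasDerivAt g (g' t) t)
    (hcont : ContinuousOn g' (Set.Icc A B))
    (hpos : ∀ t ∈ Set.Icc A B, 0 ≤ g' t) :
    ∫⁻ y in Set.Ioc A B, ENNReal.ofReal (g y - g A) ∂ν
      = ∫⁻ t in Set.Ioo A B, ENNReal.ofReal (g' t) * ν (Set.Ioc t B) := by
  set S : Set (ℝ × ℝ) := {p | (A < p.1 ∧ p.1 ≤ B) ∧ A < p.2 ∧ p.2 < p.1} with hS
  have hSm : MeasurableSet S := by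
    apply MeasurableSet.inter
    · exact (measurableSet_lt measurable_const measurable_fst).inter
        (measurableSet_le measurable_fst measurable_const)
    · exact (measurableSet_lt measurable_const measurable_snd).inter
        (measurableSet_lt measurable_snd measurable_fst)
  set f : ℝ × ℝ → ENNReal := S.indicator (fun q => ENNReal.ofReal (g' q.2)) with hf
  have hfm : Measurable f := ((hg'.comp measurable_snd).ennreal_ofReal).indicator hSm
  have step1 : ∫⁻ y in Set.Ioc A B, ENNReal.ofReal (g y - g A) ∂ν
      = ∫⁻ y in Set.Ioc A B, (∫⁻ t, f (y, t)) ∂ν := by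
    apply setLIntegral_congr_fun measurableSet_Ioc
    intro y hy
    have hin : ∀ t, f (y, t) = (Set.Ioo A y).indicator (fun t => ENNReal.ofReal (g' t)) t := by
      intro t
      by_cases ht : t ∈ Set.Ioo A y
      · rw [Set.indicator_of_mem ht, hf, Set.indicator_of_mem]
        exact ⟨⟨hy.1, hy.2⟩, ht.1, ht.2⟩
      · rw [Set.indicator_of_notMem ht, hf, Set.indicator_of_notMem]
        intro hc
        exact ht ⟨hc.2.1, hc.2.2⟩
    simp_rw [hin]
    rw [lintegral_indicator measurableSet_Ioo]
    rw [lint_ftc hy.1.le (fun t ht => hderiv t ⟨ht.1, ht.2.trans hy.2⟩)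
      (hcont.mono (Set.Icc_subset_Icc_right hy.2))
      (fun t ht => hpos t ⟨ht.1, ht.2.trans hy.2⟩)]
  rw [step1]
  have step2 : ∫⁻ y in Set.Ioc A B, (∫⁻ t, f (y, t)) ∂ν
      = ∫⁻ y, (∫⁻ t, f (y, t)) ∂ν := by
    rw [← lintegral_indicator measurableSet_Ioc]
    congr 1
    ext y
    by_cases hy : y ∈ Set.Ioc A B
    · rw [Set.indicator_of_mem hy]
    · rw [Set.indicator_of_notMem hy]
      have : ∀ t, f (y, t) = 0 := by
        intro t
        rw [hf, Set.indicator_of_notMem]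
        intro hc
        exact hy ⟨hc.1.1, hc.1.2⟩
      simp [this]
  rw [step2]
  have swap : ∫⁻ y, (∫⁻ t, f (y, t)) ∂ν = ∫⁻ t, (∫⁻ y, f (y, t) ∂ν) := by
    apply lintegral_lintegral_swap
    exact hfm.aemeasurable
  rw [swap]
  rw [← lintegral_indicator measurableSet_Ioo]
  congr 1
  ext t
  by_cases ht : t ∈ Set.Ioo A B
  · rw [Set.indicator_of_mem ht]
    have : ∀ y, f (y, t) = (Set.Ioc t B).indicator (fun _ => ENNReal.ofReal (g' t)) y := by
      intro y
      by_cases hy : y ∈ Set.Ioc t B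
      · rw [Set.indicator_of_mem hy, hf, Set.indicator_of_mem]
        exact ⟨⟨ht.1.trans hy.1, hy.2⟩, ht.1, hy.1⟩
      · rw [Set.indicator_of_notMem hy, hf, Set.indicator_of_notMem]
        intro hc
        exact hy ⟨hc.2.2, hc.1.2⟩
    simp_rw [this]
    rw [lintegral_indicator_const measurableSet_Ioc]
  · rw [Set.indicator_of_notMem ht]
    have : ∀ y, f (y, t) = 0 := by
      intro y
      rw [hf, Set.indicator_of_notMem]
      intro hc
      exact ht ⟨hc.2.1, hc.2.2.trans_le hc.1.2⟩
    simp [this]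
lemma tail_antitone_meas (ν : Measure ℝ) : Measurable (fun t => ν (Set.Ioi t)) := by
  have : Antitone (fun t => ν (Set.Ioi t)) := by
    intro a b hab
    exact measure_mono (fun x hx => lt_of_le_of_lt hab hx)
  exact this.measurable

lemma sym_reduce {Ω : Type*} [MeasurableSpace Ω] (μ : Measure Ω) [IsProbabilityMeasure μ]
    (X₁ X₂ : Ω → ℝ) (hm₁ : Measurable X₁) (hm₂ : Measurable X₂)
    (hind : IndepFun X₁ X₂ μ)
    (hsym₁ : Measure.map X₁ μ = Measure.map (fun ω => -X₁ ω) μ)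
    (hsym₂ : Measure.map X₂ μ = Measure.map (fun ω => -X₂ ω) μ)
    {z : ℝ} (hz : 0 < z) :
    μ {ω | X₁ ω * X₂ ω > z}
      = 2 * ∫⁻ y in Set.Ioi 0, (Measure.map X₁ μ) (Set.Ioi (z/y)) ∂(Measure.map X₂ μ) := by
  set ν₁ := Measure.map X₁ μ with hν₁
  set ν₂ := Measure.map X₂ μ with hν₂
  have hneg₁ : ν₁ = Measure.map Neg.neg ν₁ := by
    rw [hν₁, Measure.map_map measurable_neg hm₁]
    exact hsym₁
  have hneg₂ : ν₂ = Measure.map Neg.neg ν₂ := by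
    rw [hν₂, Measure.map_map measurable_neg hm₂]
    exact hsym₂
  have hν₁sym : ∀ t : ℝ, ν₁ (Set.Iio t) = ν₁ (Set.Ioi (-t)) := by
    intro t
    rw [hneg₁, Measure.map_apply measurable_neg measurableSet_Iio]
    congr 1
    ext x
    simp [neg_lt]
  have hprod : Measure.map (fun ω => (X₁ ω, X₂ ω)) μ = ν₁.prod ν₂ :=
    (indepFun_iff_map_prod_eq_prod_map_map hm₁.aemeasurable hm₂.aemeasurable).1 hind
  have hSm : MeasurableSet {p : ℝ × ℝ | p.1 * p.2 > z} :=
    measurableSet_lt measurable_const (measurable_fst.mul measurable_snd)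
  have h0 : μ {ω | X₁ ω * X₂ ω > z} = (ν₁.prod ν₂) {p : ℝ × ℝ | p.1 * p.2 > z} := by
    rw [← hprod, Measure.map_apply (hm₁.prodMk hm₂) hSm]
    rfl
  rw [h0, Measure.prod_apply_symm hSm]
  have hslice : ∀ y : ℝ, ((fun x => (x, y)) ⁻¹' {p : ℝ × ℝ | p.1 * p.2 > z})
      = {x : ℝ | x * y > z} := fun y => rfl
  simp_rw [hslice]
  -- split the integral
  have hsplit : ∫⁻ y, ν₁ {x : ℝ | x * y > z} ∂ν₂
      = (∫⁻ y in Set.Iio 0, ν₁ {x : ℝ | x * y > z} ∂ν₂)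
        + (∫⁻ y in Set.Ici 0, ν₁ {x : ℝ | x * y > z} ∂ν₂) := by
    rw [← lintegral_add_compl _ measurableSet_Iio, compl_Iio]
  have hIci : (∫⁻ y in Set.Ici 0, ν₁ {x : ℝ | x * y > z} ∂ν₂)
      = ∫⁻ y in Set.Ioi 0, ν₁ (Set.Ioi (z/y)) ∂ν₂ := by
    have : Set.Ici (0:ℝ) = {0} ∪ Set.Ioi 0 := by
      ext x; simp [le_iff_lt_or_eq, Set.mem_Ioi, eq_comm, or_comm]
    rw [this, lintegral_union measurableSet_Ioi (by simp [Set.disjoint_left])]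
    have h1 : (∫⁻ y in ({0} : Set ℝ), ν₁ {x : ℝ | x * y > z} ∂ν₂) = 0 := by
      rw [setLIntegral_congr_fun (measurableSet_singleton 0)
        (f := fun y => ν₁ {x : ℝ | x * y > z}) (g := fun _ => 0)]
      · simp
      · intro y hy
        beta_reduce
        rcases hy with rfl
        have : {x : ℝ | x * (0:ℝ) > z} = ∅ := by
          ext x
          simp only [Set.mem_setOf_eq, mul_zero, Set.mem_empty_iff_false, iff_false, gt_iff_lt,
            not_lt]
          exact hz.le
        rw [this, measure_empty]
    rw [h1, zero_add]
    apply setLIntegral_congr_fun measurableSet_Ioi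
    intro y hy
    beta_reduce
    congr 1
    ext x
    simp only [Set.mem_setOf_eq, Set.mem_Ioi]
    rw [gt_iff_lt, ← div_lt_iff₀ hy]
  have hIio : (∫⁻ y in Set.Iio 0, ν₁ {x : ℝ | x * y > z} ∂ν₂)
      = ∫⁻ y in Set.Ioi 0, ν₁ (Set.Ioi (z/y)) ∂ν₂ := by
    have hstep : (∫⁻ y in Set.Iio 0, ν₁ {x : ℝ | x * y > z} ∂ν₂)
        = ∫⁻ y in Set.Iio 0, ν₁ (Set.Ioi (-(z/y))) ∂ν₂ := by
      apply setLIntegral_congr_fun measurableSet_Iio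
      intro y hy
      beta_reduce
      rw [← hν₁sym (z/y)]
      congr 1
      ext x
      simp only [Set.mem_setOf_eq, Set.mem_Iio]
      have hy' : y < 0 := hy
      exact (lt_div_iff_of_neg hy').symm
    rw [hstep]
    have hmeas : Measurable (fun y : ℝ => ν₁ (Set.Ioi (-(z/y)))) := by
      exact (tail_antitone_meas ν₁).comp ((measurable_const.div measurable_id).neg)
    conv_lhs => rw [hneg₂]
    rw [setLIntegral_map measurableSet_Iio hmeas measurable_neg]
    have hpre : (Neg.neg ⁻¹' Set.Iio (0:ℝ)) = Set.Ioi 0 := by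
      ext x; simp
    rw [hpre]
    apply setLIntegral_congr_fun measurableSet_Ioi
    intro y hy
    beta_reduce
    congr 2
    rw [div_neg, neg_neg]
  rw [hsplit, hIio, hIci, two_mul]
lemma tail_sandwich₁ {f : ℝ → ℝ} {c α : ℝ}
    (h : Tendsto (fun z => z ^ α * f z) atTop (nhds c)) {ε : ℝ} (hε : 0 < ε) :
    ∀ᶠ t in atTop, (c - ε) * t ^ (-α) ≤ f t ∧ f t ≤ (c + ε) * t ^ (-α) := by
  have h' := Metric.tendsto_nhds.mp h ε hε
  filter_upwards [h', eventually_ge_atTop 1] with t h1 h2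
  rw [Real.dist_eq, abs_sub_lt_iff] at h1
  have ht0 : (0:ℝ) < t := lt_of_lt_of_le one_pos h2
  have hp : 0 < t ^ α := Real.rpow_pos_of_pos ht0 α
  constructor
  · rw [Real.rpow_neg ht0.le, ← div_eq_mul_inv, div_le_iff₀ hp]
    nlinarith [h1.2]
  · rw [Real.rpow_neg ht0.le, ← div_eq_mul_inv, le_div_iff₀ hp]
    nlinarith [h1.1]

lemma tail_sandwich₂ {f : ℝ → ℝ} {c α : ℝ}
    (h : Tendsto (fun z => z ^ α * Real.log z * f z) atTop (nhds c)) {ε : ℝ} (hε : 0 < ε) :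
    ∀ᶠ t in atTop, (c - ε) * t ^ (-α) * (Real.log t)⁻¹ ≤ f t
      ∧ f t ≤ (c + ε) * t ^ (-α) * (Real.log t)⁻¹ := by
  have h' := Metric.tendsto_nhds.mp h ε hε
  filter_upwards [h', eventually_ge_atTop 3] with t h1 h2
  rw [Real.dist_eq, abs_sub_lt_iff] at h1
  have ht0 : (0:ℝ) < t := by linarith
  have hp : 0 < t ^ α := Real.rpow_pos_of_pos ht0 α
  have hlt : (0:ℝ) < Real.log t := Real.log_pos (by linarith)
  have hkey : t ^ (-α) * (Real.log t)⁻¹ = (t ^ α * Real.log t)⁻¹ := by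
    rw [Real.rpow_neg ht0.le, mul_inv]
  constructor
  · rw [mul_assoc, hkey, ← div_eq_mul_inv, div_le_iff₀ (by positivity)]
    nlinarith [h1.2]
  · rw [mul_assoc, hkey, ← div_eq_mul_inv, le_div_iff₀ (by positivity)]
    nlinarith [h1.1]

end Helpers

set_option maxHeartbeats 1000000 in
theorem tail_product_symmetric_loglog
    {Ω : Type*} [MeasurableSpace Ω] (μ : Measure Ω) [IsProbabilityMeasure μ]
    (X₁ X₂ : Ω → ℝ) (hm₁ : Measurable X₁) (hm₂ : Measurable X₂)
    (hind : IndepFun X₁ X₂ μ)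
    (hsym₁ : Measure.map X₁ μ = Measure.map (fun ω => -X₁ ω) μ)
    (hsym₂ : Measure.map X₂ μ = Measure.map (fun ω => -X₂ ω) μ)
    (α c₁ c₂ : ℝ) (hα₀ : 0 < α) (hα₂ : α < 2) (hc₁ : 0 < c₁) (hc₂ : 0 < c₂)
    (h₁ : Tendsto (fun z : ℝ => z ^ α * (μ {ω | X₁ ω > z}).toReal)
      atTop (nhds c₁))
    (h₂ : Tendsto (fun z : ℝ => z ^ α * Real.log z * (μ {ω | X₂ ω > z}).toReal)
      atTop (nhds c₂)) :
    Tendsto (fun z : ℝ => z ^ α * (Real.log (Real.log z))⁻¹ *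
      (μ {ω | X₁ ω * X₂ ω > z}).toReal) atTop (nhds (2 * c₁ * c₂ * α)) := by
  have hprob₁ : IsProbabilityMeasure (Measure.map X₁ μ) :=
    Measure.isProbabilityMeasure_map hm₁.aemeasurable
  have hprob₂ : IsProbabilityMeasure (Measure.map X₂ μ) :=
    Measure.isProbabilityMeasure_map hm₂.aemeasurable
  set ν₁ := Measure.map X₁ μ with hν₁def
  set ν₂ := Measure.map X₂ μ with hν₂def
  have hmap₁ : ∀ t : ℝ, ν₁ (Set.Ioi t) = μ {ω | X₁ ω > t} := by
    intro t
    rw [hν₁def, Measure.map_apply hm₁ measurableSet_Ioi]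
    rfl
  have hmap₂ : ∀ t : ℝ, ν₂ (Set.Ioi t) = μ {ω | X₂ ω > t} := by
    intro t
    rw [hν₂def, Measure.map_apply hm₂ measurableSet_Ioi]
    rfl
  have h₁' : Tendsto (fun z : ℝ => z ^ α * (ν₁ (Set.Ioi z)).toReal) atTop (nhds c₁) := by
    simp_rw [hmap₁]; exact h₁
  have h₂' : Tendsto (fun z : ℝ => z ^ α * Real.log z * (ν₂ (Set.Ioi z)).toReal)
      atTop (nhds c₂) := by
    simp_rw [hmap₂]; exact h₂
  rw [Metric.tendsto_atTop]
  intro ε' hε'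
  set ε : ℝ := min (min (c₁/2) (c₂/2)) (min 1 (ε' / (16 * (α+1) * (c₁+c₂+1)))) with hεdef
  have hε0 : 0 < ε :=
    lt_min (lt_min (by linarith) (by linarith)) (lt_min one_pos (by positivity))
  have hεc₁ : ε ≤ c₁/2 := le_trans (min_le_left _ _) (min_le_left _ _)
  have hεc₂ : ε ≤ c₂/2 := le_trans (min_le_left _ _) (min_le_right _ _)
  have hε1 : ε ≤ 1 := le_trans (min_le_right _ _) (min_le_left _ _)
  have hεsmall : ε * (16 * (α+1) * (c₁+c₂+1)) ≤ ε' := by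
    have h : ε ≤ ε' / (16 * (α+1) * (c₁+c₂+1)) :=
      le_trans (min_le_right _ _) (min_le_right _ _)
    rw [le_div_iff₀ (by positivity)] at h
    exact h
  obtain ⟨M₀, hM₀⟩ := eventually_atTop.mp ((tail_sandwich₁ h₁' hε0).and (tail_sandwich₂ h₂' hε0))
  set M : ℝ := max M₀ 3 with hMdef
  have hM3 : (3:ℝ) ≤ M := le_max_right _ _
  have hM0 : (0:ℝ) < M := by linarith
  have hM1 : (1:ℝ) ≤ M := by linarith
  have htail := fun (t:ℝ) (ht : M ≤ t) => hM₀ t (le_trans (le_max_left _ _) ht)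
  have hlogt1 : ∀ t : ℝ, M ≤ t → 1 ≤ Real.log t := by
    intro t ht
    rw [Real.le_log_iff_exp_le (by linarith)]
    have h := Real.exp_one_lt_d9
    linarith
  -- ENNReal tail bounds
  have ht1u : ∀ t : ℝ, M ≤ t → ν₁ (Set.Ioi t) ≤ ENNReal.ofReal ((c₁+ε) * t ^ (-α)) := by
    intro t ht
    exact (ENNReal.le_ofReal_iff_toReal_le (measure_ne_top _ _)
      (mul_nonneg (by linarith) (Real.rpow_nonneg (by linarith) _))).2 (htail t ht).1.2
  have ht1l : ∀ t : ℝ, M ≤ t → ENNReal.ofReal ((c₁-ε) * t ^ (-α)) ≤ ν₁ (Set.Ioi t) :=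
    fun t ht => (ENNReal.ofReal_le_iff_le_toReal (measure_ne_top _ _)).2 (htail t ht).1.1
  have ht2u : ∀ t : ℝ, M ≤ t →
      ν₂ (Set.Ioi t) ≤ ENNReal.ofReal ((c₂+ε) * t ^ (-α) * (Real.log t)⁻¹) := by
    intro t ht
    have hlt : (0:ℝ) ≤ (Real.log t)⁻¹ := inv_nonneg.2 (by linarith [hlogt1 t ht])
    exact (ENNReal.le_ofReal_iff_toReal_le (measure_ne_top _ _)
      (mul_nonneg (mul_nonneg (by linarith) (Real.rpow_nonneg (by linarith) _)) hlt)).2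
      (htail t ht).2.2
  have ht2l : ∀ t : ℝ, M ≤ t →
      ENNReal.ofReal ((c₂-ε) * t ^ (-α) * (Real.log t)⁻¹) ≤ ν₂ (Set.Ioi t) :=
    fun t ht => (ENNReal.ofReal_le_iff_le_toReal (measure_ne_top _ _)).2 (htail t ht).2.1
  have hlogM1 : 1 ≤ Real.log M := hlogt1 M le_rfl
  set llM : ℝ := Real.log (Real.log M) with hllMdef
  have hloglogM0 : 0 ≤ llM := Real.log_nonneg hlogM1
  have hMα0 : (0:ℝ) < M ^ α := Real.rpow_pos_of_pos hM0 α
  -- constants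
  set D₁ : ℝ := 2*((c₁+ε)*M^α + (c₂+ε)*M^α + (c₁+ε)*(c₂+ε)) with hD₁def
  set D₂ : ℝ := 2*(c₁-ε)*(α*(c₂-ε)*(1 + llM) + (c₂+ε)) with hD₂def
  have hD₁0 : 0 ≤ D₁ := by
    have h1 : 0 ≤ (c₁+ε)*M^α := mul_nonneg (by linarith) hMα0.le
    have h2 : 0 ≤ (c₂+ε)*M^α := mul_nonneg (by linarith) hMα0.le
    have h3 : 0 ≤ (c₁+ε)*(c₂+ε) := mul_nonneg (by linarith) (by linarith)
    rw [hD₁def]; linarith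
  have hD₂0 : 0 ≤ D₂ := by
    have h1 : 0 ≤ α*(c₂-ε) := mul_nonneg hα₀.le (by linarith)
    have h2 : 0 ≤ α*(c₂-ε)*(1+llM) := mul_nonneg h1 (by linarith)
    have h3 : 0 ≤ 2*(c₁-ε) := by linarith
    rw [hD₂def]
    exact mul_nonneg h3 (by linarith)
  set R : ℝ := 2 + llM + (D₁ + D₂ + 1) * (2 / ε') with hRdef
  have hRterm0 : 0 ≤ (D₁ + D₂ + 1) * (2 / ε') := mul_nonneg (by linarith) (by positivity)
  set N : ℝ := max (M*M) (Real.exp (Real.exp (max R (max 2 (2 * Real.log M))))) with hNdef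
  refine ⟨N, fun z hz => ?_⟩
  -- basic facts about z
  have hMM : M*M ≤ z := le_trans (le_max_left _ _) hz
  have hz0 : (0:ℝ) < z := lt_of_lt_of_le (mul_pos hM0 hM0) hMM
  set W : ℝ := max R (max 2 (2 * Real.log M)) with hWdef
  have hexpz : Real.exp (Real.exp W) ≤ z := le_trans (le_max_right _ _) hz
  have hlogz_ge : Real.exp W ≤ Real.log z := (Real.le_log_iff_exp_le hz0).2 hexpz
  have hW2 : 2 ≤ W := le_trans (le_max_left _ _) (le_max_right _ _)
  have hWlogM : 2 * Real.log M ≤ W := le_trans (le_max_right _ _) (le_max_right _ _)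
  have hWR : R ≤ W := le_max_left _ _
  have hWexp : W ≤ Real.exp W := by linarith [Real.add_one_le_exp W]
  have hlogz2 : 2 ≤ Real.log z := by linarith
  have hlogz2M : 2 * Real.log M ≤ Real.log z := by linarith
  have hlogz0 : 0 < Real.log z := by linarith
  have hL_R : R ≤ Real.log (Real.log z) := by
    calc R ≤ W := hWR
      _ = Real.log (Real.exp W) := (Real.log_exp W).symm
      _ ≤ Real.log (Real.log z) := Real.log_le_log (Real.exp_pos W) hlogz_ge
  set L : ℝ := Real.log (Real.log z) with hLdef
  have hR2 : 2 ≤ R := by rw [hRdef]; linarith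
  have hL1 : 1 ≤ L := by linarith
  have hL0 : 0 < L := by linarith
  have hLinv : L * L⁻¹ = 1 := mul_inv_cancel₀ (ne_of_gt hL0)
  have hLinv0 : 0 ≤ L⁻¹ := inv_nonneg.2 hL0.le
  have hLgap : 1 ≤ L - 1 - llM := by
    have : R ≤ L := hL_R
    rw [hRdef] at this
    linarith
  -- B facts
  set B : ℝ := z / M with hBdef
  have hMB : M ≤ B := by rw [hBdef, le_div_iff₀ hM0]; exact hMM
  have hB0 : 0 < B := by linarith
  have hBz : B ≤ z := by rw [hBdef]; exact div_le_self hz0.le hM1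
  have hlogB : Real.log B = Real.log z - Real.log M :=
    Real.log_div (ne_of_gt hz0) (ne_of_gt hM0)
  have hlogM0 : 0 < Real.log M := by linarith
  have hlogB1 : 1 ≤ Real.log B := by rw [hlogB]; linarith
  have hlogB0 : 0 < Real.log B := by linarith
  have hLB_le : Real.log (Real.log B) ≤ L :=
    Real.log_le_log hlogB0 (Real.log_le_log hB0 hBz)
  have hLB_ge : L - 1 ≤ Real.log (Real.log B) := by
    have h2 : Real.log z ≤ 2 * Real.log B := by rw [hlogB]; linarith
    have h3 := Real.log_le_log hlogz0 h2
    rw [Real.log_mul (by norm_num) (ne_of_gt hlogB0)] at h3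
    have hlog2 : Real.log 2 ≤ 1 := by linarith [Real.log_two_lt_d9]
    rw [hLdef]
    linarith
  have hLM_le : llM ≤ Real.log (Real.log B) := by
    rw [hllMdef]
    exact Real.log_le_log hlogM0 (by rw [hlogB]; linarith)
  have hLM_le' : llM ≤ L := le_trans hLM_le hLB_le
  -- rpow facts
  have hzα : 0 < z ^ α := Real.rpow_pos_of_pos hz0 α
  have hzneg : z ^ (-α) = (z ^ α)⁻¹ := Real.rpow_neg hz0.le α
  have hone : z ^ α * z ^ (-α) = 1 := by
    rw [hzneg]; exact mul_inv_cancel₀ (ne_of_gt hzα)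
  have hznegpos : 0 < z ^ (-α) := Real.rpow_pos_of_pos hz0 (-α)
  have hdiv_pow : ∀ y : ℝ, 0 < y → (z/y) ^ (-α) = y ^ α * z ^ (-α) := by
    intro y hy
    rw [Real.rpow_neg (by positivity), Real.div_rpow hz0.le hy.le, inv_div, hzneg, div_eq_mul_inv]
  have hBα : B ^ (-α) = M ^ α * z ^ (-α) := by rw [hBdef]; exact hdiv_pow M hM0
  -- the measure identity
  set J : ENNReal := ∫⁻ y in Set.Ioi 0, ν₁ (Set.Ioi (z/y)) ∂ν₂ with hJdef
  have hsymz : μ {ω | X₁ ω * X₂ ω > z} = 2 * J := by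
    rw [hJdef, hν₁def, hν₂def]
    exact sym_reduce μ X₁ X₂ hm₁ hm₂ hind hsym₁ hsym₂ hz0
  set J₁ : ENNReal := ∫⁻ y in Set.Ioc 0 M, ν₁ (Set.Ioi (z/y)) ∂ν₂ with hJ₁def
  set J₂ : ENNReal := ∫⁻ y in Set.Ioc M B, ν₁ (Set.Ioi (z/y)) ∂ν₂ with hJ₂def
  set J₃ : ENNReal := ∫⁻ y in Set.Ioi B, ν₁ (Set.Ioi (z/y)) ∂ν₂ with hJ₃def
  have hJsplit : J = J₁ + (J₂ + J₃) := by
    rw [hJdef, hJ₁def, hJ₂def, hJ₃def]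
    have hu1 : Set.Ioi (0:ℝ) = Set.Ioc 0 M ∪ (Set.Ioc M B ∪ Set.Ioi B) := by
      rw [Set.Ioc_union_Ioi_eq_Ioi hMB, Set.Ioc_union_Ioi_eq_Ioi hM0.le]
    have hd1 : Disjoint (Set.Ioc (0:ℝ) M) (Set.Ioc M B ∪ Set.Ioi B) := by
      rw [Set.Ioc_union_Ioi_eq_Ioi hMB]
      exact Set.disjoint_left.2 (fun x hx hx' => absurd hx.2 (not_le.2 hx'))
    have hd2 : Disjoint (Set.Ioc M B) (Set.Ioi B) :=
      Set.disjoint_left.2 (fun x hx hx' => absurd hx.2 (not_le.2 hx'))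
    rw [hu1, lintegral_union (measurableSet_Ioc.union measurableSet_Ioi) hd1,
      lintegral_union measurableSet_Ioi hd2]
  -- J₁ bound
  have hJ₁u : J₁ ≤ ENNReal.ofReal ((c₁+ε) * (M ^ α * z ^ (-α))) := by
    have hpt : ∀ y ∈ Set.Ioc (0:ℝ) M,
        ν₁ (Set.Ioi (z/y)) ≤ ENNReal.ofReal ((c₁+ε) * (M ^ α * z ^ (-α))) := by
      intro y hy
      have hy0 : 0 < y := hy.1
      have hBzy : B ≤ z / y := by
        rw [hBdef]
        exact div_le_div_of_nonneg_left hz0.le hy0 hy.2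
      have hMzy : M ≤ z / y := le_trans hMB hBzy
      refine le_trans (ht1u _ hMzy) (ENNReal.ofReal_le_ofReal ?_)
      have h1 : (z/y) ^ (-α) ≤ B ^ (-α) :=
        Real.rpow_le_rpow_of_nonpos hB0 hBzy (by linarith)
      rw [← hBα]
      exact mul_le_mul_of_nonneg_left h1 (by linarith)
    calc J₁ ≤ ∫⁻ _ in Set.Ioc (0:ℝ) M, ENNReal.ofReal ((c₁+ε) * (M ^ α * z ^ (-α))) ∂ν₂ :=
        setLIntegral_mono' measurableSet_Ioc hpt
      _ = ENNReal.ofReal ((c₁+ε) * (M ^ α * z ^ (-α))) * ν₂ (Set.Ioc 0 M) :=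
        setLIntegral_const _ _
      _ ≤ ENNReal.ofReal ((c₁+ε) * (M ^ α * z ^ (-α))) * 1 := mul_le_mul_right prob_le_one _
      _ = ENNReal.ofReal ((c₁+ε) * (M ^ α * z ^ (-α))) := mul_one _
  -- J₃ bound
  have hJ₃u : J₃ ≤ ENNReal.ofReal ((c₂+ε) * (M ^ α * z ^ (-α))) := by
    have h1 : J₃ ≤ ν₂ (Set.Ioi B) := by
      calc J₃ ≤ ∫⁻ _ in Set.Ioi B, 1 ∂ν₂ :=
          setLIntegral_mono' measurableSet_Ioi (fun y _ => prob_le_one)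
        _ = 1 * ν₂ (Set.Ioi B) := setLIntegral_const _ _
        _ = ν₂ (Set.Ioi B) := one_mul _
    refine le_trans h1 (le_trans (ht2u B hMB) (ENNReal.ofReal_le_ofReal ?_))
    rw [hBα]
    have h2 : (Real.log B)⁻¹ ≤ 1 := inv_le_one_of_one_le₀ hlogB1
    have h3 : 0 ≤ (c₂+ε) * (M ^ α * z ^ (-α)) :=
      mul_nonneg (by linarith) (mul_nonneg hMα0.le hznegpos.le)
    calc (c₂+ε) * (M ^ α * z ^ (-α)) * (Real.log B)⁻¹
        ≤ (c₂+ε) * (M ^ α * z ^ (-α)) * 1 := mul_le_mul_of_nonneg_left h2 h3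
      _ = (c₂+ε) * (M ^ α * z ^ (-α)) := mul_one _
  -- the middle integral, and the moment integral K
  set K : ENNReal := ∫⁻ y in Set.Ioc M B, ENNReal.ofReal (y ^ α) ∂ν₂ with hKdef
  have hMzy_mid : ∀ y, y ∈ Set.Ioc M B → 0 < y ∧ M ≤ z / y := by
    intro y hy
    have hy0 : 0 < y := lt_trans hM0 hy.1
    refine ⟨hy0, ?_⟩
    rw [le_div_iff₀ hy0]
    calc M * y ≤ M * B := mul_le_mul_of_nonneg_left hy.2 hM0.le
      _ = z := by rw [hBdef, mul_comm, div_mul_cancel₀ z (ne_of_gt hM0)]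
  have hJ₂u : J₂ ≤ ENNReal.ofReal ((c₁+ε) * z ^ (-α)) * K := by
    rw [hKdef, hJ₂def, ← lintegral_const_mul' _ _ ENNReal.ofReal_ne_top]
    apply setLIntegral_mono' measurableSet_Ioc
    intro y hy
    obtain ⟨hy0, hMzy⟩ := hMzy_mid y hy
    refine le_trans (ht1u _ hMzy) ?_
    rw [hdiv_pow y hy0,
      show (c₁+ε) * (y ^ α * z ^ (-α)) = ((c₁+ε) * z ^ (-α)) * y ^ α from by ring,
      ENNReal.ofReal_mul (mul_nonneg (by linarith) hznegpos.le)]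
  have hJ₂l : ENNReal.ofReal ((c₁-ε) * z ^ (-α)) * K ≤ J₂ := by
    rw [hKdef, hJ₂def, ← lintegral_const_mul' _ _ ENNReal.ofReal_ne_top]
    apply setLIntegral_mono' measurableSet_Ioc
    intro y hy
    obtain ⟨hy0, hMzy⟩ := hMzy_mid y hy
    refine le_trans ?_ (ht1l _ hMzy)
    rw [hdiv_pow y hy0,
      show (c₁-ε) * (y ^ α * z ^ (-α)) = ((c₁-ε) * z ^ (-α)) * y ^ α from by ring,
      ENNReal.ofReal_mul (mul_nonneg (by linarith) hznegpos.le)]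
  -- parts data for g = rpow α
  have hg'meas : Measurable (fun t : ℝ => α * t ^ (α-1)) := by fun_prop
  have hderivs : ∀ t ∈ Set.Icc M B, HasDerivAt (fun y : ℝ => y ^ α) (α * t ^ (α-1)) t :=
    fun t ht => Real.hasDerivAt_rpow_const (Or.inl (ne_of_gt (lt_of_lt_of_le hM0 ht.1)))
  have hcontg' : ContinuousOn (fun t : ℝ => α * t ^ (α-1)) (Set.Icc M B) :=
    continuousOn_const.mul (ContinuousOn.rpow_const continuousOn_id
      (fun t ht => Or.inl (ne_of_gt (lt_of_lt_of_le hM0 ht.1))))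
  have hposg' : ∀ t ∈ Set.Icc M B, 0 ≤ α * t ^ (α-1) :=
    fun t ht => mul_nonneg hα₀.le (Real.rpow_nonneg (le_trans hM0.le ht.1) _)
  set Kp : ENNReal := ∫⁻ y in Set.Ioc M B, ENNReal.ofReal (y ^ α - M ^ α) ∂ν₂ with hKpdef
  have hKsplit : K = ENNReal.ofReal (M ^ α) * ν₂ (Set.Ioc M B) + Kp := by
    rw [hKdef, hKpdef]
    rw [setLIntegral_congr_fun measurableSet_Ioc
      (g := fun y => ENNReal.ofReal (M ^ α) + ENNReal.ofReal (y ^ α - M ^ α)) ?_]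
    · rw [lintegral_add_left measurable_const, setLIntegral_const]
    · intro y hy
      beta_reduce
      have hyα : M ^ α ≤ y ^ α := Real.rpow_le_rpow hM0.le hy.1.le hα₀.le
      rw [← ENNReal.ofReal_add hMα0.le (by linarith)]
      congr 1
      ring
  have hKp_eq : Kp = ∫⁻ t in Set.Ioo M B, ENNReal.ofReal (α * t ^ (α-1)) * ν₂ (Set.Ioc t B) := by
    rw [hKpdef]
    exact parts_mono ν₂ hMB hg'meas hderivs hcontg' hposg'
  -- FTC computations
  have hpow_int : (∫⁻ t in Set.Ioo M B, ENNReal.ofReal (α * t ^ (α-1)))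
      = ENNReal.ofReal (B ^ α - M ^ α) := lint_ftc hMB hderivs hcontg' hposg'
  have hdll : ∀ c : ℝ, 0 ≤ c → (∫⁻ t in Set.Ioo M B, ENNReal.ofReal (α * c * (t * Real.log t)⁻¹))
      = ENNReal.ofReal (α * c * (Real.log (Real.log B) - llM)) := by
    intro c hc
    have h := lint_ftc hMB (g := fun t => α * c * Real.log (Real.log t))
      (g' := fun t => α * c * (t * Real.log t)⁻¹) ?_ ?_ ?_
    · rw [h, hllMdef]
      congr 1
      ring
    · intro t ht
      have ht0 : 0 < t := lt_of_lt_of_le hM0 ht.1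
      have hlt1 : 1 ≤ Real.log t := hlogt1 t ht.1
      have hd := ((Real.hasDerivAt_log (ne_of_gt (by linarith : (0:ℝ) < Real.log t))).comp t
        (Real.hasDerivAt_log (ne_of_gt ht0))).const_mul (α*c)
      have heq : (α*c) * ((Real.log t)⁻¹ * t⁻¹) = α * c * (t * Real.log t)⁻¹ := by
        rw [mul_inv]; ring
      show HasDerivAt (fun t => α * c * Real.log (Real.log t)) (α * c * (t * Real.log t)⁻¹) t
      rw [← heq]
      exact hd
    · apply continuousOn_const.mul
      apply ContinuousOn.inv₀
      · exact continuousOn_id.mul (Real.continuousOn_log.mono (fun t ht =>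
          ne_of_gt (lt_of_lt_of_le hM0 ht.1)))
      · intro t ht
        have ht0 : 0 < t := lt_of_lt_of_le hM0 ht.1
        exact ne_of_gt (mul_pos ht0 (by linarith [hlogt1 t ht.1]))
    · intro t ht
      show 0 ≤ α * c * (t * Real.log t)⁻¹
      have ht0 : 0 < t := lt_of_lt_of_le hM0 ht.1
      have h1 : 0 < Real.log t := by linarith [hlogt1 t ht.1]
      positivity
  -- Kp upper bound
  have hKp_u : Kp ≤ ENNReal.ofReal (α * (c₂+ε) * (Real.log (Real.log B) - llM)) := by
    rw [hKp_eq, ← hdll (c₂+ε) (by linarith)]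
    apply setLIntegral_mono' measurableSet_Ioo
    intro t ht
    have ht0 : 0 < t := lt_trans hM0 ht.1
    have hMt : M ≤ t := ht.1.le
    have hg'0 : 0 ≤ α * t ^ (α-1) := mul_nonneg hα₀.le (Real.rpow_nonneg ht0.le _)
    have hpow : t ^ (α-1) * t ^ (-α) = t⁻¹ := by
      rw [← Real.rpow_add ht0, show α - 1 + -α = -1 from by ring, Real.rpow_neg_one]
    calc ENNReal.ofReal (α * t ^ (α-1)) * ν₂ (Set.Ioc t B)
        ≤ ENNReal.ofReal (α * t ^ (α-1)) * ν₂ (Set.Ioi t) :=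
          mul_le_mul_right (measure_mono Set.Ioc_subset_Ioi_self) _
      _ ≤ ENNReal.ofReal (α * t ^ (α-1)) * ENNReal.ofReal ((c₂+ε) * t ^ (-α) * (Real.log t)⁻¹) :=
          mul_le_mul_right (ht2u t hMt) _
      _ = ENNReal.ofReal (α * (c₂+ε) * (t * Real.log t)⁻¹) := by
          rw [← ENNReal.ofReal_mul hg'0]
          congr 1
          calc α * t ^ (α-1) * ((c₂+ε) * t ^ (-α) * (Real.log t)⁻¹)
              = α * (c₂+ε) * ((t ^ (α-1) * t ^ (-α)) * (Real.log t)⁻¹) := by ring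
            _ = α * (c₂+ε) * (t⁻¹ * (Real.log t)⁻¹) := by rw [hpow]
            _ = α * (c₂+ε) * (t * Real.log t)⁻¹ := by rw [mul_inv]
  -- Kp lower bound machinery
  have hmono_meas : Measurable (fun t : ℝ => ν₂ (Set.Ioc t B)) := by
    have h : Antitone (fun t : ℝ => ν₂ (Set.Ioc t B)) :=
      fun a b hab => measure_mono (Set.Ioc_subset_Ioc_left hab)
    exact h.measurable
  have hkey : (∫⁻ t in Set.Ioo M B, ENNReal.ofReal (α * t ^ (α-1)) * ν₂ (Set.Ioc t B))
      + (∫⁻ t in Set.Ioo M B, ENNReal.ofReal (α * t ^ (α-1)) * ν₂ (Set.Ioi B))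
      = ∫⁻ t in Set.Ioo M B, ENNReal.ofReal (α * t ^ (α-1)) * ν₂ (Set.Ioi t) := by
    have hmeasF : Measurable (fun t : ℝ => ENNReal.ofReal (α * t ^ (α-1)) * ν₂ (Set.Ioc t B)) :=
      (Measurable.ennreal_ofReal hg'meas).mul hmono_meas
    rw [← lintegral_add_left hmeasF]
    apply setLIntegral_congr_fun measurableSet_Ioo
    intro t ht
    beta_reduce
    rw [← mul_add]
    congr 1
    have hd : Disjoint (Set.Ioc t B) (Set.Ioi B) :=
      Set.disjoint_left.2 (fun x hx hx' => absurd hx.2 (not_le.2 hx'))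
    rw [← measure_union hd measurableSet_Ioi, Set.Ioc_union_Ioi_eq_Ioi ht.2.le]
  have hterm2 : (∫⁻ t in Set.Ioo M B, ENNReal.ofReal (α * t ^ (α-1)) * ν₂ (Set.Ioi B))
      ≤ ENNReal.ofReal (c₂+ε) := by
    rw [lintegral_mul_const' _ _ (measure_ne_top _ _), hpow_int]
    have hBone : B ^ α * B ^ (-α) = 1 := by
      rw [Real.rpow_neg hB0.le]
      exact mul_inv_cancel₀ (ne_of_gt (Real.rpow_pos_of_pos hB0 α))
    have hinv : (Real.log B)⁻¹ ≤ 1 := inv_le_one_of_one_le₀ hlogB1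
    calc ENNReal.ofReal (B ^ α - M ^ α) * ν₂ (Set.Ioi B)
        ≤ ENNReal.ofReal (B ^ α) * ENNReal.ofReal ((c₂+ε) * B ^ (-α) * (Real.log B)⁻¹) :=
          mul_le_mul' (ENNReal.ofReal_le_ofReal (by linarith [hMα0])) (ht2u B hMB)
      _ = ENNReal.ofReal (B ^ α * ((c₂+ε) * B ^ (-α) * (Real.log B)⁻¹)) :=
          (ENNReal.ofReal_mul (Real.rpow_nonneg hB0.le _)).symm
      _ ≤ ENNReal.ofReal (c₂+ε) := by
          apply ENNReal.ofReal_le_ofReal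
          calc B ^ α * ((c₂+ε) * B ^ (-α) * (Real.log B)⁻¹)
              = (c₂+ε) * (B ^ α * B ^ (-α)) * (Real.log B)⁻¹ := by ring
            _ = (c₂+ε) * (Real.log B)⁻¹ := by rw [hBone, mul_one]
            _ ≤ (c₂+ε) * 1 := mul_le_mul_of_nonneg_left hinv (by linarith)
            _ = c₂+ε := mul_one _
  have hmain_l : ENNReal.ofReal (α * (c₂-ε) * (Real.log (Real.log B) - llM))
      ≤ ∫⁻ t in Set.Ioo M B, ENNReal.ofReal (α * t ^ (α-1)) * ν₂ (Set.Ioi t) := by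
    rw [← hdll (c₂-ε) (by linarith)]
    apply setLIntegral_mono' measurableSet_Ioo
    intro t ht
    have ht0 : 0 < t := lt_trans hM0 ht.1
    have hg'0 : 0 ≤ α * t ^ (α-1) := mul_nonneg hα₀.le (Real.rpow_nonneg ht0.le _)
    have hpow : t ^ (α-1) * t ^ (-α) = t⁻¹ := by
      rw [← Real.rpow_add ht0, show α - 1 + -α = -1 from by ring, Real.rpow_neg_one]
    refine le_trans (le_of_eq ?_) (mul_le_mul_right (ht2l t ht.1.le) _)
    rw [← ENNReal.ofReal_mul hg'0]
    congr 1
    calc α * (c₂-ε) * (t * Real.log t)⁻¹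
        = α * (c₂-ε) * (t⁻¹ * (Real.log t)⁻¹) := by rw [mul_inv]
      _ = α * (c₂-ε) * ((t ^ (α-1) * t ^ (-α)) * (Real.log t)⁻¹) := by rw [hpow]
      _ = α * t ^ (α-1) * ((c₂-ε) * t ^ (-α) * (Real.log t)⁻¹) := by ring
  have hKp_l : ENNReal.ofReal (α * (c₂-ε) * (Real.log (Real.log B) - llM))
      ≤ Kp + ENNReal.ofReal (c₂+ε) := by
    calc ENNReal.ofReal (α * (c₂-ε) * (Real.log (Real.log B) - llM))
        ≤ ∫⁻ t in Set.Ioo M B, ENNReal.ofReal (α * t ^ (α-1)) * ν₂ (Set.Ioi t) := hmain_l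
      _ = (∫⁻ t in Set.Ioo M B, ENNReal.ofReal (α * t ^ (α-1)) * ν₂ (Set.Ioc t B))
          + (∫⁻ t in Set.Ioo M B, ENNReal.ofReal (α * t ^ (α-1)) * ν₂ (Set.Ioi B)) := hkey.symm
      _ ≤ Kp + ENNReal.ofReal (c₂+ε) := add_le_add (le_of_eq hKp_eq.symm) hterm2
  -- K bounds
  have hKu : K ≤ ENNReal.ofReal ((c₂+ε) + α * (c₂+ε) * (L - llM)) := by
    rw [hKsplit]
    have hMone : M ^ α * M ^ (-α) = 1 := by
      rw [Real.rpow_neg hM0.le]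
      exact mul_inv_cancel₀ (ne_of_gt hMα0)
    have hinvM : (Real.log M)⁻¹ ≤ 1 := inv_le_one_of_one_le₀ hlogM1
    have h1 : ENNReal.ofReal (M ^ α) * ν₂ (Set.Ioc M B) ≤ ENNReal.ofReal (c₂+ε) := by
      calc ENNReal.ofReal (M ^ α) * ν₂ (Set.Ioc M B)
          ≤ ENNReal.ofReal (M ^ α) * ν₂ (Set.Ioi M) :=
            mul_le_mul_right (measure_mono Set.Ioc_subset_Ioi_self) _
        _ ≤ ENNReal.ofReal (M ^ α) * ENNReal.ofReal ((c₂+ε) * M ^ (-α) * (Real.log M)⁻¹) :=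
            mul_le_mul_right (ht2u M le_rfl) _
        _ = ENNReal.ofReal (M ^ α * ((c₂+ε) * M ^ (-α) * (Real.log M)⁻¹)) :=
            (ENNReal.ofReal_mul hMα0.le).symm
        _ ≤ ENNReal.ofReal (c₂+ε) := by
            apply ENNReal.ofReal_le_ofReal
            calc M ^ α * ((c₂+ε) * M ^ (-α) * (Real.log M)⁻¹)
                = (c₂+ε) * (M ^ α * M ^ (-α)) * (Real.log M)⁻¹ := by ring
              _ = (c₂+ε) * (Real.log M)⁻¹ := by rw [hMone, mul_one]
              _ ≤ (c₂+ε) * 1 := mul_le_mul_of_nonneg_left hinvM (by linarith)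
              _ = c₂+ε := mul_one _
    have hcoef : 0 ≤ α * (c₂+ε) := mul_nonneg hα₀.le (by linarith)
    have h2 : Kp ≤ ENNReal.ofReal (α * (c₂+ε) * (L - llM)) := by
      refine le_trans hKp_u (ENNReal.ofReal_le_ofReal ?_)
      exact mul_le_mul_of_nonneg_left (by linarith only [hLB_le]) hcoef
    calc ENNReal.ofReal (M ^ α) * ν₂ (Set.Ioc M B) + Kp
        ≤ ENNReal.ofReal (c₂+ε) + ENNReal.ofReal (α * (c₂+ε) * (L - llM)) := add_le_add h1 h2
      _ = ENNReal.ofReal ((c₂+ε) + α * (c₂+ε) * (L - llM)) :=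
          (ENNReal.ofReal_add (by linarith) (mul_nonneg hcoef (by linarith [hLM_le']))).symm
  have hKl : ENNReal.ofReal (α * (c₂-ε) * (L - 1 - llM)) ≤ K + ENNReal.ofReal (c₂+ε) := by
    have hcoef : 0 ≤ α * (c₂-ε) := mul_nonneg hα₀.le (by linarith)
    refine le_trans (ENNReal.ofReal_le_ofReal ?_) (le_trans hKp_l (add_le_add_left ?_ _))
    · exact mul_le_mul_of_nonneg_left (by linarith only [hLB_ge]) hcoef
    · rw [hKsplit]
      exact le_add_self
  -- J bounds
  set V : ℝ := (c₁+ε)*(M^α * z^(-α)) + ((c₁+ε) * z^(-α) * ((c₂+ε) + α*(c₂+ε)*(L - llM))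
      + (c₂+ε)*(M^α * z^(-α))) with hVdef
  have hV2nonneg : 0 ≤ (c₂+ε) + α*(c₂+ε)*(L - llM) := by
    have : 0 ≤ α*(c₂+ε)*(L - llM) :=
      mul_nonneg (mul_nonneg hα₀.le (by linarith)) (by linarith [hLM_le'])
    linarith
  have hX1 : 0 ≤ (c₁+ε)*(M^α * z^(-α)) :=
    mul_nonneg (by linarith) (mul_nonneg hMα0.le hznegpos.le)
  have hX2 : 0 ≤ (c₁+ε) * z^(-α) * ((c₂+ε) + α*(c₂+ε)*(L - llM)) :=
    mul_nonneg (mul_nonneg (by linarith) hznegpos.le) hV2nonneg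
  have hX3 : 0 ≤ (c₂+ε)*(M^α * z^(-α)) :=
    mul_nonneg (by linarith) (mul_nonneg hMα0.le hznegpos.le)
  have hJu : J ≤ ENNReal.ofReal V := by
    rw [hJsplit]
    have hj2 : J₂ ≤ ENNReal.ofReal ((c₁+ε) * z^(-α) * ((c₂+ε) + α*(c₂+ε)*(L - llM))) := by
      refine le_trans hJ₂u ?_
      calc ENNReal.ofReal ((c₁+ε) * z ^ (-α)) * K
          ≤ ENNReal.ofReal ((c₁+ε) * z^(-α)) * ENNReal.ofReal ((c₂+ε) + α*(c₂+ε)*(L - llM)) :=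
            mul_le_mul_right hKu _
        _ = ENNReal.ofReal ((c₁+ε) * z^(-α) * ((c₂+ε) + α*(c₂+ε)*(L - llM))) :=
            (ENNReal.ofReal_mul (mul_nonneg (by linarith) hznegpos.le)).symm
    calc J₁ + (J₂ + J₃)
        ≤ ENNReal.ofReal ((c₁+ε)*(M^α * z^(-α)))
          + (ENNReal.ofReal ((c₁+ε) * z^(-α) * ((c₂+ε) + α*(c₂+ε)*(L - llM)))
            + ENNReal.ofReal ((c₂+ε)*(M^α * z^(-α)))) :=
          add_le_add hJ₁u (add_le_add hj2 hJ₃u)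
      _ = ENNReal.ofReal V := by
          rw [hVdef, ENNReal.ofReal_add hX1 (add_nonneg hX2 hX3), ENNReal.ofReal_add hX2 hX3]
  have hJfin : J ≠ ⊤ := by
    have h : J ≤ 1 := by
      rw [hJdef]
      calc (∫⁻ y in Set.Ioi 0, ν₁ (Set.Ioi (z/y)) ∂ν₂)
          ≤ ∫⁻ _ in Set.Ioi (0:ℝ), 1 ∂ν₂ :=
            setLIntegral_mono' measurableSet_Ioi (fun _ _ => prob_le_one)
        _ = 1 * ν₂ (Set.Ioi 0) := setLIntegral_const _ _
        _ ≤ 1 * 1 := mul_le_mul_right prob_le_one _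
        _ = 1 := mul_one 1
    exact ne_top_of_le_ne_top ENNReal.one_ne_top h
  have hTu : J.toReal ≤ V :=
    ENNReal.toReal_le_of_le_ofReal (by linarith only [hVdef, hX1, hX2, hX3]) hJu
  set Wlo : ℝ := (c₁-ε) * z^(-α) * (α*(c₂-ε)*(L - 1 - llM)) with hWlodef
  set Ylo : ℝ := (c₁-ε) * z^(-α) * (c₂+ε) with hYlodef
  have hclo : 0 ≤ (c₁-ε) * z^(-α) := mul_nonneg (by linarith) hznegpos.le
  have hWlononneg : 0 ≤ Wlo := by
    rw [hWlodef]
    exact mul_nonneg hclo (mul_nonneg (mul_nonneg hα₀.le (by linarith)) (by linarith))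
  have hYlononneg : 0 ≤ Ylo := by
    rw [hYlodef]
    exact mul_nonneg hclo (by linarith)
  have hJl : ENNReal.ofReal Wlo ≤ J + ENNReal.ofReal Ylo := by
    have hJ₂J : J₂ ≤ J := by
      rw [hJsplit]
      calc J₂ ≤ J₂ + J₃ := le_self_add
        _ ≤ J₁ + (J₂ + J₃) := le_add_self
    calc ENNReal.ofReal Wlo
        = ENNReal.ofReal ((c₁-ε)*z^(-α)) * ENNReal.ofReal (α*(c₂-ε)*(L-1-llM)) := by
          rw [hWlodef, ENNReal.ofReal_mul hclo]
      _ ≤ ENNReal.ofReal ((c₁-ε)*z^(-α)) * (K + ENNReal.ofReal (c₂+ε)) := mul_le_mul_right hKl _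
      _ = ENNReal.ofReal ((c₁-ε)*z^(-α)) * K
          + ENNReal.ofReal ((c₁-ε)*z^(-α)) * ENNReal.ofReal (c₂+ε) := mul_add _ _ _
      _ ≤ J₂ + ENNReal.ofReal Ylo := by
          refine add_le_add hJ₂l (le_of_eq ?_)
          rw [hYlodef, ENNReal.ofReal_mul hclo]
      _ ≤ J + ENNReal.ofReal Ylo := add_le_add_left hJ₂J _
  have hTl : Wlo - Ylo ≤ J.toReal := by
    have h := ENNReal.toReal_mono (ENNReal.add_ne_top.2 ⟨hJfin, ENNReal.ofReal_ne_top⟩) hJl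
    rw [ENNReal.toReal_add hJfin ENNReal.ofReal_ne_top, ENNReal.toReal_ofReal hWlononneg,
      ENNReal.toReal_ofReal hYlononneg] at h
    linarith
  -- final computation
  have hmeasT : (μ {ω | X₁ ω * X₂ ω > z}).toReal = 2 * J.toReal := by
    rw [hsymz, ENNReal.toReal_mul]
    norm_num
  rw [Real.dist_eq, hmeasT]
  have key1 : z ^ α * L⁻¹ * (2 * J.toReal) ≤ 2*(c₁+ε)*(c₂+ε)*α + D₁ * L⁻¹ := by
    have h1 : z ^ α * L⁻¹ * (2 * J.toReal) ≤ z ^ α * L⁻¹ * (2 * V) :=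
      mul_le_mul_of_nonneg_left (by linarith only [hTu]) (mul_nonneg hzα.le hLinv0)
    have h2 : z ^ α * L⁻¹ * (2 * V) = z ^ α * z ^ (-α) * (2 * L⁻¹
        * ((c₁+ε)*M^α + ((c₁+ε) * ((c₂+ε) + α*(c₂+ε)*(L - llM)) + (c₂+ε)*M^α))) := by
      rw [hVdef]; ring
    rw [h2, hone, one_mul] at h1
    refine le_trans h1 ?_
    have h3 : 2 * L⁻¹ * ((c₁+ε)*M^α + ((c₁+ε) * ((c₂+ε) + α*(c₂+ε)*(L - llM)) + (c₂+ε)*M^α))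
        = 2*(c₁+ε)*(c₂+ε)*α * (L * L⁻¹) + D₁ * L⁻¹ - 2*α*(c₁+ε)*(c₂+ε)*(L⁻¹*llM) := by
      rw [hD₁def]; ring
    rw [h3, hLinv, mul_one]
    have h4 : 0 ≤ 2*α*(c₁+ε)*(c₂+ε)*(L⁻¹*llM) :=
      mul_nonneg (mul_nonneg (mul_nonneg (by linarith only [hα₀]) (by linarith only [hc₁, hε0]))
        (by linarith only [hc₂, hε0])) (mul_nonneg hLinv0 hloglogM0)
    linarith only [h4]
  have key2 : 2*(c₁-ε)*(c₂-ε)*α - D₂ * L⁻¹ ≤ z ^ α * L⁻¹ * (2 * J.toReal) := by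
    have h1 : z^α * L⁻¹ * (2*(Wlo - Ylo)) ≤ z^α * L⁻¹ * (2 * J.toReal) :=
      mul_le_mul_of_nonneg_left (by linarith only [hTl]) (mul_nonneg hzα.le hLinv0)
    refine le_trans (le_of_eq ?_) h1
    rw [hWlodef, hYlodef, hD₂def]
    have h2 : z ^ α * L⁻¹ * (2 * ((c₁-ε) * z^(-α) * (α*(c₂-ε)*(L-1-llM))
        - (c₁-ε) * z^(-α) * (c₂+ε)))
        = (z^α * z^(-α)) * (2*(c₁-ε))
          * (α*(c₂-ε)*((L*L⁻¹) - L⁻¹*(1+llM)) - (c₂+ε)*L⁻¹) := by ring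
    rw [h2, hone, hLinv]
    ring
  -- epsilon bookkeeping
  have hεb1 : 2*(c₁+ε)*(c₂+ε)*α - 2*c₁*c₂*α ≤ ε'/4 := by
    have h1 : ε*ε ≤ ε := by nlinarith only [hε0, hε1]
    have h3 : 2*α*(ε*c₂+ε*c₁+ε*ε) ≤ 2*α*(ε*(c₁+c₂+1)) :=
      mul_le_mul_of_nonneg_left (by linarith only [h1]) (by linarith only [hα₀])
    have h4 : 2*α*(ε*(c₁+c₂+1)) ≤ ε'/8 := by
      have h5 : 0 ≤ ε * (c₁+c₂+1) := mul_nonneg hε0.le (by linarith only [hc₁, hc₂])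
      linarith only [hεsmall, h5]
    linarith only [h3, h4, hε']
  have hεb2 : 2*c₁*c₂*α - 2*(c₁-ε)*(c₂-ε)*α ≤ ε'/4 := by
    have hεsq : 0 ≤ ε*ε := mul_nonneg hε0.le hε0.le
    have h3 : 2*α*(ε*c₂+ε*c₁-ε*ε) ≤ 2*α*(ε*(c₁+c₂+1)) :=
      mul_le_mul_of_nonneg_left (by linarith only [hεsq, hε0]) (by linarith only [hα₀])
    have h4 : 2*α*(ε*(c₁+c₂+1)) ≤ ε'/8 := by
      have h5 : 0 ≤ ε * (c₁+c₂+1) := mul_nonneg hε0.le (by linarith only [hc₁, hc₂])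
      linarith only [hεsmall, h5]
    linarith only [h3, h4, hε']
  have hDL : (D₁ + D₂) * L⁻¹ ≤ ε'/2 := by
    have hLge : (D₁+D₂+1)*(2/ε') ≤ L := by
      have h := hL_R
      rw [hRdef] at h
      linarith
    have h3 : 2*(D₁+D₂+1) ≤ ε' * L := by
      have h := mul_le_mul_of_nonneg_left hLge hε'.le
      have h4 : ε' * ((D₁+D₂+1)*(2/ε')) = 2*(D₁+D₂+1) := by
        field_simp
      linarith only [h, h4]
    rw [← div_eq_mul_inv, div_le_iff₀ hL0]
    linarith only [h3]
  rw [abs_sub_lt_iff]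
  have hDl1 : D₁ * L⁻¹ ≤ (D₁+D₂)*L⁻¹ := mul_le_mul_of_nonneg_right (by linarith) hLinv0
  have hDl2 : D₂ * L⁻¹ ≤ (D₁+D₂)*L⁻¹ := mul_le_mul_of_nonneg_right (by linarith) hLinv0
  constructor
  · linarith only [key1, hεb1, hDL, hDl1, hε']
  · linarith only [key2, hεb2, hDL, hDl2, hε']
end

section
/- Let X₁ and X₂ be independent real random variables, α₁ ∈ (0,2), k₁ ≥ 0, c₁⁺, c₁⁻ ≥ 0 with c₁⁺ + c₁⁻ > 0, and suppose lim_{z→∞} z^{α₁} (ln z)^{−k₁} P{±X₁ > z} = c₁^±. Suppose further there is α₂ > α₁ with limsup_{z→∞} z^{α₂} P{|X₂| > z} < ∞. Then lim_{z→∞} z^{α₁} (ln z)^{−k₁} P{X₁X₂ > z} = α₁ ∫₀^∞ x^{α₁−1} (c₁⁺ P{X₂ > x} + c₁⁻ P{−X₂ > x}) dx, and the integral on the right converges. -/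
open MeasureTheory ProbabilityTheory Filter Real Set

lemma rv_limit {α k c : ℝ} {p : ℝ → ℝ}
    (hp : Tendsto (fun t => t ^ α * (Real.log t) ^ (-k) * p t) atTop (nhds c))
    {w : ℝ} (hw : 0 < w) :
    Tendsto (fun z => z ^ α * (Real.log z) ^ (-k) * p (z / w)) atTop
      (nhds (c * w ^ α)) := by
  have h1 : Tendsto (fun z => (z / w) ^ α * (Real.log (z / w)) ^ (-k) * p (z / w)) atTop
      (nhds c) := hp.comp (tendsto_id.atTop_div_const hw)
  have hratio : Tendsto (fun z : ℝ => Real.log (z / w) / Real.log z) atTop (nhds 1) := by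
    have h0 : Tendsto (fun z : ℝ => Real.log w / Real.log z) atTop (nhds 0) :=
      Tendsto.div_atTop tendsto_const_nhds Real.tendsto_log_atTop
    have : Tendsto (fun z : ℝ => 1 - Real.log w / Real.log z) atTop (nhds (1 - 0)) :=
      tendsto_const_nhds.sub h0
    rw [sub_zero] at this
    refine this.congr' ?_
    filter_upwards [eventually_gt_atTop (max 1 w)] with z hz
    have hz1 : (1:ℝ) < z := lt_of_le_of_lt (le_max_left _ _) hz
    have hzw : w < z := lt_of_le_of_lt (le_max_right _ _) hz
    have hlz : Real.log z ≠ 0 := (Real.log_pos hz1).ne'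
    rw [Real.log_div (by positivity) hw.ne', sub_div, div_self hlz]
  have h2 : Tendsto (fun z : ℝ => w ^ α * (Real.log (z / w) / Real.log z) ^ k) atTop
      (nhds (w ^ α)) := by
    have hc : ContinuousAt (fun t : ℝ => t ^ k) 1 :=
      Real.continuousAt_rpow_const 1 k (Or.inl one_ne_zero)
    have := (hc.tendsto.comp hratio)
    simp only [Function.comp, Real.one_rpow] at this
    simpa using tendsto_const_nhds.mul this
  have h3 := h2.mul h1
  rw [mul_comm c (w ^ α)] at *
  refine h3.congr' ?_
  filter_upwards [eventually_gt_atTop (max 1 w)] with z hz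
  have hz1 : (1:ℝ) < z := lt_of_le_of_lt (le_max_left _ _) hz
  have hzw : w < z := lt_of_le_of_lt (le_max_right _ _) hz
  have hz0 : (0:ℝ) < z := lt_trans one_pos hz1
  have hq : (1:ℝ) < z / w := (one_lt_div hw).mpr hzw
  have hlz : (0:ℝ) < Real.log z := Real.log_pos hz1
  have hlq : (0:ℝ) < Real.log (z / w) := Real.log_pos hq
  have e1 : ((z / w) : ℝ) ^ α = z ^ α / w ^ α := Real.div_rpow hz0.le hw.le α
  have e2 : (Real.log (z / w) / Real.log z) ^ k = Real.log (z / w) ^ k / Real.log z ^ k :=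
    Real.div_rpow hlq.le hlz.le k
  have e3 : (Real.log (z / w)) ^ (-k) = (Real.log (z / w) ^ k)⁻¹ := Real.rpow_neg hlq.le k
  have e4 : (Real.log z) ^ (-k) = (Real.log z ^ k)⁻¹ := Real.rpow_neg hlz.le k
  have hne1 : Real.log (z / w) ^ k ≠ 0 := (Real.rpow_pos_of_pos hlq k).ne'
  have hne2 : Real.log z ^ k ≠ 0 := (Real.rpow_pos_of_pos hlz k).ne'
  have hne3 : w ^ α ≠ 0 := (Real.rpow_pos_of_pos hw α).ne'
  rw [e1, e2, e3, e4]
  field_simp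

lemma aux_small {α k : ℝ} (hα : 0 < α) (hk : 0 ≤ k) :
    ∃ D : ℝ, 1 ≤ D ∧ ∀ x : ℝ, 0 < x → x ≤ 1 → x ^ α * (1 + Real.log (1 / x)) ^ k ≤ D := by
  set ε : ℝ := α / (2 * (k + 1)) with hε
  have hεpos : 0 < ε := by positivity
  refine ⟨max 1 ((1 + 1 / ε) ^ k), le_max_left _ _, fun x hx hx1 => ?_⟩
  have hinv : (1:ℝ) ≤ 1 / x := by rw [le_div_iff₀ hx]; linarith
  have hlog : Real.log (1 / x) ≤ (1 / x) ^ ε / ε := by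
    have h1 : Real.log ((1 / x) ^ ε) ≤ (1 / x) ^ ε - 1 :=
      Real.log_le_sub_one_of_pos (Real.rpow_pos_of_pos (by positivity) ε)
    rw [Real.log_rpow (by positivity)] at h1
    have : ε * Real.log (1 / x) ≤ (1 / x) ^ ε := by linarith
    rw [le_div_iff₀ hεpos]
    linarith [this]
  have hone_le : (1:ℝ) ≤ (1 / x) ^ ε := Real.one_le_rpow hinv hεpos.le
  have hsum : 1 + Real.log (1 / x) ≤ (1 + 1 / ε) * (1 / x) ^ ε := by
    have : (1:ℝ) + 1/ε > 0 := by positivity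
    calc 1 + Real.log (1 / x) ≤ (1/x)^ε + (1/x)^ε / ε := by
          gcongr
        _ = (1 + 1/ε) * (1/x)^ε := by ring
  have hnn : (0:ℝ) ≤ 1 + Real.log (1 / x) := by
    have : (0:ℝ) ≤ Real.log (1 / x) := Real.log_nonneg hinv
    linarith
  have hpow : (1 + Real.log (1 / x)) ^ k ≤ ((1 + 1 / ε) * (1 / x) ^ ε) ^ k :=
    Real.rpow_le_rpow hnn hsum hk
  have hmul : ((1 + 1 / ε) * (1 / x) ^ ε) ^ k = (1 + 1 / ε) ^ k * ((1 / x) ^ ε) ^ k :=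
    Real.mul_rpow (by positivity) (by positivity)
  have hexp : ((1 / x) ^ ε) ^ k = x ^ (-(ε * k)) := by
    rw [one_div, Real.inv_rpow hx.le, ← Real.rpow_neg hx.le, ← Real.rpow_mul hx.le, neg_mul]
  have hcomb : x ^ α * x ^ (-(ε * k)) = x ^ (α - ε * k) := by
    rw [← Real.rpow_add hx]; ring_nf
  have hεk : ε * k ≤ α / 2 := by
    rw [hε, div_mul_eq_mul_div, div_le_div_iff₀ (by positivity) (by norm_num : (0:ℝ) < 2)]
    nlinarith
  have hle1 : x ^ (α - ε * k) ≤ 1 :=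
    Real.rpow_le_one hx.le hx1 (by linarith)
  calc x ^ α * (1 + Real.log (1 / x)) ^ k
      ≤ x ^ α * ((1 + 1 / ε) ^ k * x ^ (-(ε * k))) := by
        rw [hmul, hexp] at hpow
        exact mul_le_mul_of_nonneg_left hpow (Real.rpow_nonneg hx.le α)
    _ = (1 + 1 / ε) ^ k * (x ^ α * x ^ (-(ε * k))) := by ring
    _ = (1 + 1 / ε) ^ k * x ^ (α - ε * k) := by rw [hcomb]
    _ ≤ (1 + 1 / ε) ^ k * 1 := by
        exact mul_le_mul_of_nonneg_left hle1 (Real.rpow_nonneg (by positivity) k)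
    _ = (1 + 1 / ε) ^ k := mul_one _
    _ ≤ max 1 ((1 + 1 / ε) ^ k) := le_max_right _ _

lemma aux_dom {α k β : ℝ} (hα : 0 < α) (hk : 0 ≤ k) (hβ : α < β) {M : ℝ → ℝ}
    (hM0 : ∀ t, 0 ≤ M t) (hM1 : ∀ t, M t ≤ 1) {C z₀ : ℝ} (hC : 0 ≤ C)
    (hz₀ : Real.exp 1 ≤ z₀)
    (hMb : ∀ t, z₀ ≤ t → M t ≤ C * t ^ (-α) * Real.log t ^ k) :
    ∃ K : ℝ, 0 ≤ K ∧ ∀ᶠ z in atTop, ∀ x : ℝ, x ≠ 0 →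
      z ^ α * Real.log z ^ (-k) * M (z / |x|) ≤ K * (1 + |x| ^ β) := by
  obtain ⟨D, hD1, hD⟩ := aux_small hα hk
  have hβ0 : 0 < β := lt_trans hα hβ
  have hθ : 0 < 1 - α / β := by
    have : α / β < 1 := (div_lt_one hβ0).mpr hβ
    linarith
  refine ⟨C * D + 1, by positivity, ?_⟩
  have hev : ∀ᶠ z : ℝ in atTop, z ^ (1 - α / β) ≥ z₀ :=
    (tendsto_rpow_atTop hθ).eventually_ge_atTop z₀
  filter_upwards [hev, eventually_ge_atTop (Real.exp 1)] with z hz1 hz2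
  intro x hx
  set a := |x| with ha
  have ha0 : 0 < a := abs_pos.mpr hx
  have hz0 : (0:ℝ) < z := lt_of_lt_of_le (Real.exp_pos 1) hz2
  have hlz1 : (1:ℝ) ≤ Real.log z := by
    rw [Real.le_log_iff_exp_le hz0]; exact hz2
  have hlz0 : (0:ℝ) < Real.log z := lt_of_lt_of_le one_pos hlz1
  have habound : 1 + a ^ β ≥ 1 := by
    have : (0:ℝ) ≤ a ^ β := Real.rpow_nonneg ha0.le β
    linarith
  by_cases hcase : a ≤ z ^ (α / β)
  · -- case A : the tail bound applies at t = z/a ≥ z₀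
    set t := z / a with ht
    have ht0 : 0 < t := div_pos hz0 ha0
    have htge : z₀ ≤ t := by
      have h1 : z ^ (1 - α / β) = z / z ^ (α / β) := by
        rw [Real.rpow_sub hz0, Real.rpow_one]
      have h2 : z / z ^ (α / β) ≤ z / a := by gcongr
      calc z₀ ≤ z ^ (1 - α / β) := hz1
        _ = z / z ^ (α / β) := h1
        _ ≤ z / a := h2
    have hlt1 : (1:ℝ) ≤ Real.log t := by
      rw [Real.le_log_iff_exp_le ht0]; exact le_trans hz₀ htge
    have hlt0 : (0:ℝ) < Real.log t := lt_of_lt_of_le one_pos hlt1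
    have hMt : M t ≤ C * t ^ (-α) * Real.log t ^ k := hMb t htge
    have hfac0 : (0:ℝ) ≤ z ^ α * Real.log z ^ (-k) := by positivity
    have step1 : z ^ α * Real.log z ^ (-k) * M t ≤
        z ^ α * Real.log z ^ (-k) * (C * t ^ (-α) * Real.log t ^ k) :=
      mul_le_mul_of_nonneg_left hMt hfac0
    have hta : t ^ (-α) = a ^ α / z ^ α := by
      rw [ht, Real.rpow_neg (div_pos hz0 ha0).le, Real.div_rpow hz0.le ha0.le α,
        inv_div]
    have hzαne : z ^ α ≠ 0 := (Real.rpow_pos_of_pos hz0 α).ne'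
    have step2 : z ^ α * Real.log z ^ (-k) * (C * t ^ (-α) * Real.log t ^ k)
        = C * a ^ α * (Real.log z ^ (-k) * Real.log t ^ k) := by
      rw [hta]; field_simp
    by_cases hone : 1 ≤ a
    · -- |x| ≥ 1 : log t ≤ log z
      have htlez : t ≤ z := by
        rw [ht, div_le_iff₀ ha0]
        nlinarith
      have hlog_le : Real.log t ≤ Real.log z := Real.log_le_log ht0 htlez
      have hpow_le : Real.log t ^ k ≤ Real.log z ^ k :=
        Real.rpow_le_rpow hlt0.le hlog_le hk
      have hcancel : Real.log z ^ (-k) * Real.log z ^ k = 1 := by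
        rw [← Real.rpow_add hlz0, neg_add_cancel, Real.rpow_zero]
      have : Real.log z ^ (-k) * Real.log t ^ k ≤ 1 := by
        calc Real.log z ^ (-k) * Real.log t ^ k ≤ Real.log z ^ (-k) * Real.log z ^ k := by
              exact mul_le_mul_of_nonneg_left hpow_le (by positivity)
          _ = 1 := hcancel
      have haαβ : a ^ α ≤ a ^ β := Real.rpow_le_rpow_of_exponent_le hone hβ.le
      calc z ^ α * Real.log z ^ (-k) * M t
          ≤ C * a ^ α * (Real.log z ^ (-k) * Real.log t ^ k) := by rw [← step2]; exact step1
        _ ≤ C * a ^ α * 1 := by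
            exact mul_le_mul_of_nonneg_left this (by positivity)
        _ = C * a ^ α := mul_one _
        _ ≤ C * a ^ β := mul_le_mul_of_nonneg_left haαβ hC
        _ ≤ (C * D + 1) * (1 + a ^ β) := by
            have h0 : (0:ℝ) ≤ a ^ β := Real.rpow_nonneg ha0.le β
            have hC1 : C * 1 ≤ C * D := mul_le_mul_of_nonneg_left hD1 hC
            calc C * a ^ β ≤ (C * D + 1) * a ^ β :=
                  mul_le_mul_of_nonneg_right (by linarith) h0
              _ ≤ (C * D + 1) * (1 + a ^ β) :=
                  mul_le_mul_of_nonneg_left (by linarith) (by linarith)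
    · -- |x| < 1
      push_neg at hone
      have hla : (0:ℝ) ≤ Real.log (1 / a) := Real.log_nonneg (by rw [le_div_iff₀ ha0]; linarith)
      have hlogt : Real.log t = Real.log z + Real.log (1 / a) := by
        rw [ht, Real.log_div hz0.ne' ha0.ne', Real.log_div one_ne_zero ha0.ne', Real.log_one]
        ring
      have hlog_le : Real.log t ≤ Real.log z * (1 + Real.log (1 / a)) := by
        have hh : (0:ℝ) ≤ (Real.log z - 1) * Real.log (1 / a) :=
          mul_nonneg (by linarith) hla
        rw [hlogt]; nlinarith [hh]
      have hpow_le : Real.log t ^ k ≤ Real.log z ^ k * (1 + Real.log (1 / a)) ^ k := by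
        calc Real.log t ^ k ≤ (Real.log z * (1 + Real.log (1 / a))) ^ k :=
              Real.rpow_le_rpow hlt0.le hlog_le hk
          _ = Real.log z ^ k * (1 + Real.log (1 / a)) ^ k :=
              Real.mul_rpow hlz0.le (by linarith)
      have hcancel : Real.log z ^ (-k) * Real.log z ^ k = 1 := by
        rw [← Real.rpow_add hlz0, neg_add_cancel, Real.rpow_zero]
      have hmain : Real.log z ^ (-k) * Real.log t ^ k ≤ (1 + Real.log (1 / a)) ^ k := by
        calc Real.log z ^ (-k) * Real.log t ^ k
            ≤ Real.log z ^ (-k) * (Real.log z ^ k * (1 + Real.log (1 / a)) ^ k) :=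
              mul_le_mul_of_nonneg_left hpow_le (by positivity)
          _ = (Real.log z ^ (-k) * Real.log z ^ k) * (1 + Real.log (1 / a)) ^ k := by ring
          _ = (1 + Real.log (1 / a)) ^ k := by rw [hcancel, one_mul]
      have hsmall := hD a ha0 hone.le
      calc z ^ α * Real.log z ^ (-k) * M t
          ≤ C * a ^ α * (Real.log z ^ (-k) * Real.log t ^ k) := by rw [← step2]; exact step1
        _ ≤ C * a ^ α * (1 + Real.log (1 / a)) ^ k := by
            exact mul_le_mul_of_nonneg_left hmain (by positivity)
        _ = C * (a ^ α * (1 + Real.log (1 / a)) ^ k) := by ring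
        _ ≤ C * D := mul_le_mul_of_nonneg_left hsmall hC
        _ ≤ (C * D + 1) * (1 + a ^ β) := by
            have h0 : (0:ℝ) ≤ a ^ β := Real.rpow_nonneg ha0.le β
            have h1 : (0:ℝ) ≤ C * D := mul_nonneg hC (le_trans zero_le_one hD1)
            calc C * D ≤ (C * D + 1) * 1 := by linarith
              _ ≤ (C * D + 1) * (1 + a ^ β) :=
                  mul_le_mul_of_nonneg_left (by linarith) (by linarith)
  · -- case B : trivial bound
    push_neg at hcase
    have hzab : z ^ α ≤ a ^ β := by
      have h1 : (z ^ (α / β)) ^ β ≤ a ^ β :=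
        Real.rpow_le_rpow (Real.rpow_nonneg hz0.le _) hcase.le hβ0.le
      rwa [← Real.rpow_mul hz0.le, div_mul_cancel₀ α hβ0.ne'] at h1
    have hlogle : Real.log z ^ (-k) ≤ 1 :=
      Real.rpow_le_one_of_one_le_of_nonpos hlz1 (neg_nonpos.mpr hk)
    calc z ^ α * Real.log z ^ (-k) * M (z / a)
        ≤ z ^ α * 1 * 1 := by
          apply mul_le_mul
          · exact mul_le_mul_of_nonneg_left hlogle (Real.rpow_nonneg hz0.le α)
          · exact hM1 _
          · exact hM0 _
          · positivity
      _ = z ^ α := by ring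
      _ ≤ a ^ β := hzab
      _ ≤ (C * D + 1) * (1 + a ^ β) := by
          have h0 : (0:ℝ) ≤ a ^ β := Real.rpow_nonneg ha0.le β
          have h1 : (0:ℝ) ≤ C * D := mul_nonneg hC (le_trans zero_le_one hD1)
          calc a ^ β ≤ (1 + a ^ β) := by linarith
            _ = 1 * (1 + a ^ β) := (one_mul _).symm
            _ ≤ (C * D + 1) * (1 + a ^ β) :=
                  mul_le_mul_of_nonneg_right (by linarith) (by linarith)

lemma prob_toReal_le_one {Ω : Type*} [MeasurableSpace Ω] (μ : Measure Ω)
    [IsProbabilityMeasure μ] (s : Set Ω) : (μ s).toReal ≤ 1 := by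
  calc (μ s).toReal ≤ (1:ENNReal).toReal := ENNReal.toReal_mono (by simp) prob_le_one
    _ = 1 := by simp

lemma aux_moment {Ω : Type*} [MeasurableSpace Ω] (μ : Measure Ω) [IsProbabilityMeasure μ]
    {Y : Ω → ℝ} (hY : Measurable Y) {β α₂ C₂ t₂ : ℝ} (hβ : 0 < β) (hβα : β < α₂)
    (ht₂ : 1 ≤ t₂) (hC₂ : 0 ≤ C₂)
    (htail : ∀ t, t₂ ≤ t → (μ {ω | |Y ω| > t}).toReal ≤ C₂ * t ^ (-α₂)) :
    Integrable (fun ω => |Y ω| ^ β) μ := by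
  have hmeas : Measurable fun ω => |Y ω| ^ β := by fun_prop
  have hnn : ∀ᵐ ω ∂μ, (0:ℝ) ≤ |Y ω| ^ β :=
    Filter.Eventually.of_forall fun ω => Real.rpow_nonneg (abs_nonneg _) β
  refine ⟨hmeas.aestronglyMeasurable, ?_⟩
  rw [hasFiniteIntegral_iff_ofReal hnn]
  rw [lintegral_eq_lintegral_meas_lt μ hnn hmeas.aemeasurable]
  set T : ℝ := t₂ ^ β with hT
  have hT1 : (1:ℝ) ≤ T := Real.one_le_rpow ht₂ hβ.le
  have hT0 : (0:ℝ) < T := lt_of_lt_of_le one_pos hT1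
  rw [← Set.Ioc_union_Ioi_eq_Ioi hT0.le,
    lintegral_union measurableSet_Ioi (Set.Ioc_disjoint_Ioi le_rfl)]
  have h1 : ∫⁻ t in Set.Ioc (0:ℝ) T, μ {a | t < |Y a| ^ β} < ⊤ := by
    calc ∫⁻ t in Set.Ioc (0:ℝ) T, μ {a | t < |Y a| ^ β}
        ≤ ∫⁻ _t in Set.Ioc (0:ℝ) T, 1 := lintegral_mono fun t => prob_le_one
      _ = volume (Set.Ioc (0:ℝ) T) := by rw [lintegral_one, Measure.restrict_apply_univ]
      _ < ⊤ := by rw [Real.volume_Ioc]; exact ENNReal.ofReal_lt_top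
  have h2 : ∫⁻ t in Set.Ioi T, μ {a | t < |Y a| ^ β} < ⊤ := by
    have hbd : ∀ t ∈ Set.Ioi T, μ {a | t < |Y a| ^ β} ≤
        ENNReal.ofReal (C₂ * t ^ (-(α₂/β))) := by
      intro t ht
      have ht0 : (0:ℝ) < t := lt_trans hT0 ht
      have hroot : t₂ ≤ t ^ (1/β) := by
        have := Real.rpow_le_rpow hT0.le (le_of_lt ht) (by positivity : (0:ℝ) ≤ 1/β)
        rwa [hT, ← Real.rpow_mul (by linarith : (0:ℝ) ≤ t₂), mul_one_div_cancel hβ.ne',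
          Real.rpow_one] at this
      have hsub : {a | t < |Y a| ^ β} ⊆ {ω | |Y ω| > t ^ (1/β)} := by
        intro a hat
        simp only [Set.mem_setOf_eq] at *
        have h' := Real.rpow_lt_rpow ht0.le hat (by positivity : (0:ℝ) < 1/β)
        rwa [← Real.rpow_mul (abs_nonneg _), mul_one_div_cancel hβ.ne',
          Real.rpow_one] at h'
      have hmm : μ {a | t < |Y a| ^ β} ≤ μ {ω | |Y ω| > t ^ (1/β)} := measure_mono hsub
      have heq : μ {ω | |Y ω| > t ^ (1/β)} =
          ENNReal.ofReal ((μ {ω | |Y ω| > t ^ (1/β)}).toReal) :=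
        (ENNReal.ofReal_toReal (measure_ne_top μ _)).symm
      have hle := htail _ hroot
      have hpoweq : (t ^ (1/β)) ^ (-α₂) = t ^ (-(α₂/β)) := by
        rw [← Real.rpow_mul ht0.le]
        congr 1; ring
      rw [hpoweq] at hle
      calc μ {a | t < |Y a| ^ β} ≤ μ {ω | |Y ω| > t ^ (1/β)} := hmm
        _ = ENNReal.ofReal ((μ {ω | |Y ω| > t ^ (1/β)}).toReal) := heq
        _ ≤ ENNReal.ofReal (C₂ * t ^ (-(α₂/β))) := ENNReal.ofReal_le_ofReal hle
    have hintble : IntegrableOn (fun t : ℝ => C₂ * t ^ (-(α₂/β))) (Set.Ioi T) := by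
      refine Integrable.const_mul ?_ C₂
      refine integrableOn_Ioi_rpow_of_lt ?_ hT0
      rw [neg_lt_neg_iff, lt_div_iff₀ hβ]
      linarith
    calc ∫⁻ t in Set.Ioi T, μ {a | t < |Y a| ^ β}
        ≤ ∫⁻ t in Set.Ioi T, ENNReal.ofReal (C₂ * t ^ (-(α₂/β))) := by
          refine setLIntegral_mono ?_ hbd
          fun_prop
      _ < ⊤ := hintble.lintegral_lt_top
  exact ENNReal.add_lt_top.mpr ⟨h1, h2⟩

lemma aux_layer {Ω : Type*} [MeasurableSpace Ω] (μ : Measure Ω) [IsProbabilityMeasure μ]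
    {Y : Ω → ℝ} (hY : Measurable Y) {α α₂ C₂ t₂ : ℝ} (hα : 0 < α) (hαα₂ : α < α₂)
    (ht₂ : 1 ≤ t₂) (hC₂ : 0 ≤ C₂)
    (htail : ∀ t, t₂ ≤ t → (μ {ω | |Y ω| > t}).toReal ≤ C₂ * t ^ (-α₂))
    (hint : Integrable (fun ω => max (Y ω) 0 ^ α) μ) :
    IntegrableOn (fun x => x ^ (α - 1) * (μ {ω | Y ω > x}).toReal) (Set.Ioi 0) ∧
    ∫ ω, max (Y ω) 0 ^ α ∂μ =
      α * ∫ x in Set.Ioi (0:ℝ), x ^ (α - 1) * (μ {ω | Y ω > x}).toReal := by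
  set p : ℝ → ℝ := fun x => (μ {ω | Y ω > x}).toReal with hp
  have hp_anti : Antitone p := by
    intro x y hxy
    exact ENNReal.toReal_mono (measure_ne_top μ _)
      (measure_mono fun ω h => lt_of_le_of_lt hxy h)
  have hp_meas : Measurable p := hp_anti.measurable
  have hp0 : ∀ x, 0 ≤ p x := fun x => ENNReal.toReal_nonneg
  have hp1 : ∀ x, p x ≤ 1 := fun x => prob_toReal_le_one μ _
  have hf_meas : Measurable fun x : ℝ => x ^ (α - 1) * p x := by
    apply Measurable.mul ?_ hp_meas
    fun_prop
  have ht₂0 : (0:ℝ) < t₂ := lt_of_lt_of_le one_pos ht₂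
  -- Integrability on (0, t₂]
  have hA : IntegrableOn (fun x => x ^ (α - 1) * p x) (Set.Ioc 0 t₂) := by
    have hbase : IntegrableOn (fun x : ℝ => x ^ (α - 1)) (Set.Ioc 0 t₂) := by
      rw [← intervalIntegrable_iff_integrableOn_Ioc_of_le ht₂0.le]
      exact intervalIntegral.intervalIntegrable_rpow' (by linarith)
    refine hbase.integrable.mono hf_meas.aestronglyMeasurable ?_
    refine Filter.Eventually.of_forall fun x => ?_
    rw [norm_mul, Real.norm_eq_abs, Real.norm_eq_abs]
    calc |x ^ (α-1)| * |p x| ≤ |x ^ (α-1)| * 1 := by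
          refine mul_le_mul_of_nonneg_left ?_ (abs_nonneg _)
          rw [abs_of_nonneg (hp0 x)]; exact hp1 x
      _ = |x ^ (α-1)| := mul_one _
  -- Integrability on (t₂, ∞)
  have hB : IntegrableOn (fun x => x ^ (α - 1) * p x) (Set.Ioi t₂) := by
    have hbase : IntegrableOn (fun x : ℝ => C₂ * x ^ (α - 1 - α₂)) (Set.Ioi t₂) :=
      Integrable.const_mul (integrableOn_Ioi_rpow_of_lt (by linarith) ht₂0) C₂
    refine hbase.integrable.mono hf_meas.aestronglyMeasurable ?_
    rw [ae_restrict_iff' measurableSet_Ioi]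
    refine Filter.Eventually.of_forall fun x hx => ?_
    have hx0 : (0:ℝ) < x := lt_trans ht₂0 hx
    have hpx : p x ≤ C₂ * x ^ (-α₂) := by
      have hsub : {ω | Y ω > x} ⊆ {ω | |Y ω| > x} := by
        intro ω h
        simp only [Set.mem_setOf_eq] at *
        exact lt_of_lt_of_le h (le_abs_self _)
      calc p x ≤ (μ {ω | |Y ω| > x}).toReal :=
            ENNReal.toReal_mono (measure_ne_top μ _) (measure_mono hsub)
        _ ≤ C₂ * x ^ (-α₂) := htail x (le_of_lt hx)
    rw [Real.norm_eq_abs, Real.norm_eq_abs, abs_of_nonneg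
      (mul_nonneg (Real.rpow_nonneg hx0.le _) (hp0 x)), abs_of_nonneg
      (mul_nonneg hC₂ (Real.rpow_nonneg hx0.le _))]
    calc x ^ (α-1) * p x ≤ x ^ (α-1) * (C₂ * x ^ (-α₂)) :=
          mul_le_mul_of_nonneg_left hpx (Real.rpow_nonneg hx0.le _)
      _ = C₂ * (x ^ (α-1) * x ^ (-α₂)) := by ring
      _ = C₂ * x ^ (α - 1 - α₂) := by rw [← Real.rpow_add hx0]; ring_nf
  have hIntOn : IntegrableOn (fun x => x ^ (α - 1) * p x) (Set.Ioi 0) := by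
    rw [← Set.Ioc_union_Ioi_eq_Ioi ht₂0.le]
    exact hA.union hB
  refine ⟨hIntOn, ?_⟩
  -- the layer cake + substitution
  have hnn : ∀ᵐ ω ∂μ, (0:ℝ) ≤ max (Y ω) 0 ^ α :=
    Filter.Eventually.of_forall fun ω => Real.rpow_nonneg (le_max_right _ _) _
  have key := hint.integral_eq_integral_meas_lt hnn
  set G : ℝ → ℝ := fun t => (μ {a | t < max (Y a) 0 ^ α}).toReal with hG
  have hsubst := integral_comp_rpow_Ioi_of_pos (g := G) hα
  have hGeq : ∀ x ∈ Set.Ioi (0:ℝ), (α * x ^ (α - 1)) • G (x ^ α)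
      = α * (x ^ (α - 1) * p x) := by
    intro x hx
    have hx0 : (0:ℝ) < x := hx
    have hset : {a | x ^ α < max (Y a) 0 ^ α} = {ω | Y ω > x} := by
      ext a
      simp only [Set.mem_setOf_eq]
      constructor
      · intro h
        by_contra hcon
        push_neg at hcon
        have hm : max (Y a) 0 ≤ x := max_le hcon hx0.le
        have := Real.rpow_le_rpow (le_max_right _ _) hm hα.le
        linarith
      · intro h
        exact Real.rpow_lt_rpow hx0.le (lt_of_lt_of_le h (le_max_left _ _)) hα
    rw [hG]
    simp only [smul_eq_mul]
    rw [hset]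
    ring
  calc ∫ ω, max (Y ω) 0 ^ α ∂μ = ∫ t in Set.Ioi (0:ℝ), G t := key
    _ = ∫ x in Set.Ioi (0:ℝ), (α * x ^ (α - 1)) • G (x ^ α) := hsubst.symm
    _ = ∫ x in Set.Ioi (0:ℝ), α * (x ^ (α - 1) * p x) :=
        setIntegral_congr_fun measurableSet_Ioi hGeq
    _ = α * ∫ x in Set.Ioi (0:ℝ), x ^ (α - 1) * p x := MeasureTheory.integral_const_mul α _

lemma aux_invert {a k c q t : ℝ} (ht : Real.exp 1 ≤ t)
    (h : t ^ a * Real.log t ^ (-k) * q ≤ c) (hq : 0 ≤ q) :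
    q ≤ c * t ^ (-a) * Real.log t ^ k := by
  have ht0 : (0:ℝ) < t := lt_of_lt_of_le (Real.exp_pos 1) ht
  have hlt : (1:ℝ) ≤ Real.log t := by rw [Real.le_log_iff_exp_le ht0]; exact ht
  have hlt0 : (0:ℝ) < Real.log t := lt_of_lt_of_le one_pos hlt
  have hu0 : (0:ℝ) < t ^ a * Real.log t ^ (-k) := by positivity
  have h2 : q ≤ c / (t ^ a * Real.log t ^ (-k)) := by
    rw [le_div_iff₀ hu0]; nlinarith [h]
  have h3 : c / (t ^ a * Real.log t ^ (-k)) = c * t ^ (-a) * Real.log t ^ k := by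
    have e1 : Real.log t ^ (-k) = (Real.log t ^ k)⁻¹ := Real.rpow_neg hlt0.le k
    have e2 : t ^ (-a) = (t ^ a)⁻¹ := Real.rpow_neg ht0.le a
    have n1 : t ^ a ≠ 0 := (Real.rpow_pos_of_pos ht0 a).ne'
    have n2 : Real.log t ^ k ≠ 0 := (Real.rpow_pos_of_pos hlt0 k).ne'
    rw [e1, e2]
    field_simp
  linarith [h2, h3.le, h3.ge]

lemma aux_rpow_bound {m A a b : ℝ} (hm : 0 ≤ m) (hmA : m ≤ A) (ha : 0 < a) (hab : a ≤ b) :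
    m ^ a ≤ 1 + A ^ b := by
  have hA0 : 0 ≤ A := le_trans hm hmA
  have hAb : (0:ℝ) ≤ A ^ b := Real.rpow_nonneg hA0 b
  by_cases h1 : m ≤ 1
  · have : m ^ a ≤ 1 := Real.rpow_le_one hm h1 ha.le
    linarith
  · push_neg at h1
    have h2 : m ^ a ≤ m ^ b := Real.rpow_le_rpow_of_exponent_le h1.le hab
    have h3 : m ^ b ≤ A ^ b := Real.rpow_le_rpow hm hmA (by linarith)
    linarith

theorem tail_product_different_indices
    {Ω : Type*} [MeasurableSpace Ω] (μ : Measure Ω) [IsProbabilityMeasure μ]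
    (X₁ X₂ : Ω → ℝ) (hm₁ : Measurable X₁) (hm₂ : Measurable X₂)
    (hind : IndepFun X₁ X₂ μ)
    (α₁ k₁ c₁p c₁m α₂ : ℝ) (hα₁ : 0 < α₁) (hα₁' : α₁ < 2) (hk₁ : 0 ≤ k₁)
    (hc₁p : 0 ≤ c₁p) (hc₁m : 0 ≤ c₁m) (hc : 0 < c₁p + c₁m) (hα₂ : α₁ < α₂)
    (h₁p : Tendsto (fun z : ℝ => z ^ α₁ * (Real.log z) ^ (-k₁) *
      (μ {ω | X₁ ω > z}).toReal) atTop (nhds c₁p))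
    (h₁m : Tendsto (fun z : ℝ => z ^ α₁ * (Real.log z) ^ (-k₁) *
      (μ {ω | -X₁ ω > z}).toReal) atTop (nhds c₁m))
    (h₂ : IsBoundedUnder (· ≤ ·) atTop
      (fun z : ℝ => z ^ α₂ * (μ {ω | |X₂ ω| > z}).toReal)) :
    IntegrableOn (fun x : ℝ => x ^ (α₁ - 1) *
        (c₁p * (μ {ω | X₂ ω > x}).toReal + c₁m * (μ {ω | -X₂ ω > x}).toReal))
      (Set.Ioi 0) ∧
    Tendsto (fun z : ℝ => z ^ α₁ * (Real.log z) ^ (-k₁) *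
        (μ {ω | X₁ ω * X₂ ω > z}).toReal) atTop
      (nhds (α₁ * ∫ x in Set.Ioi (0:ℝ), x ^ (α₁ - 1) *
        (c₁p * (μ {ω | X₂ ω > x}).toReal + c₁m * (μ {ω | -X₂ ω > x}).toReal))) := by
  -- basic setup
  set lam : Measure ℝ := μ.map X₁ with hlam
  set ν : Measure ℝ := μ.map X₂ with hν
  haveI : IsProbabilityMeasure lam := Measure.isProbabilityMeasure_map hm₁.aemeasurable
  haveI : IsProbabilityMeasure ν := Measure.isProbabilityMeasure_map hm₂.aemeasurable
  -- tail bound for X₂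
  obtain ⟨C₂, t₂, hC₂0, ht₂1, htail₂⟩ :
      ∃ C₂ t₂ : ℝ, 0 ≤ C₂ ∧ 1 ≤ t₂ ∧
        ∀ t, t₂ ≤ t → (μ {ω | |X₂ ω| > t}).toReal ≤ C₂ * t ^ (-α₂) := by
    obtain ⟨b, hb⟩ := h₂
    rw [Filter.eventually_map] at hb
    obtain ⟨t₀, ht₀⟩ := Filter.eventually_atTop.mp hb
    refine ⟨max b 0, max t₀ 1, le_max_right _ _, le_max_right _ _, fun t ht => ?_⟩
    have ht1 : (1:ℝ) ≤ t := le_trans (le_max_right _ _) ht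
    have ht0 : (0:ℝ) < t := lt_of_lt_of_le one_pos ht1
    have h1 := ht₀ t (le_trans (le_max_left _ _) ht)
    have h2 : (0:ℝ) < t ^ α₂ := Real.rpow_pos_of_pos ht0 _
    have h3 : (μ {ω | |X₂ ω| > t}).toReal ≤ b / t ^ α₂ := by
      rw [le_div_iff₀ h2]; nlinarith [h1]
    have h4 : b / t ^ α₂ ≤ max b 0 * t ^ (-α₂) := by
      rw [Real.rpow_neg ht0.le, div_eq_mul_inv]
      exact mul_le_mul_of_nonneg_right (le_max_left _ _) (by positivity)
    linarith
  -- choose intermediate exponent β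
  set β : ℝ := (α₁ + α₂) / 2 with hβ
  have hβ1 : α₁ < β := by rw [hβ]; linarith
  have hβ2 : β < α₂ := by rw [hβ]; linarith
  have hβ0 : 0 < β := lt_trans hα₁ hβ1
  -- moment of X₂
  have hmom : Integrable (fun ω => |X₂ ω| ^ β) μ :=
    aux_moment μ hm₂ hβ0 hβ2 ht₂1 hC₂0 htail₂
  -- tail bound for X₁
  have hMdef : ∀ t : ℝ, (0:ℝ) ≤ (μ {ω | |X₁ ω| > t}).toReal := fun t => ENNReal.toReal_nonneg
  obtain ⟨z₀, hz₀e, hz₀⟩ :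
      ∃ z₀ : ℝ, Real.exp 1 ≤ z₀ ∧ ∀ t, z₀ ≤ t →
        (μ {ω | |X₁ ω| > t}).toReal ≤
          (c₁p + c₁m + 2) * t ^ (-α₁) * Real.log t ^ k₁ := by
    have hev1 : ∀ᶠ t in atTop,
        t ^ α₁ * Real.log t ^ (-k₁) * (μ {ω | X₁ ω > t}).toReal ≤ c₁p + 1 :=
      h₁p.eventually (eventually_le_nhds (lt_add_one c₁p))
    have hev2 : ∀ᶠ t in atTop,
        t ^ α₁ * Real.log t ^ (-k₁) * (μ {ω | -X₁ ω > t}).toReal ≤ c₁m + 1 :=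
      h₁m.eventually (eventually_le_nhds (lt_add_one c₁m))
    obtain ⟨t₀, ht₀⟩ := Filter.eventually_atTop.mp (hev1.and hev2)
    refine ⟨max t₀ (Real.exp 1), le_max_right _ _, fun t ht => ?_⟩
    have hte : Real.exp 1 ≤ t := le_trans (le_max_right _ _) ht
    obtain ⟨h1, h2⟩ := ht₀ t (le_trans (le_max_left _ _) ht)
    have b1 := aux_invert hte h1 ENNReal.toReal_nonneg
    have b2 := aux_invert hte h2 ENNReal.toReal_nonneg
    have hsub : {ω | |X₁ ω| > t} ⊆ {ω | X₁ ω > t} ∪ {ω | -X₁ ω > t} := by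
      intro ω hω
      simp only [Set.mem_setOf_eq, Set.mem_union] at *
      rcases lt_abs.mp hω with h | h
      · exact Or.inl h
      · exact Or.inr h
    have hm3 : (μ {ω | |X₁ ω| > t}).toReal ≤
        (μ {ω | X₁ ω > t}).toReal + (μ {ω | -X₁ ω > t}).toReal := by
      have : μ {ω | |X₁ ω| > t} ≤ μ {ω | X₁ ω > t} + μ {ω | -X₁ ω > t} :=
        le_trans (measure_mono hsub) (measure_union_le _ _)
      calc (μ {ω | |X₁ ω| > t}).toReal
          ≤ (μ {ω | X₁ ω > t} + μ {ω | -X₁ ω > t}).toReal :=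
            ENNReal.toReal_mono (by
              exact ENNReal.add_ne_top.mpr ⟨measure_ne_top μ _, measure_ne_top μ _⟩) this
        _ = (μ {ω | X₁ ω > t}).toReal + (μ {ω | -X₁ ω > t}).toReal :=
            ENNReal.toReal_add (measure_ne_top μ _) (measure_ne_top μ _)
    have ht0 : (0:ℝ) < t := lt_of_lt_of_le (Real.exp_pos 1) hte
    have hlt0 : (0:ℝ) < Real.log t := lt_of_lt_of_le one_pos
      (by rw [Real.le_log_iff_exp_le ht0]; exact hte)
    have hfac : (0:ℝ) ≤ t ^ (-α₁) * Real.log t ^ k₁ := by positivity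
    nlinarith [b1, b2, hm3, hfac]
  -- the dominating constant
  obtain ⟨K, hK0, hKev⟩ := aux_dom hα₁ hk₁ hβ1 hMdef
    (fun t => prob_toReal_le_one μ _) (by linarith : (0:ℝ) ≤ c₁p + c₁m + 2) hz₀e hz₀
  -- product identity via independence
  have hsetm : ∀ z : ℝ, MeasurableSet {p : ℝ × ℝ | p.2 * p.1 > z} := fun z =>
    measurableSet_lt measurable_const (measurable_snd.mul measurable_fst)
  have hmap : μ.map (fun ω => (X₂ ω, X₁ ω)) = ν.prod lam :=
    (indepFun_iff_map_prod_eq_prod_map_map hm₂.aemeasurable hm₁.aemeasurable).mp hind.symm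
  have hids : ∀ z : ℝ, μ {ω | X₁ ω * X₂ ω > z} = ∫⁻ x, lam {y | y * x > z} ∂ν := by
    intro z
    have h1 : μ {ω | X₁ ω * X₂ ω > z}
        = μ ((fun ω => (X₂ ω, X₁ ω)) ⁻¹' {p : ℝ × ℝ | p.2 * p.1 > z}) := rfl
    rw [h1, ← Measure.map_apply (hm₂.prodMk hm₁) (hsetm z), hmap,
      Measure.prod_apply (hsetm z)]
    rfl
  have hFm : ∀ z : ℝ, Measurable fun x : ℝ => lam {y | y * x > z} := fun z =>
    measurable_measure_prodMk_left (hsetm z)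
  have hInt_eq : ∀ z : ℝ, (μ {ω | X₁ ω * X₂ ω > z}).toReal
      = ∫ x, (lam {y | y * x > z}).toReal ∂ν := by
    intro z
    rw [hids z]
    exact (integral_toReal (hFm z).aemeasurable
      (Filter.Eventually.of_forall fun x => measure_lt_top lam _)).symm
  have hlamIoi : ∀ t : ℝ, lam (Set.Ioi t) = μ {ω | X₁ ω > t} := by
    intro t; rw [hlam, Measure.map_apply hm₁ measurableSet_Ioi]; rfl
  have hlamIio : ∀ t : ℝ, lam (Set.Iio t) = μ {ω | X₁ ω < t} := by
    intro t; rw [hlam, Measure.map_apply hm₁ measurableSet_Iio]; rfl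
  have hlamAbs : ∀ t : ℝ, lam {y : ℝ | |y| > t} = μ {ω | |X₁ ω| > t} := by
    intro t
    rw [hlam, Measure.map_apply hm₁ (measurableSet_lt measurable_const (by fun_prop))]
    rfl
  -- dominated convergence
  set L : ℝ → ℝ := fun x => c₁p * max x 0 ^ α₁ + c₁m * max (-x) 0 ^ α₁ with hL
  have hLmeas : Measurable L := by
    rw [hL]; fun_prop
  have hDCT : Tendsto
      (fun z : ℝ => ∫ x, z ^ α₁ * Real.log z ^ (-k₁) * (lam {y | y * x > z}).toReal ∂ν)
      atTop (nhds (∫ x, L x ∂ν)) := by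
    refine tendsto_integral_filter_of_dominated_convergence
      (fun x => K * (1 + |x| ^ β)) ?_ ?_ ?_ ?_
    · exact Filter.Eventually.of_forall fun z =>
        (((hFm z).ennreal_toReal).const_mul _).aestronglyMeasurable
    · -- uniform bound
      filter_upwards [hKev, eventually_ge_atTop (1:ℝ)] with z hz hz1
      refine Filter.Eventually.of_forall fun x => ?_
      have hz0 : (0:ℝ) < z := lt_of_lt_of_le one_pos hz1
      have hgnn : 0 ≤ K * (1 + |x| ^ β) :=
        mul_nonneg hK0 (by positivity)
      by_cases hx : x = 0
      · subst hx
        have hempty : {y : ℝ | y * 0 > z} = ∅ := by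
          ext y
          simp only [Set.mem_setOf_eq, mul_zero, Set.mem_empty_iff_false, iff_false, not_lt]
          exact hz0.le
        rw [hempty]
        simp only [measure_empty, ENNReal.toReal_zero, mul_zero, norm_zero]
        exact hgnn
      · have hFnn : (0:ℝ) ≤ (lam {y | y * x > z}).toReal := ENNReal.toReal_nonneg
        have hlogzn : (0:ℝ) ≤ Real.log z := Real.log_nonneg hz1
        have hfacnn : (0:ℝ) ≤ z ^ α₁ * Real.log z ^ (-k₁) := by positivity
        have hsub : {y : ℝ | y * x > z} ⊆ {y : ℝ | |y| > z / |x|} := by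
          intro y hy
          simp only [Set.mem_setOf_eq, gt_iff_lt] at *
          refine (div_lt_iff₀ (abs_pos.mpr hx)).mpr ?_
          calc z < y * x := hy
            _ ≤ |y * x| := le_abs_self _
            _ = |y| * |x| := abs_mul _ _
        have hFle : (lam {y | y * x > z}).toReal ≤ (μ {ω | |X₁ ω| > z / |x|}).toReal := by
          rw [← hlamAbs]
          exact ENNReal.toReal_mono (measure_ne_top lam _) (measure_mono hsub)
        rw [norm_of_nonneg (mul_nonneg hfacnn hFnn)]
        calc z ^ α₁ * Real.log z ^ (-k₁) * (lam {y | y * x > z}).toReal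
            ≤ z ^ α₁ * Real.log z ^ (-k₁) * (μ {ω | |X₁ ω| > z / |x|}).toReal :=
              mul_le_mul_of_nonneg_left hFle hfacnn
          _ ≤ K * (1 + |x| ^ β) := hz x hx
    · -- integrability of the dominating function
      have h1 : Integrable (fun x : ℝ => |x| ^ β) ν := by
        rw [hν]
        exact (integrable_map_measure
          ((by fun_prop : Measurable fun x : ℝ => |x| ^ β).aestronglyMeasurable)
          hm₂.aemeasurable).mpr hmom
      exact (((integrable_const (1:ℝ)).add h1).const_mul K)
    · -- pointwise convergence
      refine Filter.Eventually.of_forall fun x => ?_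
      rcases lt_trichotomy x 0 with hx | hx | hx
      · -- x < 0
        have hxpos : (0:ℝ) < -x := neg_pos.mpr hx
        have hFeq : ∀ z : ℝ, (lam {y | y * x > z}).toReal
            = (μ {ω | -X₁ ω > z / (-x)}).toReal := by
          intro z
          have hset1 : {y : ℝ | y * x > z} = Set.Iio (z / x) := by
            ext y
            simp only [Set.mem_setOf_eq, Set.mem_Iio, gt_iff_lt]
            rw [lt_div_iff_of_neg hx]
          have hset2 : {ω | X₁ ω < z / x} = {ω | -X₁ ω > z / (-x)} := by
            ext ω
            simp only [Set.mem_setOf_eq, div_neg, gt_iff_lt]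
            constructor <;> intro h <;> linarith
          rw [hset1, hlamIio, hset2]
        have hLx : L x = c₁m * (-x) ^ α₁ := by
          rw [hL]
          simp only [max_eq_right hx.le, max_eq_left hxpos.le,
            Real.zero_rpow hα₁.ne', mul_zero, zero_add]
        rw [hLx]
        exact (rv_limit h₁m hxpos).congr fun z => by rw [hFeq z]
      · -- x = 0
        subst hx
        have hL0 : L 0 = 0 := by
          rw [hL]; simp [Real.zero_rpow hα₁.ne']
        rw [hL0]
        refine Tendsto.congr' ?_ tendsto_const_nhds
        filter_upwards [eventually_gt_atTop (0:ℝ)] with z hz0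
        have hempty : {y : ℝ | y * 0 > z} = ∅ := by
          ext y
          simp only [Set.mem_setOf_eq, mul_zero, Set.mem_empty_iff_false, iff_false, not_lt]
          exact hz0.le
        rw [hempty]
        simp
      · -- x > 0
        have hFeq : ∀ z : ℝ, (lam {y | y * x > z}).toReal
            = (μ {ω | X₁ ω > z / x}).toReal := by
          intro z
          have hset1 : {y : ℝ | y * x > z} = Set.Ioi (z / x) := by
            ext y
            simp only [Set.mem_setOf_eq, Set.mem_Ioi, gt_iff_lt]
            rw [div_lt_iff₀ hx]
          rw [hset1, hlamIoi]
        have hLx : L x = c₁p * x ^ α₁ := by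
          rw [hL]
          simp only [max_eq_left hx.le, max_eq_right (neg_nonpos.mpr hx.le),
            Real.zero_rpow hα₁.ne', mul_zero, add_zero]
        rw [hLx]
        exact (rv_limit h₁p hx).congr fun z => by rw [hFeq z]
  -- integrability of the positive-part powers
  have hdom : Integrable (fun ω => 1 + |X₂ ω| ^ β) μ := (integrable_const (1:ℝ)).add hmom
  have hint1 : Integrable (fun ω => max (X₂ ω) 0 ^ α₁) μ := by
    refine hdom.mono ((by fun_prop : Measurable fun ω => max (X₂ ω) 0 ^ α₁).aestronglyMeasurable) ?_
    refine Filter.Eventually.of_forall fun ω => ?_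
    rw [norm_of_nonneg (Real.rpow_nonneg (le_max_right _ _) _),
      norm_of_nonneg (by positivity)]
    exact aux_rpow_bound (le_max_right _ _)
      (max_le (le_abs_self _) (abs_nonneg _)) hα₁ hβ1.le
  have hint2 : Integrable (fun ω => max (-X₂ ω) 0 ^ α₁) μ := by
    refine hdom.mono ((by fun_prop : Measurable fun ω => max (-X₂ ω) 0 ^ α₁).aestronglyMeasurable) ?_
    refine Filter.Eventually.of_forall fun ω => ?_
    rw [norm_of_nonneg (Real.rpow_nonneg (le_max_right _ _) _),
      norm_of_nonneg (by positivity)]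
    exact aux_rpow_bound (le_max_right _ _)
      (max_le (neg_le_abs _) (abs_nonneg _)) hα₁ hβ1.le
  -- layer cake for both tails
  have hαα₂ : α₁ < α₂ := hα₂
  obtain ⟨hIa, hEa⟩ := aux_layer μ hm₂ hα₁ hαα₂ ht₂1 hC₂0 htail₂ hint1
  have htail₂' : ∀ t, t₂ ≤ t → (μ {ω | |(-X₂ ·) ω| > t}).toReal ≤ C₂ * t ^ (-α₂) := by
    intro t ht
    have : {ω | |(-X₂ ·) ω| > t} = {ω | |X₂ ω| > t} := by
      ext ω; simp [abs_neg]
    rw [this]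
    exact htail₂ t ht
  obtain ⟨hIb, hEb⟩ := aux_layer μ hm₂.neg hα₁ hαα₂ ht₂1 hC₂0 htail₂' hint2
  simp only [Pi.neg_apply] at hIb hEb
  -- split the target integrand
  have hsplit : (fun x : ℝ => x ^ (α₁ - 1) *
        (c₁p * (μ {ω | X₂ ω > x}).toReal + c₁m * (μ {ω | -X₂ ω > x}).toReal))
      = fun x => c₁p * (x ^ (α₁ - 1) * (μ {ω | X₂ ω > x}).toReal)
        + c₁m * (x ^ (α₁ - 1) * (μ {ω | -X₂ ω > x}).toReal) := by
    funext x; ring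
  have hIone : IntegrableOn (fun x : ℝ => x ^ (α₁ - 1) *
        (c₁p * (μ {ω | X₂ ω > x}).toReal + c₁m * (μ {ω | -X₂ ω > x}).toReal))
      (Set.Ioi 0) := by
    rw [hsplit]
    exact (hIa.const_mul c₁p).add (hIb.const_mul c₁m)
  refine ⟨hIone, ?_⟩
  -- identify the limit value
  have hLint : ∫ x, L x ∂ν = α₁ * ∫ x in Set.Ioi (0:ℝ), x ^ (α₁ - 1) *
      (c₁p * (μ {ω | X₂ ω > x}).toReal + c₁m * (μ {ω | -X₂ ω > x}).toReal) := by
    have e1 : ∫ x, L x ∂ν = ∫ ω, L (X₂ ω) ∂μ := by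
      rw [hν]
      exact integral_map hm₂.aemeasurable hLmeas.aestronglyMeasurable
    have e2 : ∫ ω, L (X₂ ω) ∂μ
        = c₁p * ∫ ω, max (X₂ ω) 0 ^ α₁ ∂μ + c₁m * ∫ ω, max (-X₂ ω) 0 ^ α₁ ∂μ := by
      rw [hL]
      rw [integral_add (hint1.const_mul c₁p) (hint2.const_mul c₁m),
        MeasureTheory.integral_const_mul, MeasureTheory.integral_const_mul]
    have e3 : ∫ x in Set.Ioi (0:ℝ), x ^ (α₁ - 1) *
        (c₁p * (μ {ω | X₂ ω > x}).toReal + c₁m * (μ {ω | -X₂ ω > x}).toReal)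
        = c₁p * (∫ x in Set.Ioi (0:ℝ), x ^ (α₁ - 1) * (μ {ω | X₂ ω > x}).toReal)
          + c₁m * (∫ x in Set.Ioi (0:ℝ), x ^ (α₁ - 1) * (μ {ω | -X₂ ω > x}).toReal) := by
      rw [hsplit, integral_add (hIa.const_mul c₁p) (hIb.const_mul c₁m),
        MeasureTheory.integral_const_mul, MeasureTheory.integral_const_mul]
    rw [e1, e2, e3, hEa, hEb]
    ring
  rw [← hLint]
  refine hDCT.congr fun z => ?_
  rw [MeasureTheory.integral_const_mul, ← hInt_eq z]
end

section
/- Let Y = V₁V₂ and Z = V₂V₃ where V₁, V₂, V₃ are independent real random variables such that lim_{z→∞} z^{α}(ln z)^{−u_i} P{±V_i > z} = v_i^± with α > 0, u_i ≥ 0 and v_i⁺ + v_i⁻ > 0 for i = 1, 2, 3. Then limsup_{z→∞} z^{α}(ln z)^{−u₂} P{|Y| > z and |Z| > z} < ∞. -/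
open MeasureTheory ProbabilityTheory Filter Real

private lemma tail_bound' {Ω : Type*} [MeasurableSpace Ω] (μ : Measure Ω) [IsProbabilityMeasure μ]
    (V : Ω → ℝ) (α u cp cm : ℝ)
    (hp : Tendsto (fun z : ℝ => z ^ α * (Real.log z) ^ (-u) *
      (μ {ω | V ω > z}).toReal) atTop (nhds cp))
    (hm : Tendsto (fun z : ℝ => z ^ α * (Real.log z) ^ (-u) *
      (μ {ω | -(V ω) > z}).toReal) atTop (nhds cm)) :
    ∃ C T : ℝ, 0 ≤ C ∧ Real.exp 1 ≤ T ∧ ∀ t : ℝ, T ≤ t →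
      (μ {ω | t < |V ω|}).toReal ≤ C * (t ^ (-α) * (Real.log t) ^ u) := by
  have h1 : ∀ᶠ z in atTop, z ^ α * (Real.log z) ^ (-u) * (μ {ω | V ω > z}).toReal ≤ cp + 1 :=
    hp.eventually (eventually_le_nhds (lt_add_one cp))
  have h2 : ∀ᶠ z in atTop, z ^ α * (Real.log z) ^ (-u) * (μ {ω | -(V ω) > z}).toReal ≤ cm + 1 :=
    hm.eventually (eventually_le_nhds (lt_add_one cm))
  obtain ⟨T, hT⟩ := eventually_atTop.1 ((h1.and h2).and (eventually_ge_atTop (Real.exp 1)))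
  refine ⟨max (cp + 1) 0 + max (cm + 1) 0, max T (Real.exp 1), by positivity, le_max_right _ _, ?_⟩
  intro t ht
  have hTt : T ≤ t := le_trans (le_max_left _ _) ht
  have het : Real.exp 1 ≤ t := le_trans (le_max_right _ _) ht
  obtain ⟨⟨hb1, hb2⟩, -⟩ := hT t hTt
  have ht0 : (0:ℝ) < t := lt_of_lt_of_le (Real.exp_pos 1) het
  have hlog1 : (1:ℝ) ≤ Real.log t := by
    rw [← Real.log_exp 1]; exact Real.log_le_log (Real.exp_pos 1) het
  have hlog0 : (0:ℝ) < Real.log t := lt_of_lt_of_le one_pos hlog1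
  have key : ∀ m c : ℝ, 0 ≤ m → t ^ α * (Real.log t) ^ (-u) * m ≤ c →
      m ≤ max c 0 * (t ^ (-α) * (Real.log t) ^ u) := by
    intro m c hm0 hc
    have e1 : t ^ (-α) * t ^ α = 1 := by
      rw [← Real.rpow_add ht0]; simp
    have e2 : (Real.log t) ^ u * (Real.log t) ^ (-u) = 1 := by
      rw [← Real.rpow_add hlog0]; simp
    have hnn : (0:ℝ) ≤ t ^ (-α) * (Real.log t) ^ u := by positivity
    calc m = (t ^ (-α) * t ^ α) * ((Real.log t) ^ u * (Real.log t) ^ (-u)) * m := by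
            rw [e1, e2]; ring
      _ = (t ^ (-α) * (Real.log t) ^ u) * (t ^ α * (Real.log t) ^ (-u) * m) := by ring
      _ ≤ (t ^ (-α) * (Real.log t) ^ u) * max c 0 := by
            exact mul_le_mul_of_nonneg_left (le_trans hc (le_max_left _ _)) hnn
      _ = max c 0 * (t ^ (-α) * (Real.log t) ^ u) := by ring
  have hsub : (μ {ω | t < |V ω|}).toReal ≤
      (μ {ω | V ω > t}).toReal + (μ {ω | -(V ω) > t}).toReal := by
    have hincl : {ω | t < |V ω|} ⊆ {ω | V ω > t} ∪ {ω | -(V ω) > t} := by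
      intro ω hω
      rcases abs_cases (V ω) with ⟨h, -⟩ | ⟨h, -⟩
      · left; simpa [h] using hω
      · right; simp only [Set.mem_setOf_eq] at hω ⊢; linarith [hω, h.symm ▸ hω]
    have h1 := measure_mono (μ := μ) hincl
    have h2 := le_trans h1 (measure_union_le _ _)
    have hfin : μ {ω | V ω > t} + μ {ω | -(V ω) > t} ≠ ⊤ :=
      ENNReal.add_ne_top.2 ⟨measure_ne_top _ _, measure_ne_top _ _⟩
    calc (μ {ω | t < |V ω|}).toReal ≤ (μ {ω | V ω > t} + μ {ω | -(V ω) > t}).toReal :=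
          ENNReal.toReal_mono hfin h2
      _ = (μ {ω | V ω > t}).toReal + (μ {ω | -(V ω) > t}).toReal :=
          ENNReal.toReal_add (measure_ne_top _ _) (measure_ne_top _ _)
  have hb1' := key _ _ ENNReal.toReal_nonneg hb1
  have hb2' := key _ _ ENNReal.toReal_nonneg hb2
  calc (μ {ω | t < |V ω|}).toReal
      ≤ (μ {ω | V ω > t}).toReal + (μ {ω | -(V ω) > t}).toReal := hsub
    _ ≤ max (cp+1) 0 * (t ^ (-α) * (Real.log t) ^ u)
        + max (cm+1) 0 * (t ^ (-α) * (Real.log t) ^ u) := add_le_add hb1' hb2'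
    _ = (max (cp + 1) 0 + max (cm + 1) 0) * (t ^ (-α) * (Real.log t) ^ u) := by ring

set_option maxHeartbeats 1000000 in
theorem joint_tail_common_factor_bounded
    {Ω : Type*} [MeasurableSpace Ω] (μ : Measure Ω) [IsProbabilityMeasure μ]
    (V₁ V₂ V₃ : Ω → ℝ) (hm₁ : Measurable V₁) (hm₂ : Measurable V₂) (hm₃ : Measurable V₃)
    (hind : iIndepFun ![V₁, V₂, V₃] μ)
    (α : ℝ) (hα : 0 < α)
    (uexp : Fin 3 → ℝ) (hu : ∀ i, 0 ≤ uexp i)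
    (vp vm : Fin 3 → ℝ) (hvp : ∀ i, 0 ≤ vp i) (hvm : ∀ i, 0 ≤ vm i)
    (hv : ∀ i, 0 < vp i + vm i)
    (hTp : ∀ i, Tendsto (fun z : ℝ => z ^ α * (Real.log z) ^ (-(uexp i)) *
      (μ {ω | ![V₁, V₂, V₃] i ω > z}).toReal) atTop (nhds (vp i)))
    (hTm : ∀ i, Tendsto (fun z : ℝ => z ^ α * (Real.log z) ^ (-(uexp i)) *
      (μ {ω | -(![V₁, V₂, V₃] i ω) > z}).toReal) atTop (nhds (vm i))) :
    IsBoundedUnder (· ≤ ·) atTop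
      (fun z : ℝ => z ^ α * (Real.log z) ^ (-(uexp 1)) *
        (μ {ω | |V₁ ω * V₂ ω| > z ∧ |V₂ ω * V₃ ω| > z}).toReal) := by
  classical
  -- individual tail bounds
  obtain ⟨C₁, T₁, hC₁0, hT₁e, hF₁⟩ := tail_bound' μ V₁ α (uexp 0) (vp 0) (vm 0)
    (by simpa using hTp 0) (by simpa using hTm 0)
  obtain ⟨C₂, T₂, hC₂0, hT₂e, hF₂⟩ := tail_bound' μ V₂ α (uexp 1) (vp 1) (vm 1)
    (by simpa using hTp 1) (by simpa using hTm 1)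
  obtain ⟨C₃, T₃, hC₃0, hT₃e, hF₃⟩ := tail_bound' μ V₃ α (uexp 2) (vp 2) (vm 2)
    (by simpa using hTp 2) (by simpa using hTm 2)
  have hexp1 : (1:ℝ) ≤ Real.exp 1 := by linarith [Real.add_one_le_exp 1]
  -- probability ≤ 1
  have hple : ∀ s : Set Ω, (μ s).toReal ≤ 1 := by
    intro s
    simpa using ENNReal.toReal_mono ENNReal.one_ne_top (prob_le_one (μ := μ) (s := s))
  -- log absorption
  have hlog_ev : ∀ᶠ t : ℝ in atTop, (Real.log t) ^ (uexp 0 + uexp 2) ≤ t ^ (α/4) := by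
    have hlo := (isLittleO_log_rpow_rpow_atTop (uexp 0 + uexp 2)
      (show (0:ℝ) < α/4 by positivity)).def one_pos
    filter_upwards [hlo, eventually_ge_atTop (0:ℝ)] with t h1 h2
    rw [Real.norm_eq_abs, Real.norm_eq_abs, one_mul] at h1
    calc (Real.log t) ^ (uexp 0 + uexp 2) ≤ |(Real.log t) ^ (uexp 0 + uexp 2)| := le_abs_self _
      _ ≤ |t ^ (α/4)| := h1
      _ = t ^ (α/4) := abs_of_nonneg (Real.rpow_nonneg h2 _)
  obtain ⟨Tb', hTb'⟩ := eventually_atTop.1 hlog_ev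
  set Tb : ℝ := max Tb' (max (max T₁ T₃) (Real.exp 1)) with hTb_def
  have hTbe : Real.exp 1 ≤ Tb := le_trans (le_max_right _ _) (le_max_right _ _)
  have hTb0 : (0:ℝ) < Tb := lt_of_lt_of_le (Real.exp_pos 1) hTbe
  set D : ℝ := C₁ * C₃ + Tb ^ (7/4*α) with hD_def
  have hD0 : 0 ≤ D := by positivity
  -- Claim A : product tail bound at dyadic points
  have claimA : ∀ k : ℕ, (μ {ω | (2:ℝ)^k < |V₁ ω|}).toReal * (μ {ω | (2:ℝ)^k < |V₃ ω|}).toReal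
      ≤ D * ((2:ℝ)^k) ^ (-(7/4*α)) := by
    intro k
    have ht1 : (1:ℝ) ≤ (2:ℝ)^k := one_le_pow₀ one_le_two
    have ht0 : (0:ℝ) < (2:ℝ)^k := by positivity
    rcases le_or_gt Tb ((2:ℝ)^k) with hc | hc
    · have e1 := hF₁ _ (le_trans (le_trans (le_trans (le_max_left _ _) (le_max_left _ _))
        (le_max_right _ _)) hc)
      have e3 := hF₃ _ (le_trans (le_trans (le_trans (le_max_right _ _) (le_max_left _ _))
        (le_max_right _ _)) hc)
      have elog := hTb' _ (le_trans (le_max_left _ _) hc)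
      have hlt : (0:ℝ) < Real.log ((2:ℝ)^k) := by
        have : (1:ℝ) ≤ Real.log ((2:ℝ)^k) := by
          rw [← Real.log_exp 1]
          exact Real.log_le_log (Real.exp_pos 1) (le_trans hTbe hc)
        linarith
      calc (μ {ω | (2:ℝ)^k < |V₁ ω|}).toReal * (μ {ω | (2:ℝ)^k < |V₃ ω|}).toReal
          ≤ (C₁ * (((2:ℝ)^k) ^ (-α) * (Real.log ((2:ℝ)^k)) ^ (uexp 0)))
            * (C₃ * (((2:ℝ)^k) ^ (-α) * (Real.log ((2:ℝ)^k)) ^ (uexp 2))) :=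
            mul_le_mul e1 e3 ENNReal.toReal_nonneg (by positivity)
        _ = C₁*C₃ * ((((2:ℝ)^k) ^ (-α) * ((2:ℝ)^k) ^ (-α))
            * ((Real.log ((2:ℝ)^k)) ^ (uexp 0) * (Real.log ((2:ℝ)^k)) ^ (uexp 2))) := by ring
        _ = C₁*C₃ * (((2:ℝ)^k) ^ (-α + -α) * (Real.log ((2:ℝ)^k)) ^ (uexp 0 + uexp 2)) := by
            rw [← Real.rpow_add ht0, ← Real.rpow_add hlt]
        _ ≤ C₁*C₃ * (((2:ℝ)^k) ^ (-α + -α) * ((2:ℝ)^k) ^ (α/4)) := by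
            have h := mul_le_mul_of_nonneg_left elog (Real.rpow_nonneg ht0.le (-α + -α))
            exact mul_le_mul_of_nonneg_left h (by positivity)
        _ = C₁*C₃ * ((2:ℝ)^k) ^ (-(7/4*α)) := by
            rw [← Real.rpow_add ht0, show -α + -α + α/4 = -(7/4*α) by ring]
        _ ≤ D * ((2:ℝ)^k) ^ (-(7/4*α)) := by
            apply mul_le_mul_of_nonneg_right _ (Real.rpow_nonneg ht0.le _)
            rw [hD_def]; exact le_add_of_nonneg_right (Real.rpow_nonneg hTb0.le _)
    · have h1 : (μ {ω | (2:ℝ)^k < |V₁ ω|}).toReal ≤ 1 := hple _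
      have h3 : (μ {ω | (2:ℝ)^k < |V₃ ω|}).toReal ≤ 1 := hple _
      have hp1 := ENNReal.toReal_nonneg (a := μ {ω | (2:ℝ)^k < |V₁ ω|})
      have hp3 := ENNReal.toReal_nonneg (a := μ {ω | (2:ℝ)^k < |V₃ ω|})
      have hone : (1:ℝ) ≤ Tb ^ (7/4*α) * ((2:ℝ)^k) ^ (-(7/4*α)) := by
        have ha : ((2:ℝ)^k) ^ (7/4*α) ≤ Tb ^ (7/4*α) :=
          Real.rpow_le_rpow ht0.le hc.le (by positivity)
        have hb : ((2:ℝ)^k) ^ (7/4*α) * ((2:ℝ)^k) ^ (-(7/4*α)) = 1 := by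
          rw [← Real.rpow_add ht0]; simp
        calc (1:ℝ) = ((2:ℝ)^k) ^ (7/4*α) * ((2:ℝ)^k) ^ (-(7/4*α)) := hb.symm
          _ ≤ Tb ^ (7/4*α) * ((2:ℝ)^k) ^ (-(7/4*α)) :=
            mul_le_mul_of_nonneg_right ha (Real.rpow_nonneg ht0.le _)
      calc (μ {ω | (2:ℝ)^k < |V₁ ω|}).toReal * (μ {ω | (2:ℝ)^k < |V₃ ω|}).toReal
          ≤ 1 := by nlinarith
        _ ≤ Tb ^ (7/4*α) * ((2:ℝ)^k) ^ (-(7/4*α)) := hone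
        _ ≤ D * ((2:ℝ)^k) ^ (-(7/4*α)) := by
            apply mul_le_mul_of_nonneg_right _ (Real.rpow_nonneg ht0.le _)
            rw [hD_def]; exact le_add_of_nonneg_left (mul_nonneg hC₁0 hC₃0)
  -- independence
  have hAeq : ∀ a b : ℝ,
      μ ({ω | a < |V₁ ω|} ∩ ({ω | b < |V₂ ω|} ∩ {ω | a < |V₃ ω|}))
      = μ {ω | a < |V₁ ω|} * μ {ω | b < |V₂ ω|} * μ {ω | a < |V₃ ω|} := by
    intro a b
    have hmeas : ∀ c : ℝ, MeasurableSet {x : ℝ | c < |x|} :=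
      fun c => measurableSet_lt measurable_const (_root_.continuous_abs.measurable)
    have h := hind.meas_iInter
      (s := ![{ω | a < |V₁ ω|}, {ω | b < |V₂ ω|}, {ω | a < |V₃ ω|}]) ?_
    · have e1 : (⋂ i, (![{ω | a < |V₁ ω|}, {ω | b < |V₂ ω|}, {ω | a < |V₃ ω|}] : Fin 3 → Set Ω) i)
          = {ω | a < |V₁ ω|} ∩ ({ω | b < |V₂ ω|} ∩ {ω | a < |V₃ ω|}) := by
        ext ω
        simp [Set.mem_iInter, Fin.forall_fin_succ]
      rw [e1] at h
      rw [h, Fin.prod_univ_three]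
      simp
    · intro i
      fin_cases i
      · exact ⟨{x : ℝ | a < |x|}, hmeas a, by ext ω; simp⟩
      · exact ⟨{x : ℝ | b < |x|}, hmeas b, by ext ω; simp⟩
      · exact ⟨{x : ℝ | a < |x|}, hmeas a, by ext ω; simp⟩
  -- inclusion
  have hincl : ∀ z : ℝ, 0 < z → {ω | |V₁ ω * V₂ ω| > z ∧ |V₂ ω * V₃ ω| > z} ⊆
      {ω | z < |V₂ ω|} ∪ ⋃ k : ℕ, ({ω | (2:ℝ)^k < |V₁ ω|}
        ∩ ({ω | z/(2:ℝ)^(k+1) < |V₂ ω|} ∩ {ω | (2:ℝ)^k < |V₃ ω|})) := by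
    intro z hz ω hω
    obtain ⟨h1, h2⟩ := hω
    rw [gt_iff_lt, abs_mul] at h1 h2
    have hb0 : (0:ℝ) ≤ |V₂ ω| := abs_nonneg _
    have hw : z < min (|V₁ ω|) (|V₃ ω|) * |V₂ ω| := by
      rw [min_mul_of_nonneg _ _ hb0]
      exact lt_min h1 (by rwa [mul_comm] at h2)
    by_cases hw1 : min (|V₁ ω|) (|V₃ ω|) ≤ 1
    · left
      have : min (|V₁ ω|) (|V₃ ω|) * |V₂ ω| ≤ |V₂ ω| := by nlinarith
      exact lt_of_lt_of_le hw this
    · right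
      push_neg at hw1
      have hne : {n : ℕ | min (|V₁ ω|) (|V₃ ω|) ≤ 2 ^ (n+1)}.Nonempty := by
        obtain ⟨n, hn⟩ := pow_unbounded_of_one_lt (min (|V₁ ω|) (|V₃ ω|)) (one_lt_two (α := ℝ))
        exact ⟨n, le_trans hn.le (pow_le_pow_right₀ one_le_two (Nat.le_succ n))⟩
      set k := sInf {n : ℕ | min (|V₁ ω|) (|V₃ ω|) ≤ 2 ^ (n+1)} with hk_def
      have hk_mem : min (|V₁ ω|) (|V₃ ω|) ≤ (2:ℝ) ^ (k+1) := Nat.sInf_mem hne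
      have hk_lt : (2:ℝ)^k < min (|V₁ ω|) (|V₃ ω|) := by
        rcases Nat.eq_zero_or_pos k with h0 | hpos
        · rw [h0]; simpa using hw1
        · obtain ⟨m, hm⟩ := Nat.exists_eq_succ_of_ne_zero hpos.ne'
          have hmk : m < k := by omega
          have := Nat.notMem_of_lt_sInf (hk_def ▸ hmk)
          simp only [Set.mem_setOf_eq, not_le] at this
          rw [hm]
          exact this
      refine Set.mem_iUnion.2 ⟨k, ?_, ?_, ?_⟩
      · exact lt_of_lt_of_le hk_lt (min_le_left _ _)
      · have hb : z < (2:ℝ)^(k+1) * |V₂ ω| :=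
          lt_of_lt_of_le hw (mul_le_mul_of_nonneg_right hk_mem hb0)
        have h2k : (0:ℝ) < (2:ℝ)^(k+1) := by positivity
        exact (div_lt_iff₀ h2k).2 (by linarith)
      · exact lt_of_lt_of_le hk_lt (min_le_right _ _)
  -- geometric ratio
  set ρ : ℝ := (2:ℝ) ^ (-(α/4)) with hρ_def
  have hρ0 : 0 < ρ := Real.rpow_pos_of_pos two_pos _
  have hρ1 : ρ < 1 := Real.rpow_lt_one_of_one_lt_of_neg one_lt_two (by linarith)
  have hS0 : (0:ℝ) ≤ (1-ρ)⁻¹ := inv_nonneg.2 (by linarith)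
  have hrk : ∀ k : ℕ, ((2:ℝ)^k) ^ (-(α/4)) = ρ^k := by
    intro k
    rw [← Real.rpow_natCast (2:ℝ) k, ← Real.rpow_mul (by norm_num : (0:ℝ) ≤ 2), mul_comm,
      Real.rpow_mul (by norm_num : (0:ℝ) ≤ 2), Real.rpow_natCast]
  -- final bound
  refine ⟨C₂ + (D*C₂*(2:ℝ)^α) * (1-ρ)⁻¹ + (D*(2:ℝ)^((3:ℝ)/2*α)) * (1-ρ)⁻¹, ?_⟩
  rw [eventually_map]
  filter_upwards [eventually_ge_atTop (max (T₂ ^ (4:ℝ)) (Real.exp 1))] with z hz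
  have hzT4 : T₂ ^ (4:ℝ) ≤ z := le_trans (le_max_left _ _) hz
  have hze : Real.exp 1 ≤ z := le_trans (le_max_right _ _) hz
  have hz0 : (0:ℝ) < z := lt_of_lt_of_le (Real.exp_pos 1) hze
  have hz1 : (1:ℝ) ≤ z := le_trans hexp1 hze
  have hT₂0 : (0:ℝ) < T₂ := lt_of_lt_of_le (Real.exp_pos 1) hT₂e
  have hT₂1 : (1:ℝ) ≤ T₂ := le_trans hexp1 hT₂e
  have hlogz : (1:ℝ) ≤ Real.log z := by
    rw [← Real.log_exp 1]; exact Real.log_le_log (Real.exp_pos 1) hze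
  have hlogz0 : (0:ℝ) < Real.log z := lt_of_lt_of_le one_pos hlogz
  have hz14 : T₂ ≤ z ^ ((1:ℝ)/4) := by
    have h := Real.rpow_le_rpow (by positivity) hzT4 (by norm_num : (0:ℝ) ≤ 1/4)
    rwa [← Real.rpow_mul hT₂0.le, show (4:ℝ)*(1/4) = 1 by norm_num, Real.rpow_one] at h
  have hzT₂ : T₂ ≤ z := by
    calc T₂ = T₂ ^ (1:ℝ) := (Real.rpow_one T₂).symm
      _ ≤ T₂ ^ (4:ℝ) := Real.rpow_le_rpow_of_exponent_le hT₂1 (by norm_num)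
      _ ≤ z := hzT4
  have hY0 : (0:ℝ) ≤ z ^ (-α) * Real.log z ^ (uexp 1) :=
    mul_nonneg (Real.rpow_nonneg hz0.le _) (Real.rpow_nonneg hlogz0.le _)
  set J : ℝ := D*C₂*(2:ℝ)^α * (z ^ (-α) * Real.log z ^ (uexp 1))
      + D*(2:ℝ)^((3:ℝ)/2*α) * z ^ (-(9/8*α)) with hJ_def
  have hJ0 : 0 ≤ J := by
    apply add_nonneg
    · exact mul_nonneg (by positivity) hY0
    · positivity
  -- per k bound
  have hterm : ∀ k : ℕ,
      (μ ({ω | (2:ℝ)^k < |V₁ ω|} ∩ ({ω | z/(2:ℝ)^(k+1) < |V₂ ω|}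
        ∩ {ω | (2:ℝ)^k < |V₃ ω|}))).toReal ≤ J * ρ^k := by
    intro k
    have htk0 : (0:ℝ) < (2:ℝ)^k := by positivity
    have htk1 : (1:ℝ) ≤ (2:ℝ)^k := one_le_pow₀ one_le_two
    have hck0 : (0:ℝ) < (2:ℝ)^(k+1) := by positivity
    have hck1 : (1:ℝ) ≤ (2:ℝ)^(k+1) := one_le_pow₀ one_le_two
    have hmeasAk : (μ ({ω | (2:ℝ)^k < |V₁ ω|} ∩ ({ω | z/(2:ℝ)^(k+1) < |V₂ ω|}
        ∩ {ω | (2:ℝ)^k < |V₃ ω|}))).toReal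
        = (μ {ω | (2:ℝ)^k < |V₁ ω|}).toReal * (μ {ω | z/(2:ℝ)^(k+1) < |V₂ ω|}).toReal
          * (μ {ω | (2:ℝ)^k < |V₃ ω|}).toReal := by
      rw [hAeq ((2:ℝ)^k) (z/(2:ℝ)^(k+1)), ENNReal.toReal_mul, ENNReal.toReal_mul]
    have hqnn := ENNReal.toReal_nonneg (a := μ {ω | z/(2:ℝ)^(k+1) < |V₂ ω|})
    rcases le_or_gt ((2:ℝ)^(k+1)) (z ^ ((3:ℝ)/4)) with hcase | hcase
    · -- small k : use V₂ tail
      have hdiv_ge : z ^ ((1:ℝ)/4) ≤ z / (2:ℝ)^(k+1) := by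
        have h1 : z / z ^ ((3:ℝ)/4) ≤ z / (2:ℝ)^(k+1) := by gcongr
        have h2 : z / z ^ ((3:ℝ)/4) = z ^ ((1:ℝ)/4) := by
          rw [show z / z ^ ((3:ℝ)/4) = z ^ (1:ℝ) / z ^ ((3:ℝ)/4) by rw [Real.rpow_one],
            ← Real.rpow_sub hz0]
          norm_num
        linarith
      have hdivT₂ : T₂ ≤ z / (2:ℝ)^(k+1) := le_trans hz14 hdiv_ge
      have hdiv_pos : (0:ℝ) < z / (2:ℝ)^(k+1) := lt_of_lt_of_le hT₂0 hdivT₂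
      have hq := hF₂ _ hdivT₂
      have hlog_le : Real.log (z/(2:ℝ)^(k+1)) ^ (uexp 1) ≤ Real.log z ^ (uexp 1) := by
        apply Real.rpow_le_rpow (Real.log_nonneg (le_trans hT₂1 hdivT₂))
          (Real.log_le_log hdiv_pos (div_le_self hz0.le hck1)) (hu 1)
      have hpow_eq : (z/(2:ℝ)^(k+1)) ^ (-α) = z ^ (-α) * ((2:ℝ)^(k+1)) ^ α := by
        rw [Real.div_rpow hz0.le hck0.le, Real.rpow_neg hck0.le, div_inv_eq_mul]
      have hq' : (μ {ω | z/(2:ℝ)^(k+1) < |V₂ ω|}).toReal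
          ≤ C₂ * (2:ℝ)^α * ((2:ℝ)^k)^α * (z ^ (-α) * Real.log z ^ (uexp 1)) := by
        calc (μ {ω | z/(2:ℝ)^(k+1) < |V₂ ω|}).toReal
            ≤ C₂ * ((z/(2:ℝ)^(k+1)) ^ (-α) * Real.log (z/(2:ℝ)^(k+1)) ^ (uexp 1)) := hq
          _ ≤ C₂ * ((z ^ (-α) * ((2:ℝ)^(k+1)) ^ α) * Real.log z ^ (uexp 1)) := by
              rw [hpow_eq]; gcongr
          _ = C₂ * (2:ℝ)^α * ((2:ℝ)^k)^α * (z ^ (-α) * Real.log z ^ (uexp 1)) := by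
              rw [show ((2:ℝ)^(k+1)) = (2:ℝ)^k * 2 from pow_succ 2 k,
                Real.mul_rpow (by positivity) (by norm_num)]
              ring
      calc (μ ({ω | (2:ℝ)^k < |V₁ ω|} ∩ ({ω | z/(2:ℝ)^(k+1) < |V₂ ω|}
            ∩ {ω | (2:ℝ)^k < |V₃ ω|}))).toReal
          = ((μ {ω | (2:ℝ)^k < |V₁ ω|}).toReal * (μ {ω | (2:ℝ)^k < |V₃ ω|}).toReal)
            * (μ {ω | z/(2:ℝ)^(k+1) < |V₂ ω|}).toReal := by rw [hmeasAk]; ring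
        _ ≤ (D * ((2:ℝ)^k) ^ (-(7/4*α)))
            * (C₂ * (2:ℝ)^α * ((2:ℝ)^k)^α * (z ^ (-α) * Real.log z ^ (uexp 1))) :=
            mul_le_mul (claimA k) hq' hqnn (by positivity)
        _ = D*C₂*(2:ℝ)^α*(z ^ (-α) * Real.log z ^ (uexp 1))
            * (((2:ℝ)^k) ^ (-(7/4*α)) * ((2:ℝ)^k) ^ α) := by ring
        _ = D*C₂*(2:ℝ)^α*(z ^ (-α) * Real.log z ^ (uexp 1)) * ((2:ℝ)^k) ^ (-(7/4*α)+α) := by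
            rw [← Real.rpow_add htk0]
        _ ≤ D*C₂*(2:ℝ)^α*(z ^ (-α) * Real.log z ^ (uexp 1)) * ((2:ℝ)^k) ^ (-(α/4)) := by
            apply mul_le_mul_of_nonneg_left
              (Real.rpow_le_rpow_of_exponent_le htk1 (by linarith))
            exact mul_nonneg (by positivity) hY0
        _ = D*C₂*(2:ℝ)^α*(z ^ (-α) * Real.log z ^ (uexp 1)) * ρ^k := by rw [hrk k]
        _ ≤ J * ρ^k := by
            apply mul_le_mul_of_nonneg_right _ (pow_nonneg hρ0.le k)
            rw [hJ_def]
            exact le_add_of_nonneg_right (mul_nonneg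
              (mul_nonneg hD0 (Real.rpow_nonneg (le_of_lt two_pos) _))
              (Real.rpow_nonneg hz0.le _))
    · -- large k : use trivial bound on V₂
      have hq1 : (μ {ω | z/(2:ℝ)^(k+1) < |V₂ ω|}).toReal ≤ 1 := hple _
      have hsplit : ((2:ℝ)^k) ^ (-(7/4*α))
          = ((2:ℝ)^k) ^ (-(α/4)) * ((2:ℝ)^k) ^ (-(3/2*α)) := by
        rw [← Real.rpow_add htk0, show -(α/4) + -(3/2*α) = -(7/4*α) by ring]
      have h2k : ((2:ℝ)^k) ^ (-(3/2*α)) ≤ (2:ℝ)^((3:ℝ)/2*α) * z ^ (-(9/8*α)) := by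
        have e1 : ((2:ℝ)^(k+1)) ^ (-(3/2*α)) ≤ (z ^ ((3:ℝ)/4)) ^ (-(3/2*α)) :=
          Real.rpow_le_rpow_of_nonpos (by positivity) hcase.le (by linarith)
        have e2 : (z ^ ((3:ℝ)/4)) ^ (-(3/2*α)) = z ^ (-(9/8*α)) := by
          rw [← Real.rpow_mul hz0.le, show (3:ℝ)/4 * (-(3/2*α)) = -(9/8*α) by ring]
        have e3 : ((2:ℝ)^(k+1)) ^ (-(3/2*α))
            = (2:ℝ)^(-((3:ℝ)/2*α)) * ((2:ℝ)^k) ^ (-(3/2*α)) := by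
          rw [pow_succ, mul_comm ((2:ℝ)^k) 2, Real.mul_rpow (by norm_num) (by positivity)]
        have h4 : (2:ℝ)^(-((3:ℝ)/2*α)) * ((2:ℝ)^k) ^ (-(3/2*α)) ≤ z ^ (-(9/8*α)) := by
          rw [← e3, ← e2]; exact e1
        have h5 : (2:ℝ)^((3:ℝ)/2*α) * (2:ℝ)^(-((3:ℝ)/2*α)) = 1 := by
          rw [← Real.rpow_add two_pos]; simp
        calc ((2:ℝ)^k) ^ (-(3/2*α))
            = (2:ℝ)^((3:ℝ)/2*α) * ((2:ℝ)^(-((3:ℝ)/2*α)) * ((2:ℝ)^k) ^ (-(3/2*α))) := by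
              rw [← mul_assoc, h5, one_mul]
          _ ≤ (2:ℝ)^((3:ℝ)/2*α) * z ^ (-(9/8*α)) :=
              mul_le_mul_of_nonneg_left h4 (by positivity)
      calc (μ ({ω | (2:ℝ)^k < |V₁ ω|} ∩ ({ω | z/(2:ℝ)^(k+1) < |V₂ ω|}
            ∩ {ω | (2:ℝ)^k < |V₃ ω|}))).toReal
          = ((μ {ω | (2:ℝ)^k < |V₁ ω|}).toReal * (μ {ω | (2:ℝ)^k < |V₃ ω|}).toReal)
            * (μ {ω | z/(2:ℝ)^(k+1) < |V₂ ω|}).toReal := by rw [hmeasAk]; ring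
        _ ≤ (D * ((2:ℝ)^k) ^ (-(7/4*α))) * 1 :=
            mul_le_mul (claimA k) hq1 hqnn (by positivity)
        _ = D * (((2:ℝ)^k) ^ (-(α/4)) * ((2:ℝ)^k) ^ (-(3/2*α))) := by rw [hsplit]; ring
        _ ≤ D * (((2:ℝ)^k) ^ (-(α/4)) * ((2:ℝ)^((3:ℝ)/2*α) * z ^ (-(9/8*α)))) := by
            apply mul_le_mul_of_nonneg_left _ hD0
            exact mul_le_mul_of_nonneg_left h2k (Real.rpow_nonneg htk0.le _)
        _ = (D * (2:ℝ)^((3:ℝ)/2*α) * z ^ (-(9/8*α))) * ρ^k := by rw [hrk k]; ring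
        _ ≤ J * ρ^k := by
            apply mul_le_mul_of_nonneg_right _ (pow_nonneg hρ0.le k)
            rw [hJ_def]
            exact le_add_of_nonneg_left (mul_nonneg (mul_nonneg
              (mul_nonneg hD0 hC₂0) (Real.rpow_nonneg (le_of_lt two_pos) _)) hY0)
  -- summation
  have hsummable : Summable (fun k : ℕ => J * ρ^k) :=
    (summable_geometric_of_lt_one hρ0.le hρ1).mul_left J
  have hsum : μ (⋃ k : ℕ, ({ω | (2:ℝ)^k < |V₁ ω|} ∩ ({ω | z/(2:ℝ)^(k+1) < |V₂ ω|}
      ∩ {ω | (2:ℝ)^k < |V₃ ω|}))) ≤ ENNReal.ofReal (J * (1-ρ)⁻¹) := by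
    calc μ (⋃ k : ℕ, ({ω | (2:ℝ)^k < |V₁ ω|} ∩ ({ω | z/(2:ℝ)^(k+1) < |V₂ ω|}
          ∩ {ω | (2:ℝ)^k < |V₃ ω|})))
        ≤ ∑' k : ℕ, μ ({ω | (2:ℝ)^k < |V₁ ω|} ∩ ({ω | z/(2:ℝ)^(k+1) < |V₂ ω|}
          ∩ {ω | (2:ℝ)^k < |V₃ ω|})) := measure_iUnion_le _
      _ ≤ ∑' k : ℕ, ENNReal.ofReal (J * ρ^k) := by
          apply ENNReal.tsum_le_tsum
          intro k
          rw [← ENNReal.ofReal_toReal (measure_ne_top μ _)]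
          exact ENNReal.ofReal_le_ofReal (hterm k)
      _ = ENNReal.ofReal (∑' k : ℕ, J * ρ^k) :=
          (ENNReal.ofReal_tsum_of_nonneg
            (fun k => mul_nonneg hJ0 (pow_nonneg hρ0.le k)) hsummable).symm
      _ = ENNReal.ofReal (J * (1-ρ)⁻¹) := by
          rw [tsum_mul_left, tsum_geometric_of_lt_one hρ0.le hρ1]
  have hB : μ {ω | z < |V₂ ω|}
      ≤ ENNReal.ofReal (C₂ * (z ^ (-α) * Real.log z ^ (uexp 1))) := by
    rw [← ENNReal.ofReal_toReal (measure_ne_top μ _)]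
    exact ENNReal.ofReal_le_ofReal (hF₂ z hzT₂)
  have hE : (μ {ω | |V₁ ω * V₂ ω| > z ∧ |V₂ ω * V₃ ω| > z}).toReal
      ≤ C₂ * (z ^ (-α) * Real.log z ^ (uexp 1)) + J * (1-ρ)⁻¹ := by
    have h0 := le_trans (measure_mono (μ := μ) (hincl z hz0)) (measure_union_le (μ := μ) _ _)
    have h1 := le_trans h0 (add_le_add hB hsum)
    rw [← ENNReal.ofReal_add (mul_nonneg hC₂0 hY0) (mul_nonneg hJ0 hS0)] at h1
    exact ENNReal.toReal_le_of_le_ofReal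
      (add_nonneg (mul_nonneg hC₂0 hY0) (mul_nonneg hJ0 hS0)) h1
  -- final computation
  have hXY : (z ^ α * Real.log z ^ (-(uexp 1))) * (z ^ (-α) * Real.log z ^ (uexp 1)) = 1 := by
    have h1 : z ^ α * z ^ (-α) = 1 := by rw [← Real.rpow_add hz0]; simp
    have h2 : Real.log z ^ (-(uexp 1)) * Real.log z ^ (uexp 1) = 1 := by
      rw [← Real.rpow_add hlogz0]; simp
    calc (z ^ α * Real.log z ^ (-(uexp 1))) * (z ^ (-α) * Real.log z ^ (uexp 1))
        = (z ^ α * z ^ (-α)) * (Real.log z ^ (-(uexp 1)) * Real.log z ^ (uexp 1)) := by ring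
      _ = 1 := by rw [h1, h2, one_mul]
  have hXz : (z ^ α * Real.log z ^ (-(uexp 1))) * z ^ (-(9/8*α)) ≤ 1 := by
    have h1 : z ^ α * z ^ (-(9/8*α)) = z ^ (-(1/8*α)) := by
      rw [← Real.rpow_add hz0, show α + -(9/8*α) = -(1/8*α) by ring]
    have h2 : z ^ (-(1/8*α)) ≤ 1 :=
      Real.rpow_le_one_of_one_le_of_nonpos hz1 (by linarith)
    have h3 : Real.log z ^ (-(uexp 1)) ≤ 1 :=
      Real.rpow_le_one_of_one_le_of_nonpos hlogz (neg_nonpos.2 (hu 1))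
    calc (z ^ α * Real.log z ^ (-(uexp 1))) * z ^ (-(9/8*α))
        = (z ^ α * z ^ (-(9/8*α))) * Real.log z ^ (-(uexp 1)) := by ring
      _ = z ^ (-(1/8*α)) * Real.log z ^ (-(uexp 1)) := by rw [h1]
      _ ≤ 1 * 1 := mul_le_mul h2 h3 (Real.rpow_nonneg hlogz0.le _)
          zero_le_one
      _ = 1 := mul_one 1
  have hX0 : (0:ℝ) ≤ z ^ α * Real.log z ^ (-(uexp 1)) :=
    mul_nonneg (Real.rpow_nonneg hz0.le _) (Real.rpow_nonneg hlogz0.le _)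
  calc z ^ α * Real.log z ^ (-(uexp 1))
        * (μ {ω | |V₁ ω * V₂ ω| > z ∧ |V₂ ω * V₃ ω| > z}).toReal
      ≤ (z ^ α * Real.log z ^ (-(uexp 1)))
        * (C₂ * (z ^ (-α) * Real.log z ^ (uexp 1)) + J * (1-ρ)⁻¹) := by
        exact mul_le_mul_of_nonneg_left hE hX0
    _ = C₂ * ((z ^ α * Real.log z ^ (-(uexp 1))) * (z ^ (-α) * Real.log z ^ (uexp 1)))
        + (D*C₂*(2:ℝ)^α) * (1-ρ)⁻¹
          * ((z ^ α * Real.log z ^ (-(uexp 1))) * (z ^ (-α) * Real.log z ^ (uexp 1)))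
        + (D*(2:ℝ)^((3:ℝ)/2*α)) * (1-ρ)⁻¹
          * ((z ^ α * Real.log z ^ (-(uexp 1))) * z ^ (-(9/8*α))) := by
        rw [hJ_def]; ring
    _ ≤ C₂ * 1 + (D*C₂*(2:ℝ)^α) * (1-ρ)⁻¹ * 1
        + (D*(2:ℝ)^((3:ℝ)/2*α)) * (1-ρ)⁻¹ * 1 := by
        rw [hXY]
        have hcoef : (0:ℝ) ≤ (D*(2:ℝ)^((3:ℝ)/2*α)) * (1-ρ)⁻¹ :=
          mul_nonneg (mul_nonneg hD0 (Real.rpow_nonneg (le_of_lt two_pos) _)) hS0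
        have := mul_le_mul_of_nonneg_left hXz hcoef
        linarith
    _ = C₂ + (D*C₂*(2:ℝ)^α) * (1-ρ)⁻¹ + (D*(2:ℝ)^((3:ℝ)/2*α)) * (1-ρ)⁻¹ := by ring
end

section
/- Let x_n^i → x^i in the J₁ topology on D([0,1]; ℝ^q) for i = 1, …, d, and suppose that for every pair i ≠ j the limits x^i and x^j have no common discontinuity points. Then the sums ∑_{i=1}^d x_n^i converge in the J₁ topology of D([0,1]; ℝ^q) to ∑_{i=1}^d x^i. -/
open Filter

/-- A function on `[0,1]` is càdlàg: right continuous everywhere, has left limits at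
every point other than `0`, and is left continuous at `1`. -/
def Cadlag {X : Type*} [TopologicalSpace X] (f : unitInterval → X) : Prop :=
  (∀ t, ContinuousWithinAt f (Set.Ici t) t) ∧
  (∀ t : unitInterval, t ≠ 0 → ∃ L, Tendsto f (nhdsWithin t (Set.Iio t)) (nhds L)) ∧
  Tendsto f (nhdsWithin 1 (Set.Iio 1)) (nhds (f 1))

/-- Convergence in the Skorokhod `J₁` topology on `D([0,1]; X)`. -/
def J1Tendsto {X : Type*} [PseudoMetricSpace X]
    (xn : ℕ → unitInterval → X) (x : unitInterval → X) : Prop :=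
  ∃ lam : ℕ → unitInterval → unitInterval,
    (∀ n, Function.Bijective (lam n) ∧ StrictMono (lam n)) ∧
    ∀ ε > (0 : ℝ), ∀ᶠ n in atTop, ∀ t,
      |((lam n t : ℝ)) - (t : ℝ)| < ε ∧ dist (xn n (lam n t)) (x t) < ε

open Set

namespace J1Sum

variable {X : Type*} [PseudoMetricSpace X]

lemma chain_strict {α : Type*} [Preorder α] {s : ℕ → α} {K : ℕ}
    (h : ∀ j < K, s j < s (j+1)) : ∀ a b, a < b → b ≤ K → s a < s b := by
  intro a b hab hbK
  induction b with
  | zero => omega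
  | succ b ih =>
    rcases Nat.lt_succ_iff_lt_or_eq.mp hab with h1 | h1
    · exact (ih h1 (by omega)).trans (h b (by omega))
    · subst h1; exact h a (by omega)

lemma chain_mono {α : Type*} [Preorder α] {s : ℕ → α} {K : ℕ}
    (h : ∀ j < K, s j < s (j+1)) : ∀ a b, a ≤ b → b ≤ K → s a ≤ s b := by
  intro a b hab hbK
  rcases eq_or_lt_of_le hab with rfl | h1
  · exact le_refl _
  · exact (chain_strict h a b h1 hbK).le

lemma cadlag_continuousAt_zero {f : unitInterval → X} (hf : Cadlag f) :
    ContinuousAt f 0 := by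
  have h := hf.1 0
  have : Set.Ici (0 : unitInterval) = Set.univ := by
    ext t; simp [unitInterval.nonneg]
  rwa [ContinuousWithinAt, this, nhdsWithin_univ] at h

lemma cadlag_continuousAt_one {f : unitInterval → X} (hf : Cadlag f) :
    ContinuousAt f 1 := by
  have h1 : Tendsto f (nhdsWithin 1 (Set.Iio 1)) (nhds (f 1)) := hf.2.2
  have h2 : Tendsto f (pure (1 : unitInterval)) (nhds (f 1)) := tendsto_pure_nhds f 1
  have h3 : Tendsto f (nhdsWithin 1 (Set.Iio 1) ⊔ pure 1) (nhds (f 1)) :=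
    tendsto_sup.2 ⟨h1, h2⟩
  have h5 : Set.Iio (1 : unitInterval) = {(1:unitInterval)}ᶜ := by
    ext t
    simp only [Set.mem_Iio, Set.mem_compl_iff, Set.mem_singleton_iff]
    constructor
    · intro ht; exact ne_of_lt ht
    · intro ht; exact lt_of_le_of_ne unitInterval.le_one' ht
  rw [h5] at h3
  rwa [nhdsNE_sup_pure] at h3

lemma dist_le_of_cont (f : unitInterval → X) {p u : unitInterval} (hc : ContinuousAt f p)
    (hup : u < p) {ε : ℝ} (h : ∀ w, u ≤ w → w < p → dist (f w) (f u) ≤ ε) :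
    dist (f p) (f u) ≤ ε := by
  haveI : (nhdsWithin p (Set.Iio p)).NeBot := nhdsWithin_Iio_self_neBot' ⟨u, hup⟩
  have h1 : Tendsto (fun w => dist (f w) (f u)) (nhdsWithin p (Set.Iio p))
      (nhds (dist (f p) (f u))) :=
    (hc.continuousWithinAt.tendsto).dist tendsto_const_nhds
  have h2 : ∀ᶠ w in nhdsWithin p (Set.Iio p), dist (f w) (f u) ≤ ε := by
    filter_upwards [self_mem_nhdsWithin,
      mem_nhdsWithin_of_mem_nhds (Ici_mem_nhds hup)] with w hw1 hw2
    exact h w hw2 hw1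
  exact le_of_tendsto h1 h2

lemma j1_of_eventually (xn : ℕ → unitInterval → X) (x : unitInterval → X)
    (h : ∀ ε > (0:ℝ), ∀ᶠ n in atTop, ∃ l : unitInterval → unitInterval,
      (Function.Bijective l ∧ StrictMono l) ∧
      ∀ t, |((l t : ℝ)) - (t:ℝ)| < ε ∧ dist (xn n (l t)) (x t) < ε) :
    J1Tendsto xn x := by
  classical
  have h' : ∀ m : ℕ, ∃ N : ℕ, ∀ n ≥ N, ∃ l : unitInterval → unitInterval,
      (Function.Bijective l ∧ StrictMono l) ∧
      ∀ t, |((l t : ℝ)) - (t:ℝ)| < 1/(m+1) ∧ dist (xn n (l t)) (x t) < 1/(m+1) := by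
    intro m
    exact eventually_atTop.mp (h (1/(m+1)) (by positivity))
  choose N hN using h'
  set N' : ℕ → ℕ := fun m => (Finset.range (m+1)).sup N with hN'def
  have hNN' : ∀ m, N m ≤ N' m := fun m =>
    Finset.le_sup (Finset.mem_range.mpr (Nat.lt_succ_self m))
  set M : ℕ → ℕ := fun n => Nat.findGreatest (fun m => N' m ≤ n) n with hMdef
  have hlam : ∀ n : ℕ, ∃ l : unitInterval → unitInterval,
      (Function.Bijective l ∧ StrictMono l) ∧
      (N' (M n) ≤ n → ∀ t, |((l t : ℝ)) - (t:ℝ)| < 1/(M n + 1) ∧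
        dist (xn n (l t)) (x t) < 1/(M n + 1)) := by
    intro n
    by_cases hn : N' (M n) ≤ n
    · obtain ⟨l, hl1, hl2⟩ := hN (M n) n (le_trans (hNN' _) hn)
      exact ⟨l, hl1, fun _ => hl2⟩
    · exact ⟨id, ⟨Function.bijective_id, strictMono_id⟩, fun hc => absurd hc hn⟩
  choose lam hlam1 hlam2 using hlam
  refine ⟨lam, hlam1, ?_⟩
  intro ε hε
  obtain ⟨m, hm⟩ := exists_nat_one_div_lt hε
  rw [eventually_atTop]
  refine ⟨max (N' m) m, fun n hn => ?_⟩
  have hmn : m ≤ n := le_trans (le_max_right _ _) hn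
  have hN'mn : N' m ≤ n := le_trans (le_max_left _ _) hn
  have hmM : m ≤ M n := Nat.le_findGreatest hmn hN'mn
  have hspec : N' (M n) ≤ n := by
    have := Nat.findGreatest_spec (P := fun k => N' k ≤ n) hmn hN'mn
    simpa [hMdef] using this
  intro t
  have hb : 1/((M n : ℝ) + 1) ≤ 1/((m:ℝ)+1) := by
    apply one_div_le_one_div_of_le (by positivity)
    exact_mod_cast Nat.succ_le_succ hmM
  obtain ⟨h1, h2⟩ := hlam2 n hspec t
  exact ⟨h1.trans_le (hb.trans hm.le), h2.trans_le (hb.trans hm.le)⟩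



def PartProp (f : unitInterval → X) (ε : ℝ) (a : unitInterval) : Prop :=
  ∃ (K : ℕ) (s : ℕ → unitInterval), 0 < K ∧ s 0 = 0 ∧ s K = a ∧
    (∀ j < K, s j < s (j+1)) ∧
    (∀ j < K, ∀ u v : unitInterval, s j ≤ u → u < s (j+1) → s j ≤ v → v < s (j+1) →
      dist (f u) (f v) ≤ ε)

lemma partition_extend {f : unitInterval → X} {ε : ℝ} {a b : unitInterval} (hab : a < b)
    (hQ : PartProp f ε a)
    (hosc : ∀ u v : unitInterval, a ≤ u → u < b → a ≤ v → v < b → dist (f u) (f v) ≤ ε) :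
    PartProp f ε b := by
  obtain ⟨K, s, hK, h0, hKa, hchain, hoscs⟩ := hQ
  set s' : ℕ → unitInterval := fun j => if j ≤ K then s j else b with hs'
  have hs'eq : ∀ j, j ≤ K → s' j = s j := fun j hj => by simp [hs', hj]
  have hs'top : ∀ j, ¬ j ≤ K → s' j = b := fun j hj => by simp [hs', hj]
  refine ⟨K+1, s', by omega, ?_, ?_, ?_, ?_⟩
  · rw [hs'eq 0 (by omega)]; exact h0
  · rw [hs'top (K+1) (by omega)]
  · intro j hj
    by_cases h1 : j < K
    · rw [hs'eq j (by omega), hs'eq (j+1) (by omega)]; exact hchain j h1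
    · have hjK : j = K := by omega
      subst hjK
      rw [hs'eq j le_rfl, hs'top (j+1) (by omega), hKa]; exact hab
  · intro j hj u v hu1 hu2 hv1 hv2
    by_cases h1 : j < K
    · rw [hs'eq j (by omega)] at hu1 hv1
      rw [hs'eq (j+1) (by omega)] at hu2 hv2
      exact hoscs j h1 u v hu1 hu2 hv1 hv2
    · have hjK : j = K := by omega
      subst hjK
      rw [hs'eq j le_rfl, hKa] at hu1 hv1
      rw [hs'top (j+1) (by omega)] at hu2 hv2
      exact hosc u v hu1 hu2 hv1 hv2

lemma exists_partition (f : unitInterval → X) (hf : Cadlag f) {ε : ℝ} (hε : 0 < ε) :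
    PartProp f ε 1 := by
  classical
  set A : Set ℝ := {r | ∃ a : unitInterval, PartProp f ε a ∧ (a : ℝ) = r} with hA
  obtain ⟨δ, hδ, hδ2⟩ := Metric.continuousAt_iff.mp (cadlag_continuousAt_zero hf) (ε/2) (half_pos hε)
  set a0 : unitInterval := ⟨min δ 1, le_min hδ.le zero_le_one, min_le_right _ _⟩ with ha0
  have ha0pos : (0 : ℝ) < (a0 : ℝ) := lt_min hδ zero_lt_one
  have hQa0 : PartProp f ε a0 := by
    set s0 : ℕ → unitInterval := fun j => if j = 0 then 0 else a0 with hs0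
    have hs0z : s0 0 = 0 := by simp [hs0]
    have hs0o : s0 1 = a0 := by simp [hs0]
    refine ⟨1, s0, one_pos, hs0z, hs0o, ?_, ?_⟩
    · intro j hj
      have hj0 : j = 0 := by omega
      subst hj0
      rw [hs0z, hs0o]
      exact Subtype.mk_lt_mk.mpr (by simpa using hδ)
    · intro j hj u v hu1 hu2 hv1 hv2
      have hj0 : j = 0 := by omega
      subst hj0
      rw [hs0z] at hu1 hv1
      rw [hs0o] at hu2 hv2
      have hud : dist u (0 : unitInterval) < δ := by
        rw [Subtype.dist_eq, Real.dist_eq]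
        simp only [Set.Icc.coe_zero, sub_zero]
        rw [abs_of_nonneg u.2.1]
        exact lt_of_lt_of_le (Subtype.coe_lt_coe.mpr hu2) (min_le_left _ _)
      have hvd : dist v (0 : unitInterval) < δ := by
        rw [Subtype.dist_eq, Real.dist_eq]
        simp only [Set.Icc.coe_zero, sub_zero]
        rw [abs_of_nonneg v.2.1]
        exact lt_of_lt_of_le (Subtype.coe_lt_coe.mpr hv2) (min_le_left _ _)
      have e1 := hδ2 hud
      have e2 := hδ2 hvd
      calc dist (f u) (f v) ≤ dist (f u) (f 0) + dist (f 0) (f v) := dist_triangle _ _ _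
        _ ≤ ε/2 + ε/2 := by rw [dist_comm (f 0) (f v)]; linarith
        _ = ε := by ring
  have hAne : A.Nonempty := ⟨(a0 : ℝ), a0, hQa0, rfl⟩
  have hAbdd : BddAbove A := by
    refine ⟨1, fun r hr => ?_⟩
    obtain ⟨a, _, rfl⟩ := hr
    exact a.2.2
  set c : ℝ := sSup A with hc
  have hc1 : c ≤ 1 := csSup_le hAne (by rintro r ⟨a, _, rfl⟩; exact a.2.2)
  have hc0 : 0 < c := lt_of_lt_of_le ha0pos (le_csSup hAbdd ⟨a0, hQa0, rfl⟩)
  set tc : unitInterval := ⟨c, hc0.le, hc1⟩ with htc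
  have htcne : tc ≠ 0 := by
    intro h
    rw [Subtype.ext_iff] at h
    simp only [htc, Set.Icc.coe_zero] at h
    exact absurd h (ne_of_gt hc0)
  have hQc : PartProp f ε tc := by
    obtain ⟨L, hL⟩ := hf.2.1 tc htcne
    have hev : ∀ᶠ w in nhdsWithin tc (Set.Iio tc), dist (f w) L < ε/2 :=
      hL (Metric.ball_mem_nhds L (half_pos hε))
    rw [Filter.eventually_iff, Metric.mem_nhdsWithin_iff] at hev
    obtain ⟨δ', hδ', hsub⟩ := hev
    obtain ⟨r, hrA, hrlt⟩ := exists_lt_of_lt_csSup hAne (by linarith : c - δ' < c)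
    obtain ⟨a, hQa, rfl⟩ := hrA
    have hac : (a : ℝ) ≤ c := le_csSup hAbdd ⟨a, hQa, rfl⟩
    rcases eq_or_lt_of_le hac with h1 | h1
    · have : a = tc := Subtype.ext h1
      rwa [this] at hQa
    · refine partition_extend (Subtype.coe_lt_coe.mp h1) hQa ?_
      intro u v hu1 hu2 hv1 hv2
      have hmem : ∀ w : unitInterval, a ≤ w → w < tc → dist (f w) L < ε/2 := by
        intro w hw1 hw2
        apply hsub
        constructor
        · rw [Metric.mem_ball, Subtype.dist_eq, Real.dist_eq]
          have hw2' : (w : ℝ) < c := Subtype.coe_lt_coe.mpr hw2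
          have hw1' : (a : ℝ) ≤ (w : ℝ) := Subtype.coe_le_coe.mpr hw1
          rw [abs_of_nonpos (by linarith)]
          linarith
        · exact hw2
      have e1 := hmem u hu1 hu2
      have e2 := hmem v hv1 hv2
      calc dist (f u) (f v) ≤ dist (f u) L + dist L (f v) := dist_triangle _ _ _
        _ ≤ ε/2 + ε/2 := by rw [dist_comm L (f v)]; linarith
        _ = ε := by ring
  have hceq : c = 1 := by
    by_contra hne
    have hclt : c < 1 := lt_of_le_of_ne hc1 hne
    have hrc : Tendsto f (nhdsWithin tc (Set.Ici tc)) (nhds (f tc)) := hf.1 tc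
    have hev : ∀ᶠ w in nhdsWithin tc (Set.Ici tc), dist (f w) (f tc) < ε/2 :=
      hrc (Metric.ball_mem_nhds _ (half_pos hε))
    rw [Filter.eventually_iff, Metric.mem_nhdsWithin_iff] at hev
    obtain ⟨δ', hδ', hsub⟩ := hev
    set b : ℝ := min (c + δ'/2) 1 with hb
    have hcb : c < b := lt_min (by linarith) hclt
    set tb : unitInterval := ⟨b, le_trans hc0.le hcb.le, min_le_right _ _⟩ with htb
    have hQb : PartProp f ε tb := by
      refine partition_extend (Subtype.mk_lt_mk.mpr hcb) hQc ?_
      intro u v hu1 hu2 hv1 hv2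
      have hmem : ∀ w : unitInterval, tc ≤ w → w < tb → dist (f w) (f tc) < ε/2 := by
        intro w hw1 hw2
        apply hsub
        constructor
        · rw [Metric.mem_ball, Subtype.dist_eq, Real.dist_eq]
          have h2 : (w : ℝ) < b := Subtype.coe_lt_coe.mpr hw2
          have h3 : b ≤ c + δ'/2 := min_le_left _ _
          have h4 : c ≤ (w : ℝ) := Subtype.coe_le_coe.mpr hw1
          rw [abs_of_nonneg (by linarith)]
          linarith
        · exact hw1
      have e1 := hmem u hu1 hu2
      have e2 := hmem v hv1 hv2
      calc dist (f u) (f v) ≤ dist (f u) (f tc) + dist (f tc) (f v) := dist_triangle _ _ _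
        _ ≤ ε/2 + ε/2 := by rw [dist_comm (f tc) (f v)]; linarith
        _ = ε := by ring
    have : b ≤ c := le_csSup hAbdd ⟨tb, hQb, rfl⟩
    linarith
  have htc1 : tc = 1 := Subtype.ext (by simpa [htc] using hceq)
  rwa [htc1] at hQc


lemma chain_strict' {α : Type*} [Preorder α] {s : ℕ → α} {K : ℕ}
    (h : ∀ j < K, s j < s (j+1)) : ∀ a b, a < b → b ≤ K → s a < s b := by
  intro a b hab hbK
  induction b with
  | zero => omega
  | succ b ih =>
    rcases Nat.lt_succ_iff_lt_or_eq.mp hab with h1 | h1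
    · exact (ih h1 (by omega)).trans (h b (by omega))
    · subst h1; exact h a (by omega)

lemma chain_mono' {α : Type*} [Preorder α] {s : ℕ → α} {K : ℕ}
    (h : ∀ j < K, s j < s (j+1)) : ∀ a b, a ≤ b → b ≤ K → s a ≤ s b := by
  intro a b hab hbK
  rcases eq_or_lt_of_le hab with rfl | h1
  · exact le_refl _
  · exact (chain_strict' h a b h1 hbK).le

lemma exists_pl (K : ℕ) (hK : 0 < K) (p v : ℕ → unitInterval)
    (hp0 : p 0 = 0) (hpK : p K = 1) (hv0 : v 0 = 0) (hvK : v K = 1)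
    (hpc : ∀ j < K, p j < p (j+1)) (hvc : ∀ j < K, v j < v (j+1))
    {δ : ℝ} (hδ : ∀ k ≤ K, |(v k : ℝ) - (p k : ℝ)| ≤ δ) :
    ∃ l : unitInterval → unitInterval, Function.Bijective l ∧ StrictMono l ∧
      (∀ k ≤ K, l (p k) = v k) ∧ (∀ t, |((l t : ℝ)) - (t : ℝ)| ≤ δ) := by
  classical
  set pr : ℕ → ℝ := fun j => (p j : ℝ) with hprdef
  set vr : ℕ → ℝ := fun j => (v j : ℝ) with hvrdef
  have hpr0 : pr 0 = 0 := by simp [hprdef, hp0]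
  have hprK : pr K = 1 := by simp [hprdef, hpK]
  have hvr0 : vr 0 = 0 := by simp [hvrdef, hv0]
  have hvrK : vr K = 1 := by simp [hvrdef, hvK]
  have hprc : ∀ j < K, pr j < pr (j+1) := fun j hj => Subtype.coe_lt_coe.mpr (hpc j hj)
  have hvrc : ∀ j < K, vr j < vr (j+1) := fun j hj => Subtype.coe_lt_coe.mpr (hvc j hj)
  have hprm : ∀ a b, a ≤ b → b ≤ K → pr a ≤ pr b := chain_mono' hprc
  have hvrm : ∀ a b, a ≤ b → b ≤ K → vr a ≤ vr b := chain_mono' hvrc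
  have hprs : ∀ a b, a < b → b ≤ K → pr a < pr b := chain_strict' hprc
  have hvrs : ∀ a b, a < b → b ≤ K → vr a < vr b := chain_strict' hvrc
  set kk : unitInterval → ℕ := fun t => Nat.findGreatest (fun j => pr j ≤ (t:ℝ)) (K-1)
    with hkkdef
  have hkkval : ∀ t : unitInterval, kk t = Nat.findGreatest (fun j => pr j ≤ (t:ℝ)) (K-1) :=
    fun t => by simp only [hkkdef]
  have hkle : ∀ t : unitInterval, kk t ≤ K - 1 := by
    intro t
    simp only [hkkdef]
    exact Nat.findGreatest_le _
  have hkK : ∀ t : unitInterval, kk t + 1 ≤ K := fun t => by have := hkle t; omega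
  have hklow : ∀ t : unitInterval, pr (kk t) ≤ (t:ℝ) := by
    intro t
    have h0 : (fun j => pr j ≤ (t:ℝ)) 0 := by simpa [hpr0] using t.2.1
    have h1 : (fun j => pr j ≤ (t:ℝ)) (kk t) := by
      rw [hkkval]
      exact Nat.findGreatest_spec (P := fun j => pr j ≤ (t:ℝ)) (Nat.zero_le _) h0
    exact h1
  have hkhighs : ∀ t : unitInterval, kk t < K - 1 → (t:ℝ) < pr (kk t + 1) := by
    intro t h
    by_contra hc
    push_neg at hc
    have h2 : kk t + 1 ≤ kk t := by
      conv_rhs => rw [hkkval]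
      exact Nat.le_findGreatest (P := fun j => pr j ≤ (t:ℝ)) (by omega) hc
    omega
  have hkhigh : ∀ t : unitInterval, (t:ℝ) ≤ pr (kk t + 1) := by
    intro t
    by_cases h : kk t < K - 1
    · exact (hkhighs t h).le
    · have : kk t + 1 = K := by have := hkle t; omega
      rw [this, hprK]; exact t.2.2
  have hden : ∀ t : unitInterval, 0 < pr (kk t + 1) - pr (kk t) := fun t =>
    sub_pos.mpr (hprs _ _ (Nat.lt_succ_self _) (hkK t))
  set θ : unitInterval → ℝ := fun t => ((t:ℝ) - pr (kk t)) / (pr (kk t + 1) - pr (kk t))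
    with hθdef
  have hθ0 : ∀ t : unitInterval, 0 ≤ θ t := fun t =>
    div_nonneg (sub_nonneg.mpr (hklow t)) (hden t).le
  have hθ1 : ∀ t : unitInterval, θ t ≤ 1 := fun t =>
    (div_le_one (hden t)).mpr (by linarith [hkhigh t, hklow t])
  have hθmul : ∀ t : unitInterval, θ t * (pr (kk t + 1) - pr (kk t)) = (t:ℝ) - pr (kk t) := fun t =>
    div_mul_cancel₀ _ (ne_of_gt (hden t))
  have ht : ∀ t : unitInterval, (t:ℝ) = (1 - θ t) * pr (kk t) + θ t * pr (kk t + 1) := by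
    intro t
    have h1 := hθmul t
    nlinarith [h1]
  set g : unitInterval → ℝ := fun t => (1 - θ t) * vr (kk t) + θ t * vr (kk t + 1)
    with hgdef
  have hglb : ∀ t : unitInterval, vr (kk t) ≤ g t := by
    intro t
    have h1 : vr (kk t) ≤ vr (kk t + 1) := hvrm _ _ (Nat.le_succ _) (hkK t)
    have := hθ0 t
    simp only [hgdef]
    nlinarith
  have hgub : ∀ t : unitInterval, g t ≤ vr (kk t + 1) := by
    intro t
    have h1 : vr (kk t) ≤ vr (kk t + 1) := hvrm _ _ (Nat.le_succ _) (hkK t)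
    have := hθ1 t
    simp only [hgdef]
    nlinarith
  have hg01 : ∀ t : unitInterval, g t ∈ Set.Icc (0:ℝ) 1 := by
    intro t
    constructor
    · have : (0:ℝ) = vr 0 := hvr0.symm
      rw [this] at *
      exact le_trans (hvrm 0 (kk t) (Nat.zero_le _) (by have := hkK t; omega)) (hglb t)
    · exact le_trans (hgub t) (by rw [← hvrK]; exact hvrm _ _ (hkK t) le_rfl)
  set l : unitInterval → unitInterval := fun t => ⟨g t, hg01 t⟩ with hldef
  have hkmono : ∀ {t t' : unitInterval}, t ≤ t' → kk t ≤ kk t' := by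
    intro t t' htt'
    rw [hkkval, hkkval]
    exact Nat.findGreatest_mono (P := fun j => pr j ≤ (t:ℝ)) (Q := fun j => pr j ≤ (t':ℝ)) (fun j hj => le_trans hj (Subtype.coe_le_coe.mpr htt')) le_rfl
  have lmono : StrictMono l := by
    intro t t' htt'
    have hkk' : kk t ≤ kk t' := hkmono htt'.le
    rw [Subtype.mk_lt_mk]
    rcases eq_or_lt_of_le hkk' with heq | hlt
    · have hθlt : θ t < θ t' := by
        simp only [hθdef, ← heq]
        exact div_lt_div_of_pos_right (by
          have := Subtype.coe_lt_coe.mpr htt'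
          linarith) (hden t)
      have h1 : vr (kk t) < vr (kk t + 1) := hvrs _ _ (Nat.lt_succ_self _) (hkK t)
      show g t < g t'
      simp only [hgdef, ← heq]
      nlinarith [hθlt, h1]
    · -- kk t < kk t'
      have hkt1 : kk t < K - 1 := by have := hkle t'; omega
      have hθs : θ t < 1 := (div_lt_one (hden t)).mpr (by linarith [hkhighs t hkt1, hklow t])
      have h1 : vr (kk t) < vr (kk t + 1) := hvrs _ _ (Nat.lt_succ_self _) (hkK t)
      have h2 : g t < vr (kk t + 1) := by simp only [hgdef]; nlinarith
      have h3 : vr (kk t + 1) ≤ vr (kk t') := hvrm _ _ hlt (by have := hkK t'; omega)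
      exact lt_of_lt_of_le (lt_of_lt_of_le h2 h3) (hglb t')
  -- remaining parts
  have hpreq : ∀ j, pr j = (p j : ℝ) := fun j => by simp [hprdef]
  have hvreq : ∀ j, vr j = (v j : ℝ) := fun j => by simp [hvrdef]
  have hkknot : ∀ j, j < K → kk (p j) = j := by
    intro j hj
    have hge : j ≤ kk (p j) := by
      rw [hkkval]
      apply Nat.le_findGreatest (by omega)
      show pr j ≤ ((p j : unitInterval) : ℝ)
      rw [hpreq j]
    have hle : kk (p j) ≤ j := by
      by_contra hc
      push_neg at hc
      have h1 : pr (kk (p j)) ≤ ((p j : unitInterval):ℝ) := hklow (p j)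
      have h2 : pr j < pr (kk (p j)) := hprs j _ hc (by have := hkle (p j); omega)
      rw [hpreq j] at h2
      linarith
    omega
  have hknot : ∀ j, j ≤ K → l (p j) = v j := by
    intro j hj
    rcases lt_or_eq_of_le hj with hjK | hjK
    · have hkj := hkknot j hjK
      apply Subtype.ext
      have hθz : θ (p j) = 0 := by
        simp only [hθdef, hkj]
        rw [← hpreq j, sub_self, zero_div]
      show g (p j) = vr j
      simp only [hgdef, hkj, hθz]
      ring
    · subst hjK
      have hkp1 : kk (p j) = j - 1 := by
        have h1 : j - 1 ≤ kk (p j) := by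
          rw [hkkval]
          apply Nat.le_findGreatest le_rfl
          show pr (j-1) ≤ ((p j : unitInterval):ℝ)
          rw [← hpreq j]
          exact hprm (j-1) j (by omega) le_rfl
        have h2 := hkle (p j)
        omega
      apply Subtype.ext
      have hsucc : j - 1 + 1 = j := by omega
      have hd : pr j - pr (j-1) ≠ 0 :=
        ne_of_gt (sub_pos.mpr (hprs (j-1) j (by omega) le_rfl))
      have hθ1' : θ (p j) = 1 := by
        simp only [hθdef, hkp1, hsucc]
        rw [← hpreq j]
        exact div_self hd
      show g (p j) = vr j
      simp only [hgdef, hkp1, hθ1', hsucc]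
      ring
  have hsurj : Function.Surjective l := by
    intro y
    set jj : ℕ := Nat.findGreatest (fun m => vr m ≤ (y:ℝ)) (K-1) with hjjdef
    have hjle : jj ≤ K - 1 := Nat.findGreatest_le _
    have hjlow : vr jj ≤ (y:ℝ) := by
      have h0 : (fun m => vr m ≤ (y:ℝ)) 0 := by simpa [hvr0] using y.2.1
      have h1 : (fun m => vr m ≤ (y:ℝ)) jj := by
        rw [hjjdef]
        exact Nat.findGreatest_spec (P := fun m => vr m ≤ (y:ℝ)) (Nat.zero_le _) h0
      exact h1
    have hjhighs : jj < K - 1 → (y:ℝ) < vr (jj + 1) := by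
      intro h
      by_contra hc
      push_neg at hc
      have h2 : jj + 1 ≤ jj := by
        conv_rhs => rw [hjjdef]
        exact Nat.le_findGreatest (P := fun m => vr m ≤ (y:ℝ)) (by omega) hc
      omega
    have hjhigh : (y:ℝ) ≤ vr (jj + 1) := by
      by_cases h : jj < K - 1
      · exact (hjhighs h).le
      · have he : jj + 1 = K := by omega
        rw [he, hvrK]; exact y.2.2
    have hjK : jj + 1 ≤ K := by omega
    have hvden : 0 < vr (jj+1) - vr jj :=
      sub_pos.mpr (hvrs _ _ (Nat.lt_succ_self _) hjK)
    have hpden : 0 < pr (jj+1) - pr jj :=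
      sub_pos.mpr (hprs _ _ (Nat.lt_succ_self _) hjK)
    set φ : ℝ := ((y:ℝ) - vr jj) / (vr (jj+1) - vr jj) with hφdef
    have hφ0 : 0 ≤ φ := div_nonneg (by linarith) hvden.le
    have hφ1 : φ ≤ 1 := (div_le_one hvden).mpr (by linarith)
    have hφmul : φ * (vr (jj+1) - vr jj) = (y:ℝ) - vr jj :=
      div_mul_cancel₀ _ (ne_of_gt hvden)
    set tr : ℝ := (1 - φ) * pr jj + φ * pr (jj+1) with htrdef
    have htr1 : pr jj ≤ tr := by nlinarith
    have htr2 : tr ≤ pr (jj+1) := by nlinarith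
    have htrmem : tr ∈ Set.Icc (0:ℝ) 1 := by
      constructor
      · exact le_trans (by rw [← hpr0]; exact hprm 0 jj (Nat.zero_le _) (by omega)) htr1
      · exact le_trans htr2 (by rw [← hprK]; exact hprm (jj+1) K hjK le_rfl)
    set t : unitInterval := ⟨tr, htrmem⟩ with htdef
    have htcoe : ((t : unitInterval) : ℝ) = tr := rfl
    have hkt : kk t = jj := by
      have hge : jj ≤ kk t := by
        rw [hkkval]
        exact Nat.le_findGreatest hjle (by rw [htcoe]; exact htr1)
      have hle2 : kk t ≤ jj := by
        by_contra hc
        push_neg at hc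
        have hjlt : jj < K - 1 := by have := hkle t; omega
        have hys : (y:ℝ) < vr (jj+1) := hjhighs hjlt
        have hφs : φ < 1 := (div_lt_one hvden).mpr (by linarith)
        have htrs : tr < pr (jj+1) := by nlinarith
        have h1 : pr (kk t) ≤ tr := by rw [← htcoe]; exact hklow t
        have h2 : pr (jj+1) ≤ pr (kk t) :=
          hprm (jj+1) (kk t) (by omega) (by have := hkle t; omega)
        linarith
      omega
    refine ⟨t, ?_⟩
    apply Subtype.ext
    show g t = (y:ℝ)
    have hθt : θ t = φ := by
      simp only [hθdef, hkt, htcoe]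
      have he2 : tr - pr jj = φ * (pr (jj+1) - pr jj) := by rw [htrdef]; ring
      rw [he2, mul_div_assoc, div_self (ne_of_gt hpden), mul_one]
    simp only [hgdef, hkt, hθt]
    linear_combination hφmul
  have hbound : ∀ t : unitInterval, |((l t : ℝ)) - (t:ℝ)| ≤ δ := by
    intro t
    have hδ0 : 0 ≤ δ := le_trans (abs_nonneg _) (hδ 0 (Nat.zero_le _))
    have hlcoe : ((l t : unitInterval) : ℝ) = g t := rfl
    have he : g t - (t:ℝ) = (1 - θ t) * (vr (kk t) - pr (kk t))
        + θ t * (vr (kk t + 1) - pr (kk t + 1)) := by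
      rw [ht t]; simp only [hgdef]; ring
    rw [hlcoe, he]
    have h1 : |vr (kk t) - pr (kk t)| ≤ δ := by
      rw [hvreq, hpreq]; exact hδ (kk t) (by have := hkK t; omega)
    have h2 : |vr (kk t + 1) - pr (kk t + 1)| ≤ δ := by
      rw [hvreq, hpreq]; exact hδ (kk t + 1) (hkK t)
    calc |(1 - θ t) * (vr (kk t) - pr (kk t)) + θ t * (vr (kk t + 1) - pr (kk t + 1))|
        ≤ |(1 - θ t) * (vr (kk t) - pr (kk t))|
          + |θ t * (vr (kk t + 1) - pr (kk t + 1))| := abs_add_le _ _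
      _ = (1 - θ t) * |vr (kk t) - pr (kk t)|
          + θ t * |vr (kk t + 1) - pr (kk t + 1)| := by
          rw [abs_mul, abs_mul, abs_of_nonneg (by linarith [hθ1 t]), abs_of_nonneg (hθ0 t)]
      _ ≤ (1 - θ t) * δ + θ t * δ := add_le_add
          (mul_le_mul_of_nonneg_left h1 (by linarith [hθ1 t]))
          (mul_le_mul_of_nonneg_left h2 (hθ0 t))
      _ = δ := by ring
  exact ⟨l, ⟨lmono.injective, hsurj⟩, lmono, fun k hk => hknot k hk, hbound⟩

lemma osc_est (f : unitInterval → X) {ε γ : ℝ}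
    (K : ℕ) (s : ℕ → unitInterval) (hK : 0 < K) (hs0 : s 0 = 0) (hsK : s K = 1)
    (hchain : ∀ j < K, s j < s (j+1))
    (hosc : ∀ j < K, ∀ u v : unitInterval, s j ≤ u → u < s (j+1) → s j ≤ v →
      v < s (j+1) → dist (f u) (f v) ≤ ε)
    (hγ : ∀ j < K, γ ≤ (s (j+1) : ℝ) - (s j : ℝ))
    (u w : unitInterval) (huw : u ≤ w) (hgap : (w:ℝ) - (u:ℝ) < γ)
    (hD : ∀ j ≤ K, ¬ ContinuousAt f (s j) → ¬ (u < s j ∧ s j ≤ w)) :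
    dist (f u) (f w) ≤ 2 * ε := by
  classical
  have hε0 : 0 ≤ ε := by
    have := hosc 0 hK 0 0 (le_of_eq hs0) (by rw [← hs0]; exact hchain 0 hK)
      (le_of_eq hs0) (by rw [← hs0]; exact hchain 0 hK)
    simpa using this
  set jj : ℕ := Nat.findGreatest (fun j => s j ≤ u) K with hjjdef
  have hjle : jj ≤ K := Nat.findGreatest_le _
  have hjlow : s jj ≤ u := by
    have h0 : (fun j => s j ≤ u) 0 := by
      show s 0 ≤ u
      rw [hs0]; exact u.2.1
    have h1 : (fun j => s j ≤ u) jj := by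
      rw [hjjdef]
      exact Nat.findGreatest_spec (P := fun j => s j ≤ u) (Nat.zero_le _) h0
    exact h1
  rcases eq_or_lt_of_le hjle with hjK | hjK
  · -- jj = K : u = 1 = w
    have hu1 : u = 1 := le_antisymm u.2.2 (by rw [← hsK, ← hjK]; exact_mod_cast hjlow)
    have hw1 : w = 1 := le_antisymm w.2.2 (by rw [← hu1]; exact huw)
    rw [hu1, hw1]
    simp only [dist_self]
    positivity
  · -- jj < K
    have hjhigh : u < s (jj + 1) := by
      by_contra hc
      push_neg at hc
      have h2 : jj + 1 ≤ jj := by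
        conv_rhs => rw [hjjdef]
        exact Nat.le_findGreatest (P := fun j => s j ≤ u) (by omega) hc
      omega
    by_cases hw2 : w < s (jj + 1)
    · -- same window
      have := hosc jj hjK u w hjlow hjhigh (le_trans hjlow huw) hw2
      linarith
    · push_neg at hw2
      -- s (jj+1) ≤ w
      have hup : u < s (jj + 1) := hjhigh
      have hcont : ContinuousAt f (s (jj + 1)) := by
        by_contra hc
        exact hD (jj+1) (by omega) hc ⟨hup, hw2⟩
      have hfirst : dist (f (s (jj+1))) (f u) ≤ ε := by
        apply dist_le_of_cont f hcont hup
        intro z hz1 hz2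
        exact hosc jj hjK z u (le_trans hjlow hz1) hz2 hjlow hjhigh
      rcases eq_or_lt_of_le hw2 with hweq | hwlt
      · rw [← hweq]
        rw [dist_comm]
        linarith
      · -- s (jj+1) < w : w in the next window
        have hjK2 : jj + 1 < K := by
          by_contra hc
          have hj1K : jj + 1 = K := by omega
          have : w ≤ s (jj+1) := by rw [hj1K, hsK]; exact w.2.2
          exact absurd hwlt (not_lt.mpr this)
        have hwin : w < s (jj + 1 + 1) := by
          have hg1 := hγ (jj+1) hjK2
          have c1 : (s (jj+1) : ℝ) > (u : ℝ) := Subtype.coe_lt_coe.mpr hup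
          have c2 : (w : ℝ) < (s (jj+1+1) : ℝ) := by linarith
          exact_mod_cast c2
        have hsecond : dist (f (s (jj+1))) (f w) ≤ ε :=
          hosc (jj+1) hjK2 (s (jj+1)) w le_rfl (hchain (jj+1) hjK2) hwlt.le hwin
        calc dist (f u) (f w) ≤ dist (f u) (f (s (jj+1))) + dist (f (s (jj+1))) (f w) :=
              dist_triangle _ _ _
          _ ≤ ε + ε := add_le_add (by rw [dist_comm]; exact hfirst) hsecond
          _ = 2 * ε := by ring

lemma finset_sort_facts (S : Finset unitInterval) (h0 : (0:unitInterval) ∈ S)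
    (h1 : (1:unitInterval) ∈ S) :
    ∃ (Kp : ℕ) (p : ℕ → unitInterval), 0 < Kp ∧ p 0 = 0 ∧ p Kp = 1 ∧
      (∀ j < Kp, p j < p (j+1)) ∧ (∀ j ≤ Kp, p j ∈ S) ∧
      (∀ w ∈ S, ∃ j, j ≤ Kp ∧ p j = w) := by
  classical
  set L : List unitInterval := S.sort (· ≤ ·) with hL
  have hlen : L.length = S.card := Finset.length_sort _
  have hcard : 2 ≤ S.card := by
    have hsub : ({0, 1} : Finset unitInterval) ⊆ S := by
      intro w hw
      rcases Finset.mem_insert.mp hw with rfl | hw2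
      · exact h0
      · rw [Finset.mem_singleton.mp hw2]; exact h1
    have hne : (0:unitInterval) ≠ 1 := by
      intro h
      have := congrArg (Subtype.val) h
      simpa using this
    have h2 : ({0, 1} : Finset unitInterval).card = 2 := by
      rw [Finset.card_insert_of_notMem (by simpa using hne), Finset.card_singleton]
    calc 2 = ({0,1} : Finset unitInterval).card := h2.symm
      _ ≤ S.card := Finset.card_le_card hsub
  have hsorted : List.Pairwise (· < ·) L := List.sortedLT_iff_pairwise.mp (Finset.sortedLT_sort S)
  have hlen2 : 2 ≤ L.length := by omega
  set Kp := L.length - 1 with hKp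
  set p : ℕ → unitInterval := fun j => L.getD j 1 with hp
  have hget : ∀ (j : ℕ) (hj : j < L.length), p j = L.get ⟨j, hj⟩ := by
    intro j hj
    simp only [hp]
    exact List.getD_eq_get L 1 ⟨j, hj⟩
  have hlt : ∀ (a b : ℕ) (ha : a < L.length) (hb : b < L.length), a < b →
      L.get ⟨a, ha⟩ < L.get ⟨b, hb⟩ := by
    intro a b ha hb hab
    exact List.pairwise_iff_get.mp hsorted ⟨a, ha⟩ ⟨b, hb⟩ hab
  have hmem : ∀ (j : ℕ) (hj : j < L.length), p j ∈ S := by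
    intro j hj
    rw [hget j hj]
    have := List.get_mem L ⟨j, hj⟩
    exact (Finset.mem_sort _).mp this
  have hsurj : ∀ w ∈ S, ∃ j, j ≤ Kp ∧ p j = w := by
    intro w hw
    have hwL : w ∈ L := (Finset.mem_sort _).mpr hw
    obtain ⟨⟨j, hj⟩, hjw⟩ := List.mem_iff_get.mp hwL
    exact ⟨j, by omega, by rw [hget j hj]; exact hjw⟩
  have h0lt : 0 < L.length := by omega
  have hKplt : Kp < L.length := by omega
  have hple : ∀ w ∈ S, p 0 ≤ w := by
    intro w hw
    obtain ⟨j, hj, rfl⟩ := hsurj w hw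
    rcases Nat.eq_zero_or_pos j with rfl | hj0
    · exact le_rfl
    · have hjlen : j < L.length := by omega
      rw [hget 0 h0lt, hget j hjlen]
      exact (hlt 0 j h0lt hjlen hj0).le
  have hp0 : p 0 = 0 := le_antisymm (hple 0 h0) unitInterval.nonneg'
  have hpge : ∀ w ∈ S, w ≤ p Kp := by
    intro w hw
    obtain ⟨j, hj, rfl⟩ := hsurj w hw
    rcases eq_or_lt_of_le hj with rfl | hjlt
    · exact le_rfl
    · have hjlen : j < L.length := by omega
      rw [hget j hjlen, hget Kp hKplt]
      exact (hlt j Kp hjlen hKplt hjlt).le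
  have hpKp : p Kp = 1 := le_antisymm unitInterval.le_one' (hpge 1 h1)
  have hchain : ∀ j < Kp, p j < p (j+1) := by
    intro j hj
    have hj1 : j + 1 < L.length := by omega
    rw [hget j (by omega), hget (j+1) hj1]
    exact hlt _ _ (by omega) hj1 (Nat.lt_succ_self j)
  exact ⟨Kp, p, by omega, hp0, hpKp, hchain, fun j hj => hmem j (by omega), hsurj⟩

end J1Sum

open J1Sum

theorem J1_convergence_of_sums
    (d q : ℕ)
    (xn : Fin d → ℕ → unitInterval → EuclideanSpace ℝ (Fin q))
    (x : Fin d → unitInterval → EuclideanSpace ℝ (Fin q))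
    (hxn : ∀ i n, Cadlag (xn i n)) (hx : ∀ i, Cadlag (x i))
    (hconv : ∀ i, J1Tendsto (xn i) (x i))
    (hdisj : ∀ i j, i ≠ j →
      Disjoint {t | ¬ ContinuousAt (x i) t} {t | ¬ ContinuousAt (x j) t}) :
    J1Tendsto (fun n t => ∑ i, xn i n t) (fun t => ∑ i, x i t) := by
  classical
  apply j1_of_eventually
  intro ε hε
  set ε' : ℝ := ε / (3 * d + 3) with hε'def
  have hd3 : (0:ℝ) < 3 * (d:ℝ) + 3 := by positivity
  have hε'pos : 0 < ε' := by positivity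
  have hε'ε : ε' < ε := by
    rw [hε'def]
    apply div_lt_self hε
    have : (0:ℝ) ≤ (d:ℝ) := Nat.cast_nonneg d
    linarith
  have hpart : ∀ i : Fin d, PartProp (x i) ε' 1 :=
    fun i => exists_partition (x i) (hx i) hε'pos
  choose K s hK hs0 hsK hchain hosc using hpart
  set Fi : Fin d → Finset unitInterval := fun i =>
    ((Finset.range (K i + 1)).image (s i)).filter (fun w => ¬ ContinuousAt (x i) w) with hFi
  have hFi_disc : ∀ i w, w ∈ Fi i → ¬ ContinuousAt (x i) w := by
    intro i w hw
    exact (Finset.mem_filter.mp hw).2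
  have hFi_uniq : ∀ w (i i' : Fin d), w ∈ Fi i → w ∈ Fi i' → i = i' := by
    intro w i i' hwi hwi'
    by_contra hne
    exact Set.disjoint_left.mp (hdisj i i' hne) (hFi_disc i w hwi) (hFi_disc i' w hwi')
  set Knots : Finset unitInterval :=
    insert 0 (insert 1 (Finset.univ.biUnion Fi)) with hKnots
  obtain ⟨Kp, p, hKp, hp0, hpK, hpchain, hpmem, hmemp⟩ :=
    finset_sort_facts Knots (Finset.mem_insert_self _ _)
      (Finset.mem_insert_of_mem (Finset.mem_insert_self _ _))
  set gapF : Finset ℝ := (Finset.range Kp).image (fun j => (p (j+1):ℝ) - (p j : ℝ)) with hgapF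
  have hgapFne : gapF.Nonempty := ⟨_, Finset.mem_image_of_mem _ (Finset.mem_range.mpr hKp)⟩
  set ρ : ℝ := gapF.min' hgapFne with hρ
  have hρpos : 0 < ρ := by
    apply (Finset.lt_min'_iff _ _).mpr
    intro b hb
    obtain ⟨j, hj, rfl⟩ := Finset.mem_image.mp hb
    have h2 := Subtype.coe_lt_coe.mpr (hpchain j (Finset.mem_range.mp hj))
    linarith
  have hρle : ∀ j < Kp, ρ ≤ (p (j+1):ℝ) - (p j : ℝ) := by
    intro j hj
    exact Finset.min'_le _ _ (Finset.mem_image_of_mem _ (Finset.mem_range.mpr hj))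
  set γF : Finset ℝ := insert 1 (Finset.univ.biUnion (fun i : Fin d =>
    (Finset.range (K i)).image (fun j => (s i (j+1):ℝ) - (s i j : ℝ)))) with hγF
  set γmin : ℝ := γF.min' ⟨1, Finset.mem_insert_self _ _⟩ with hγmin
  have hγpos : 0 < γmin := by
    apply (Finset.lt_min'_iff _ _).mpr
    intro b hb
    rcases Finset.mem_insert.mp hb with rfl | hb2
    · norm_num
    · obtain ⟨i, _, hbi⟩ := Finset.mem_biUnion.mp hb2
      obtain ⟨j, hj, rfl⟩ := Finset.mem_image.mp hbi
      have h2 := Subtype.coe_lt_coe.mpr (hchain i j (Finset.mem_range.mp hj))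
      linarith
  have hγle : ∀ (i : Fin d), ∀ j < K i, γmin ≤ (s i (j+1):ℝ) - (s i j:ℝ) := by
    intro i j hj
    apply Finset.min'_le
    exact Finset.mem_insert_of_mem (Finset.mem_biUnion.mpr ⟨i, Finset.mem_univ _,
      Finset.mem_image_of_mem _ (Finset.mem_range.mpr hj)⟩)
  set η : ℝ := min ε' (min (γmin/4) (ρ/3)) with hη
  have hηpos : 0 < η := lt_min hε'pos (lt_min (by positivity) (by positivity))
  have hηε' : η ≤ ε' := min_le_left _ _
  have hηγ : η ≤ γmin/4 := le_trans (min_le_right _ _) (min_le_left _ _)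
  have hηρ : η ≤ ρ/3 := le_trans (min_le_right _ _) (min_le_right _ _)
  choose lam hlamb hlame using hconv
  have hev : ∀ᶠ n in atTop, ∀ i : Fin d, ∀ t,
      |((lam i n t : ℝ)) - (t:ℝ)| < min η ε' ∧
        dist (xn i n (lam i n t)) (x i t) < min η ε' :=
    eventually_all.mpr (fun i => hlame i (min η ε') (lt_min hηpos hε'pos))
  filter_upwards [hev] with n hn
  set Λ : Fin d → unitInterval → unitInterval := fun i => lam i n with hΛ
  have hΛb : ∀ i, Function.Bijective (Λ i) := fun i => (hlamb i n).1
  have hΛm : ∀ i, StrictMono (Λ i) := fun i => (hlamb i n).2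
  have hΛnear : ∀ i t, |((Λ i t : ℝ)) - (t:ℝ)| < η := fun i t =>
    lt_of_lt_of_le (hn i t).1 (min_le_left _ _)
  have hΛdist : ∀ i t, dist (xn i n (Λ i t)) (x i t) < ε' := fun i t =>
    lt_of_lt_of_le (hn i t).2 (min_le_right _ _)
  set e : Fin d → (unitInterval ≃o unitInterval) := fun i =>
    StrictMono.orderIsoOfSurjective (Λ i) (hΛm i) (hΛb i).2 with he
  have hecoe : ∀ i t, e i t = Λ i t := by
    intro i t
    simp only [he]
    rw [StrictMono.coe_orderIsoOfSurjective]
  have hesymm : ∀ i u, Λ i ((e i).symm u) = u := by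
    intro i u
    rw [← hecoe]
    exact (e i).apply_symm_apply u
  set vk : unitInterval → unitInterval := fun w =>
    if h : ∃ i, w ∈ Fi i then Λ (h.choose) w else w with hvk
  have hvkFi : ∀ i w, w ∈ Fi i → vk w = Λ i w := by
    intro i w hw
    have hex : ∃ i', w ∈ Fi i' := ⟨i, hw⟩
    simp only [hvk]
    rw [dif_pos hex]
    congr 1
    exact hFi_uniq w _ _ hex.choose_spec hw
  have hvknear : ∀ w, |((vk w : ℝ)) - (w:ℝ)| ≤ η := by
    intro w
    by_cases h : ∃ i, w ∈ Fi i
    · simp only [hvk]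
      rw [dif_pos h]
      exact (hΛnear _ w).le
    · simp only [hvk]
      rw [dif_neg h]
      simpa using hηpos.le
  have hvk0 : vk 0 = 0 := by
    have h : ¬ ∃ i, (0:unitInterval) ∈ Fi i := by
      rintro ⟨i, hi⟩
      exact hFi_disc i 0 hi (cadlag_continuousAt_zero (hx i))
    simp only [hvk]
    rw [dif_neg h]
  have hvk1 : vk 1 = 1 := by
    have h : ¬ ∃ i, (1:unitInterval) ∈ Fi i := by
      rintro ⟨i, hi⟩
      exact hFi_disc i 1 hi (cadlag_continuousAt_one (hx i))
    simp only [hvk]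
    rw [dif_neg h]
  have hvchain : ∀ j < Kp, vk (p j) < vk (p (j+1)) := by
    intro j hj
    have hgapj := hρle j hj
    have h1 := hvknear (p j)
    have h2 := hvknear (p (j+1))
    rw [abs_le] at h1 h2
    have h3 : (vk (p j) : ℝ) < (vk (p (j+1)) : ℝ) := by linarith [hηρ, hρpos]
    exact Subtype.coe_lt_coe.mp h3
  obtain ⟨l, hlbij, hlmono, hlknot, hlbound⟩ :=
    exists_pl Kp hKp p (fun j => vk (p j)) hp0 hpK
      (by show vk (p 0) = 0; rw [hp0, hvk0]) (by show vk (p Kp) = 1; rw [hpK, hvk1]) hpchain hvchain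
      (δ := η) (fun k hk => hvknear (p k))
  refine ⟨l, ⟨hlbij, hlmono⟩, fun t => ⟨?_, ?_⟩⟩
  · have := hlbound t
    linarith [hηε']
  · set σ : Fin d → unitInterval := fun i => (e i).symm (l t) with hσdef
    have hlt : ∀ i, Λ i (σ i) = l t := fun i => hesymm i (l t)
    have hσnear : ∀ i, |((σ i : ℝ)) - ((l t : ℝ))| < η := by
      intro i
      have h5 := hΛnear i (σ i)
      rw [hlt i] at h5
      rwa [abs_sub_comm] at h5
    have hterm : ∀ i : Fin d, dist (xn i n (l t)) (x i t) ≤ 3 * ε' := by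
      intro i
      have h1 : dist (xn i n (l t)) (x i (σ i)) < ε' := by
        have h5 := hΛdist i (σ i)
        rwa [hlt i] at h5
      have hfix : ∀ j, j ≤ K i → ¬ ContinuousAt (x i) (s i j) →
          (t < s i j → σ i < s i j) ∧ (s i j ≤ t → s i j ≤ σ i) := by
        intro j hj hdisc
        have hw0F : s i j ∈ Fi i := by
          simp only [hFi, Finset.mem_filter, Finset.mem_image]
          exact ⟨⟨j, Finset.mem_range.mpr (by omega), rfl⟩, hdisc⟩
        have hw0K : s i j ∈ Knots := by
          simp only [hKnots]
          exact Finset.mem_insert_of_mem (Finset.mem_insert_of_mem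
            (Finset.mem_biUnion.mpr ⟨i, Finset.mem_univ _, hw0F⟩))
        obtain ⟨j0, hj0, hpj0⟩ := hmemp (s i j) hw0K
        have hlw0 : l (s i j) = Λ i (s i j) := by
          rw [← hpj0, hlknot j0 hj0]
          show vk (p j0) = Λ i (p j0)
          rw [hpj0]
          exact hvkFi i _ hw0F
        have hsymm0 : (e i).symm (Λ i (s i j)) = s i j := by
          have h6 : Λ i (s i j) = e i (s i j) := (hecoe i _).symm
          rw [h6, OrderIso.symm_apply_apply]
        constructor
        · intro hlt1
          have h7 := hlmono hlt1
          rw [hlw0] at h7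
          have h8 := (e i).symm.strictMono h7
          rwa [hsymm0] at h8
        · intro hle1
          have h7 : l (s i j) ≤ l t := hlmono.monotone hle1
          rw [hlw0] at h7
          have h8 := (e i).symm.monotone h7
          rwa [hsymm0] at h8
      have hγ2 : |(σ i:ℝ) - (t:ℝ)| < γmin := by
        have h5 := hσnear i
        have h6 := hlbound t
        have h7 : |(σ i:ℝ) - (t:ℝ)| ≤ |(σ i:ℝ) - ((l t:unitInterval):ℝ)|
            + |((l t:unitInterval):ℝ) - (t:ℝ)| := abs_sub_le _ _ _
        linarith [hηγ, hγpos]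
      have h2 : dist (x i (σ i)) (x i t) ≤ 2 * ε' := by
        rcases le_total (σ i) t with hst | hst
        · have h9 := osc_est (x i) (K i) (s i) (hK i) (hs0 i) (hsK i) (hchain i) (hosc i)
            (hγle i) (σ i) t hst
            (by
              rw [abs_lt] at hγ2
              linarith [hγ2.1])
            (by
              intro j hj hd hc
              obtain ⟨ha, hb⟩ := hc
              exact absurd ha (not_lt.mpr ((hfix j hj hd).2 hb)))
          exact h9
        · have h9 := osc_est (x i) (K i) (s i) (hK i) (hs0 i) (hsK i) (hchain i) (hosc i)
            (hγle i) t (σ i) hst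
            (by
              rw [abs_lt] at hγ2
              linarith [hγ2.2])
            (by
              intro j hj hd hc
              obtain ⟨ha, hb⟩ := hc
              exact absurd hb (not_le.mpr ((hfix j hj hd).1 ha)))
          rwa [dist_comm] at h9
      calc dist (xn i n (l t)) (x i t)
          ≤ dist (xn i n (l t)) (x i (σ i)) + dist (x i (σ i)) (x i t) := dist_triangle _ _ _
        _ ≤ ε' + 2*ε' := add_le_add h1.le h2
        _ = 3 * ε' := by ring
    calc dist (∑ i, xn i n (l t)) (∑ i, x i t)
        ≤ ∑ i, dist (xn i n (l t)) (x i t) := dist_sum_sum_le _ _ _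
      _ ≤ ∑ _i : Fin d, 3 * ε' := Finset.sum_le_sum (fun i _ => hterm i)
      _ = (d:ℝ) * (3 * ε') := by
          rw [Finset.sum_const, Finset.card_univ, Fintype.card_fin, nsmul_eq_mul]
      _ < ε := by
          rw [hε'def]
          have hfrac : (d:ℝ) * (3 * (ε / (3 * (d:ℝ) + 3))) = ε * ((3*(d:ℝ))/(3*(d:ℝ)+3)) := by
            field_simp
          rw [hfrac]
          have hlt1 : (3*(d:ℝ))/(3*(d:ℝ)+3) < 1 := (div_lt_one hd3).mpr (by linarith)
          calc ε * ((3*(d:ℝ))/(3*(d:ℝ)+3)) < ε * 1 := by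
                apply mul_lt_mul_of_pos_left hlt1 hε
            _ = ε := mul_one ε
end
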